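/- arXiv:1810.02654 — 10 statements merged into one kernel-verified Lean document; each statement's English description precedes it below -/
import Mathlib

section
/- Let G be a residually finite group, let H be a finitely generated virtually abelian subgroup of G which is a virtual retract of G, and let A be a subgroup of G containing H with finite index |A : H| < ∞. Then A is a virtual retract of G. -/
/-- `H` is a virtual retract of `G`: there are a finite-index subgroup `K` of `G` containing `H`
and a homomorphism `ρ : K → G` with image inside `H` restricting to the identity on `H`. -/
def IsVirtualRetract {G : Type*} [Group G] (H : Subgroup G) : Prop :=
  ∃ (K : Subgroup G) (hHK : H ≤ K), K.FiniteIndex ∧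
    ∃ ρ : ↥K →* G, (∀ k : ↥K, ρ k ∈ H) ∧ ∀ (h : G) (hh : h ∈ H), ρ ⟨h, hHK hh⟩ = h

/-- A group is residually finite if every non-identity element avoids some
finite-index normal subgroup. -/
def ResiduallyFinite (G : Type*) [Group G] : Prop :=
  ∀ g : G, g ≠ 1 → ∃ N : Subgroup G, N.Normal ∧ N.FiniteIndex ∧ g ∉ N

/-- A group is virtually abelian if it has an abelian subgroup of finite index. -/
def VirtuallyAbelian (G : Type*) [Group G] : Prop :=
  ∃ B : Subgroup G, B.FiniteIndex ∧ ∀ x y : ↥B, x * y = y * x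



namespace VR

/-- A finitely generated abelian group of bounded exponent is finite. -/
lemma finite_of_exponent {M : Type*} [AddCommGroup M] [Module.Finite ℤ M]
    (e : ℤ) (he : e ≠ 0) (hx : ∀ x : M, e • x = 0) : Finite M := by
  obtain ⟨S, hS⟩ := Module.Finite.fg_top (R := ℤ) (M := M)
  have hn0 : e.natAbs ≠ 0 := Int.natAbs_ne_zero.2 he
  set n : ℕ := e.natAbs with hn
  haveI : NeZero n := ⟨hn0⟩
  have hxn : ∀ x : M, (n : ℤ) • x = 0 := by
    intro x
    rcases Int.natAbs_eq e with h | h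
    · rw [← hn] at h; rw [← h]; exact hx x
    · rw [← hn] at h
      have h2 : (-(n:ℤ)) • x = 0 := by rw [← h]; exact hx x
      rw [neg_smul, neg_eq_zero] at h2; exact h2
  have key : ∀ (z : ℤ) (s : M), (((z : ZMod n).val : ℤ)) • s = z • s := by
    intro z s
    have hdvd : (n : ℤ) ∣ (((z : ZMod n).val : ℤ) - z) := by
      rw [← ZMod.intCast_zmod_eq_zero_iff_dvd]
      push_cast [ZMod.natCast_val, ZMod.intCast_cast, ZMod.intCast_zmod_cast]
      simp
    obtain ⟨k, hk⟩ := hdvd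
    have hzz : ((z : ZMod n).val : ℤ) = z + n * k := by linarith [hk]
    rw [hzz, add_smul, mul_smul, hxn, add_zero]
  have hsurj : Function.Surjective
      (fun c : {x // x ∈ S} → ZMod n => ∑ s : {x // x ∈ S}, ((c s).val : ℤ) • (s : M)) := by
    intro x
    have hx' : x ∈ Submodule.span ℤ (S : Set M) := hS ▸ Submodule.mem_top
    rw [Submodule.mem_span_finset] at hx'
    obtain ⟨f, -, hf⟩ := hx'
    refine ⟨fun s => ((f s : ℤ) : ZMod n), ?_⟩
    rw [← hf, ← Finset.sum_attach S (fun i => f i • i)]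
    exact Finset.sum_congr rfl fun s _ => key (f s) s
  exact Finite.of_surjective _ hsurj

/-- For a submodule `U` of a f.g. `ℤ`-module `M` there is an endomorphism into `U`
that is multiplication by a nonzero constant on `U`. -/
lemma exists_proj {M : Type*} [AddCommGroup M] [Module.Finite ℤ M]
    (U : Submodule ℤ M) :
    ∃ c : ℤ, c ≠ 0 ∧ ∃ π : M →ₗ[ℤ] M, (∀ x, π x ∈ U) ∧ ∀ u ∈ U, π u = c • u := by
  classical
  haveI hfree : Module.Free ℤ ((M ⧸ U) ⧸ Submodule.torsion ℤ (M ⧸ U)) :=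
    Module.free_of_finite_type_torsion_free'
  -- bounded exponent of the torsion part
  obtain ⟨c, hc0, hcT⟩ : ∃ c : ℤ, c ≠ 0 ∧ ∀ t ∈ Submodule.torsion ℤ (M ⧸ U), c • t = 0 := by
    obtain ⟨s, hs⟩ : (Submodule.torsion ℤ (M ⧸ U)).FG :=
      IsNoetherian.noetherian (Submodule.torsion ℤ (M ⧸ U))
    have hgen : ∀ x ∈ s, ∃ c : ℤ, c ≠ 0 ∧ c • x = 0 := by
      intro x hxs
      have : x ∈ Submodule.torsion ℤ (M ⧸ U) := hs ▸ Submodule.subset_span hxs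
      obtain ⟨⟨a, ha⟩, hax⟩ := this
      exact ⟨a, nonZeroDivisors.ne_zero ha, hax⟩
    choose! c' hc'0 hc' using hgen
    refine ⟨∏ x ∈ s, c' x, Finset.prod_ne_zero_iff.2 fun x hxs => hc'0 x hxs, ?_⟩
    intro t ht
    rw [← hs] at ht
    induction ht using Submodule.span_induction with
    | mem x hxmem =>
        obtain ⟨u, hu⟩ := Finset.dvd_prod_of_mem c' hxmem
        rw [hu, mul_comm (c' x) u, mul_smul, hc' x hxmem, smul_zero]
    | zero => simp
    | add x y _ _ hx hy => rw [smul_add, hx, hy, add_zero]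
    | smul a x _ hx => rw [smul_comm, hx, smul_zero]
  set p : M →ₗ[ℤ] ((M ⧸ U) ⧸ Submodule.torsion ℤ (M ⧸ U)) :=
    ((Submodule.torsion ℤ (M ⧸ U)).mkQ).comp U.mkQ with hp
  have hpdef : ∀ y : M, p y = Submodule.Quotient.mk (Submodule.Quotient.mk y) := fun _ => rfl
  have hpsurj : Function.Surjective p :=
    (Submodule.mkQ_surjective _).comp (Submodule.mkQ_surjective U)
  obtain ⟨s, hsec⟩ := Module.projective_lifting_property p LinearMap.id hpsurj
  set pr : M →ₗ[ℤ] M := LinearMap.id - s.comp p with hpr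
  have hprU : ∀ x, c • pr x ∈ U := by
    intro x
    have h1 : p (pr x) = 0 := by
      have hs' := LinearMap.congr_fun hsec (p x)
      simp only [LinearMap.comp_apply, LinearMap.id_apply] at hs'
      simp only [hpr, LinearMap.sub_apply, LinearMap.id_apply, LinearMap.comp_apply, map_sub, hs',
        sub_self]
    have h2 : (Submodule.Quotient.mk (pr x) : M ⧸ U) ∈ Submodule.torsion ℤ (M ⧸ U) :=
      (Submodule.Quotient.mk_eq_zero _).1 (by rw [← hpdef]; exact h1)
    have h3 : c • (Submodule.Quotient.mk (pr x) : M ⧸ U) = 0 := hcT _ h2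
    rw [← Submodule.Quotient.mk_smul, Submodule.Quotient.mk_eq_zero] at h3
    exact h3
  refine ⟨c, hc0, c • pr, fun x => hprU x, fun u hu => ?_⟩
  have hpru : pr u = u := by
    have hpu : p u = 0 := by
      rw [hpdef, (Submodule.Quotient.mk_eq_zero U).2 hu]
      simp
    simp only [hpr, LinearMap.sub_apply, LinearMap.id_apply, LinearMap.comp_apply, hpu, map_zero,
      sub_zero]
  show c • pr u = c • u
  rw [hpru]


/-- Maschke-type lemma over `ℤ`: given a finite group `Γ` acting linearly on a f.g.
`ℤ`-module `M` and an invariant submodule `U`, there is an invariant submodule `C` such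
that `U ⊓ C` is finite and `U ⊔ C` has finite index (bounded exponent quotient). -/
lemma maschke {M : Type*} [AddCommGroup M] [Module.Finite ℤ M]
    {Γ : Type*} [Group Γ] [Finite Γ] (β : Γ →* (M ≃ₗ[ℤ] M))
    (U : Submodule ℤ M) (hU : ∀ γ : Γ, ∀ u ∈ U, β γ u ∈ U) :
    ∃ C : Submodule ℤ M, (∀ γ : Γ, ∀ x ∈ C, β γ x ∈ C) ∧ Finite ↥(U ⊓ C) ∧
      ∃ e : ℤ, e ≠ 0 ∧ ∀ x : M, e • x ∈ U ⊔ C := by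
  classical
  haveI := Fintype.ofFinite Γ
  obtain ⟨c, hc0, π, hπU, hπid⟩ := exists_proj U
  set φ : M →ₗ[ℤ] M := ∑ γ : Γ, ((β γ).toLinearMap.comp (π.comp (β γ⁻¹).toLinearMap)) with hφ
  have hφapp : ∀ x, φ x = ∑ γ : Γ, β γ (π (β γ⁻¹ x)) := by
    intro x
    rw [hφ, LinearMap.sum_apply]
    simp [LinearMap.comp_apply]
  have hφU : ∀ x, φ x ∈ U := by
    intro x
    rw [hφapp]
    exact Submodule.sum_mem U fun γ _ => hU γ _ (hπU _)
  set e : ℤ := (Fintype.card Γ : ℤ) * c with he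
  have he0 : e ≠ 0 := mul_ne_zero (Nat.cast_ne_zero.2 Fintype.card_ne_zero) hc0
  have hφid : ∀ u ∈ U, φ u = e • u := by
    intro u hu
    rw [hφapp]
    have : ∀ γ : Γ, β γ (π (β γ⁻¹ u)) = c • u := by
      intro γ
      rw [hπid _ (hU γ⁻¹ u hu), map_smul]
      congr 1
      have : β γ (β γ⁻¹ u) = ((β γ) * (β γ⁻¹)) u := rfl
      rw [this, ← map_mul, mul_inv_cancel, map_one]
      rfl
    rw [Finset.sum_congr rfl fun γ _ => this γ, Finset.sum_const, Finset.card_univ]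
    rw [he, mul_smul, natCast_zsmul]
  have hφcomm : ∀ (δ : Γ) (x : M), φ (β δ x) = β δ (φ x) := by
    intro δ x
    have hcomp : ∀ (γ₁ γ₂ : Γ) (y : M), β γ₁ (β γ₂ y) = β (γ₁ * γ₂) y := by
      intro γ₁ γ₂ y
      rw [map_mul]
      rfl
    rw [hφapp, hφapp, map_sum]
    refine Fintype.sum_equiv (Equiv.mulLeft δ).symm _ _ ?_
    intro γ
    show β γ (π (β γ⁻¹ (β δ x))) = β δ (β (δ⁻¹ * γ) (π (β (δ⁻¹ * γ)⁻¹ x)))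
    rw [hcomp γ⁻¹ δ, hcomp δ (δ⁻¹ * γ)]
    have e1 : δ * (δ⁻¹ * γ) = γ := by group
    have e2 : (δ⁻¹ * γ)⁻¹ = γ⁻¹ * δ := by group
    rw [e1, e2]
  refine ⟨LinearMap.ker φ, ?_, ?_, e, he0, ?_⟩
  · intro γ x hxker
    have : φ (β γ x) = β γ (φ x) := hφcomm γ x
    rw [LinearMap.mem_ker] at hxker ⊢
    rw [this, hxker, map_zero]
  · have hexp : ∀ y : ↥(U ⊓ LinearMap.ker φ), e • y = 0 := by
      rintro ⟨y, hyU, hyker⟩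
      have : e • y = 0 := by
        rw [← hφid y hyU]
        exact hyker
      ext
      exact this
    haveI : Module.Finite ℤ ↥(U ⊓ LinearMap.ker φ) :=
      Module.Finite.iff_fg.2 (IsNoetherian.noetherian _)
    exact finite_of_exponent e he0 hexp
  · intro x
    have hdec : e • x = φ x + (e • x - φ x) := by abel
    have h1 : φ x ∈ U := hφU x
    have h2 : e • x - φ x ∈ LinearMap.ker φ := by
      rw [LinearMap.mem_ker, map_sub, map_smul, hφid _ (hφU x), sub_self]
    rw [hdec]
    exact Submodule.add_mem _ (Submodule.mem_sup_left h1) (Submodule.mem_sup_right h2)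




variable {G : Type*} [Group G]

/-- Elements of `A ⊔ N` decompose as products when `A` normalizes `N`. -/
lemma prod_decomp (A N : Subgroup G)
    (hnorm : ∀ a ∈ A, ∀ n ∈ N, a * n * a⁻¹ ∈ N) :
    ∀ x ∈ A ⊔ N, ∃ a ∈ A, ∃ n ∈ N, x = a * n := by
  have hnorm' : ∀ a ∈ A, ∀ n ∈ N, a⁻¹ * n * a ∈ N := by
    intro a ha n hn
    have := hnorm a⁻¹ (A.inv_mem ha) n hn
    simpa using this
  let S : Subgroup G :=
  { carrier := {x | ∃ a ∈ A, ∃ n ∈ N, x = a * n}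
    one_mem' := ⟨1, A.one_mem, 1, N.one_mem, by simp⟩
    mul_mem' := by
      rintro x y ⟨a, ha, n, hn, rfl⟩ ⟨b, hb, m, hm, rfl⟩
      refine ⟨a * b, A.mul_mem ha hb, (b⁻¹ * n * b) * m, N.mul_mem (hnorm' b hb n hn) hm, ?_⟩
      group
    inv_mem' := by
      rintro x ⟨a, ha, n, hn, rfl⟩
      refine ⟨a⁻¹, A.inv_mem ha, a * n⁻¹ * a⁻¹, hnorm a ha n⁻¹ (N.inv_mem hn), ?_⟩
      group }
  have hAS : A ≤ S := fun a ha => ⟨a, ha, 1, N.one_mem, by simp⟩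
  have hNS : N ≤ S := fun n hn => ⟨1, A.one_mem, n, hn, by simp⟩
  intro x hx
  exact sup_le hAS hNS hx

/-- Relative index nonvanishing from a product decomposition. -/
lemma relindex_ne_zero_of_prod (X Y E : Subgroup G) (hXE : X ≤ E) (hYE : Y ≤ E)
    (hdec : ∀ e ∈ E, ∃ y ∈ Y, ∃ x ∈ X, e = y * x)
    (hfin : (X ⊓ Y).relIndex Y ≠ 0) : X.relIndex E ≠ 0 := by
  haveI hfinq : Finite (↥Y ⧸ (X ⊓ Y).subgroupOf Y) :=
    Nat.finite_of_card_ne_zero hfin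
  have hsurj : Function.Surjective
      (fun q : ↥Y ⧸ (X ⊓ Y).subgroupOf Y =>
        Quotient.liftOn' q (fun y => ((⟨(y : G), hYE y.2⟩ : ↥E) : ↥E ⧸ X.subgroupOf E))
          (by
            intro y₁ y₂ hrel
            rw [QuotientGroup.leftRel_apply] at hrel
            apply Quotient.sound'
            rw [QuotientGroup.leftRel_apply]
            have : (y₁ : G)⁻¹ * y₂ ∈ X ⊓ Y := hrel
            exact this.1)) := by
    rintro q
    induction q using Quotient.inductionOn' with
    | h ee =>
      obtain ⟨y, hy, x, hx, hee⟩ := hdec (ee : G) ee.2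
      refine ⟨QuotientGroup.mk (⟨y, hy⟩ : ↥Y), ?_⟩
      apply Quotient.sound'
      rw [QuotientGroup.leftRel_apply]
      show (y : G)⁻¹ * (ee : G) ∈ X
      rw [hee]
      group
      simpa using hx
  have : Finite (↥E ⧸ X.subgroupOf E) := Finite.of_surjective _ hsurj
  have : Nat.card (↥E ⧸ X.subgroupOf E) ≠ 0 := Nat.card_ne_zero.2 ⟨inferInstance, this⟩
  exact this

/-- A subgroup of finite index has nonzero relative index in every subgroup. -/
lemma relindex_ne_zero_of_index (H K : Subgroup G) (h : H.index ≠ 0) :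
    H.relIndex K ≠ 0 := by
  intro h0
  exact h (by
    rw [← Subgroup.relIndex_top_right]
    exact Subgroup.relIndex_eq_zero_of_le_right le_top h0)

/-- A subgroup with a finite subgroup of finite relative index is finite. -/
lemma finite_of_finite_relindex (F₀ F : Subgroup G) (hle : F₀ ≤ F)
    (hfin : Finite ↥F₀) (h : F₀.relIndex F ≠ 0) : Finite ↥F := by
  have hcard : Nat.card ↥F = Nat.card (↥F ⧸ F₀.subgroupOf F) * Nat.card ↥(F₀.subgroupOf F) :=
    Subgroup.card_eq_card_quotient_mul_card_subgroup _
  haveI : Finite ↥F₀ := hfin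
  haveI : Finite ↥(F₀.subgroupOf F) :=
    Finite.of_equiv _ (Subgroup.subgroupOfEquivOfLe hle).symm.toEquiv
  have h1 : Nat.card (↥F ⧸ F₀.subgroupOf F) ≠ 0 := h
  have h2 : Nat.card ↥(F₀.subgroupOf F) ≠ 0 := Nat.card_ne_zero.2 ⟨One.instNonempty, this⟩
  have : Nat.card ↥F ≠ 0 := by
    rw [hcard]; exact mul_ne_zero h1 h2
  exact (Nat.card_ne_zero.1 this).2

/-- Given a normalized complement with trivial intersection and finite index join,
the subgroup `A` is a virtual retract. -/
lemma retract_of_complement (A N : Subgroup G)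
    (hnorm : ∀ a ∈ A, ∀ n ∈ N, a * n * a⁻¹ ∈ N)
    (htriv : A ⊓ N = ⊥) (hfi : (A ⊔ N).index ≠ 0) :
    ∃ (K : Subgroup G) (hAK : A ≤ K), K.FiniteIndex ∧
      ∃ ρ : ↥K →* G, (∀ k : ↥K, ρ k ∈ A) ∧ ∀ (h : G) (hh : h ∈ A), ρ ⟨h, hAK hh⟩ = h := by
  set K := A ⊔ N with hK
  have hAK : A ≤ K := le_sup_left
  have hNK : N ≤ K := le_sup_right
  haveI hNnormal : (N.subgroupOf K).Normal := by
    constructor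
    rintro ⟨n, hnK⟩ hn ⟨k, hkK⟩
    obtain ⟨a, ha, m, hm, hk⟩ := prod_decomp A N hnorm k hkK
    show k * n * k⁻¹ ∈ N
    have hnN : n ∈ N := hn
    rw [hk]
    have h1 : m * n * m⁻¹ ∈ N := N.mul_mem (N.mul_mem hm hnN) (N.inv_mem hm)
    have : a * m * n * m⁻¹ * a⁻¹ = a * (m * n * m⁻¹) * a⁻¹ := by group
    have h2 : a * (m * n * m⁻¹) * a⁻¹ ∈ N := hnorm a ha _ h1
    have : (a * m) * n * (a * m)⁻¹ = a * (m * n * m⁻¹) * a⁻¹ := by group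
    rw [this]
    exact h2
  set f : ↥K →* ↥K ⧸ N.subgroupOf K := QuotientGroup.mk' (N.subgroupOf K) with hf
  set g : ↥A →* ↥K ⧸ N.subgroupOf K := f.comp (Subgroup.inclusion hAK) with hg
  have hginj : Function.Injective g := by
    rw [← MonoidHom.ker_eq_bot_iff]
    rw [eq_bot_iff]
    rintro ⟨a, haA⟩ hker
    have : (⟨a, hAK haA⟩ : ↥K) ∈ N.subgroupOf K := (QuotientGroup.eq_one_iff _).1 hker
    have haN : a ∈ N := this
    have : a ∈ A ⊓ N := ⟨haA, haN⟩
    rw [htriv] at this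
    simpa using this
  have hgsurj : Function.Surjective g := by
    rintro q
    induction q using Quotient.inductionOn' with
    | h k =>
      obtain ⟨a, ha, n, hn, hk⟩ := prod_decomp A N hnorm (k : G) k.2
      refine ⟨⟨a, ha⟩, ?_⟩
      show f (Subgroup.inclusion hAK ⟨a, ha⟩) = Quotient.mk'' k
      apply Quotient.sound'
      rw [QuotientGroup.leftRel_apply]
      show (⟨a, hAK ha⟩ : ↥K)⁻¹ * k ∈ N.subgroupOf K
      show (a⁻¹ * (k : G) : G) ∈ N
      rw [hk]
      group
      simpa using hn
  set e := MulEquiv.ofBijective g ⟨hginj, hgsurj⟩ with he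
  refine ⟨K, hAK, ⟨hfi⟩, A.subtype.comp ((e.symm.toMonoidHom).comp f), ?_, ?_⟩
  · intro k
    exact (e.symm (f k)).2
  · intro h hh
    show (e.symm (f ⟨h, hAK hh⟩) : G) = h
    have : f ⟨h, hAK hh⟩ = g ⟨h, hh⟩ := rfl
    rw [this]
    have : e.symm (g ⟨h, hh⟩) = ⟨h, hh⟩ := by
      have hg' : g ⟨h, hh⟩ = e ⟨h, hh⟩ := rfl
      rw [hg', MulEquiv.symm_apply_apply]
    rw [this]

end VR

/-- residual finiteness: a finite subgroup can be avoided by a finite-index normal subgroup -/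
lemma exists_normal_avoiding {G : Type*} [Group G] (hG : ResiduallyFinite G)
    (F : Subgroup G) (hF : Finite ↥F) :
    ∃ M : Subgroup G, M.Normal ∧ M.FiniteIndex ∧ F ⊓ M = ⊥ := by
  classical
  haveI := hF
  set S := {g : ↥F // (g : G) ≠ 1} with hS
  haveI : Finite S := Subtype.finite
  choose W hWnorm hWfi hWnot using fun s : S => hG (s.1 : G) s.2
  refine ⟨⨅ s : S, W s, ?_, ?_, ?_⟩
  · constructor
    intro n hn g
    rw [Subgroup.mem_iInf] at hn ⊢
    intro i
    exact (hWnorm i).conj_mem n (hn i) g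
  · exact Subgroup.finiteIndex_iInf fun i => hWfi i
  · rw [eq_bot_iff]
    intro x hx
    obtain ⟨hxF, hxM⟩ := Subgroup.mem_inf.1 hx
    simp only [Subgroup.mem_bot]
    by_contra hx1
    rw [Subgroup.mem_iInf] at hxM
    exact hWnot ⟨⟨x, hxF⟩, hx1⟩ (hxM ⟨⟨x, hxF⟩, hx1⟩)

lemma main_abelian {G : Type*} [Group G] (hG : ResiduallyFinite G) (H A : Subgroup G)
    (hvr : IsVirtualRetract H) (hfg : H.FG)
    (hcomm : ∀ x y : G, x ∈ H → y ∈ H → x * y = y * x)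
    (hHA : H ≤ A) (hidx : H.relIndex A ≠ 0) : IsVirtualRetract A := by
  classical
  obtain ⟨K₀, hHK₀, hK₀fi, ρ₀, hρ₀mem, hρ₀id⟩ := hvr
  haveI := hK₀fi
  set L : Subgroup G := K₀.normalCore with hLdef
  haveI hLnormal : L.Normal := K₀.normalCore_normal
  haveI hLfi : L.FiniteIndex := K₀.finiteIndex_normalCore
  have hLK₀ : L ≤ K₀ := K₀.normalCore_le
  -- the abelian group H as a commutative group
  letI : AddCommGroup (Additive ↥H) :=
    { (inferInstance : AddGroup (Additive ↥H)) with
      add_comm := fun x y => Subtype.ext (hcomm _ _ x.toMul.2 y.toMul.2) }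
  -- finiteness instances
  haveI hHfg' : Group.FG ↥H := (Group.fg_iff_subgroup_fg H).2 hfg
  haveI : AddGroup.FG (Additive ↥H) := AddGroup.fg_of_group_fg
  haveI : Module.Finite ℤ (Additive ↥H) := Module.Finite.iff_addGroup_fg.2 ‹_›
  set Qt := (↥A ⧸ H.subgroupOf A) with hQt
  haveI hQtfin : Finite Qt := Nat.finite_of_card_ne_zero hidx
  set Ma := (Qt → Additive ↥H) with hMa
  haveI : Module.Finite ℤ Ma := inferInstance
  -- ρ₀ helper lemmas
  have hρcongr : ∀ (u v : G) (hu : u ∈ K₀) (hv : v ∈ K₀), u = v →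
      ρ₀ ⟨u, hu⟩ = ρ₀ ⟨v, hv⟩ := by rintro u v hu hv rfl; rfl
  have hρmul : ∀ (u v : G) (hu : u ∈ K₀) (hv : v ∈ K₀),
      ρ₀ ⟨u * v, K₀.mul_mem hu hv⟩ = ρ₀ ⟨u, hu⟩ * ρ₀ ⟨v, hv⟩ := by
    intro u v hu hv
    rw [show (⟨u * v, K₀.mul_mem hu hv⟩ : ↥K₀) = ⟨u, hu⟩ * ⟨v, hv⟩ from rfl, map_mul]
  have hρconj : ∀ (h w : G) (hh : h ∈ H) (hw : w ∈ K₀),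
      ρ₀ ⟨h⁻¹ * w * h, K₀.mul_mem (K₀.mul_mem (K₀.inv_mem (hHK₀ hh)) hw) (hHK₀ hh)⟩ =
        ρ₀ ⟨w, hw⟩ := by
    intro h w hh hw
    rw [hρmul _ _ (K₀.mul_mem (K₀.inv_mem (hHK₀ hh)) hw) (hHK₀ hh),
      hρmul _ _ (K₀.inv_mem (hHK₀ hh)) hw]
    have e1 : ρ₀ ⟨h, hHK₀ hh⟩ = h := hρ₀id h hh
    have e2 : ρ₀ ⟨h⁻¹, K₀.inv_mem (hHK₀ hh)⟩ = h⁻¹ := hρ₀id h⁻¹ (H.inv_mem hh)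
    rw [e1, e2]
    have hc := hcomm (ρ₀ ⟨w, hw⟩) h (hρ₀mem _) hh
    rw [mul_assoc, hc, inv_mul_cancel_left]
  -- conjugation into K₀ and L
  have hconjK : ∀ (a : ↥A) (x : ↥L), ((a : G))⁻¹ * (x : G) * (a : G) ∈ K₀ := by
    intro a x
    apply hLK₀
    have := hLnormal.conj_mem (x : G) x.2 ((a : G))⁻¹
    simpa using this
  have hconjL : ∀ (a : ↥A) (x : ↥L), (a : G) * (x : G) * ((a : G))⁻¹ ∈ L :=
    fun a x => hLnormal.conj_mem _ x.2 _
  set cA : ↥A → ↥L → ↥L := fun a x => ⟨(a : G) * (x : G) * ((a : G))⁻¹, hconjL a x⟩ with hcA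
  -- the induced map κ
  set κ : ↥L → Ma := fun x => fun q =>
    Quotient.liftOn' q
      (fun a : ↥A => Additive.ofMul
        ((⟨ρ₀ ⟨((a : G))⁻¹ * (x : G) * (a : G), hconjK a x⟩, hρ₀mem _⟩ : ↥H)))
      (by
        intro a b hab
        have hab0 : (a⁻¹ * b : ↥A) ∈ H.subgroupOf A := QuotientGroup.leftRel_apply.1 hab
        have hab' : ((a : G))⁻¹ * (b : G) ∈ H := by
          simpa [Subgroup.mem_subgroupOf] using hab0
        apply congrArg Additive.ofMul
        apply Subtype.ext
        show ρ₀ ⟨((a : G))⁻¹ * (x : G) * (a : G), hconjK a x⟩ =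
          ρ₀ ⟨((b : G))⁻¹ * (x : G) * (b : G), hconjK b x⟩
        have key := hρconj (((a : G))⁻¹ * (b : G)) (((a : G))⁻¹ * (x : G) * (a : G)) hab'
          (hconjK a x)
        rw [← key]
        apply hρcongr
        group) with hκdef
  have hκmk : ∀ (x : ↥L) (a : ↥A), κ x (QuotientGroup.mk a) =
      Additive.ofMul ((⟨ρ₀ ⟨((a : G))⁻¹ * (x : G) * (a : G), hconjK a x⟩, hρ₀mem _⟩ : ↥H)) :=
    fun x a => rfl
  have hκadd : ∀ x y : ↥L, κ (x * y) = κ x + κ y := by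
    intro x y
    funext q
    induction q using Quotient.inductionOn' with
    | h a =>
      show κ (x * y) (QuotientGroup.mk a) = κ x (QuotientGroup.mk a) + κ y (QuotientGroup.mk a)
      rw [hκmk, hκmk, hκmk, ← ofMul_mul]
      apply congrArg Additive.ofMul
      apply Subtype.ext
      show ρ₀ ⟨((a : G))⁻¹ * ((x * y : ↥L) : G) * (a : G), hconjK a (x * y)⟩ =
        ρ₀ ⟨((a : G))⁻¹ * (x : G) * (a : G), hconjK a x⟩ *
          ρ₀ ⟨((a : G))⁻¹ * (y : G) * (a : G), hconjK a y⟩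
      rw [← hρmul]
      apply hρcongr
      push_cast
      group
  have hκone : κ 1 = 0 := by
    funext q
    induction q using Quotient.inductionOn' with
    | h a =>
      show κ 1 (QuotientGroup.mk a) = 0
      rw [hκmk]
      have : ρ₀ ⟨((a : G))⁻¹ * ((1 : ↥L) : G) * (a : G), hconjK a 1⟩ = ρ₀ 1 := by
        have h1 : ρ₀ ⟨(1 : G), K₀.one_mem⟩ = ρ₀ 1 := rfl
        rw [← h1]
        apply hρcongr
        simp
      apply congrArg Additive.ofMul
      apply Subtype.ext
      show ρ₀ ⟨((a : G))⁻¹ * ((1 : ↥L) : G) * (a : G), hconjK a 1⟩ = ((1 : ↥H) : G)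
      rw [this, map_one]
      rfl
  have hκinv : ∀ x : ↥L, κ x⁻¹ = - κ x := by
    intro x
    have h0 := hκadd x⁻¹ x
    rw [inv_mul_cancel, hκone] at h0
    exact eq_neg_of_add_eq_zero_left h0.symm
  have hκH : ∀ (x : ↥L) (hxH : (x : G) ∈ H),
      κ x (QuotientGroup.mk (1 : ↥A)) = Additive.ofMul (⟨(x : G), hxH⟩ : ↥H) := by
    intro x hxH
    rw [hκmk]
    apply congrArg Additive.ofMul
    apply Subtype.ext
    show ρ₀ ⟨((1 : ↥A) : G)⁻¹ * (x : G) * ((1 : ↥A) : G), hconjK 1 x⟩ = (x : G)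
    have : ρ₀ ⟨((1 : ↥A) : G)⁻¹ * (x : G) * ((1 : ↥A) : G), hconjK 1 x⟩ =
        ρ₀ ⟨(x : G), hHK₀ hxH⟩ := by
      apply hρcongr
      push_cast
      group
    rw [this]
    exact hρ₀id _ hxH
  -- the permutation action
  set τ : ↥A →* Equiv.Perm Qt := MulAction.toPermHom ↥A Qt with hτdef
  have hκconj : ∀ (a : ↥A) (x : ↥L) (q : Qt), κ (cA a x) q = κ x ((τ a).symm q) := by
    intro a x q
    induction q using Quotient.inductionOn' with
    | h b =>
      have hsymm : (τ a).symm (QuotientGroup.mk b) = QuotientGroup.mk (a⁻¹ * b) := rfl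
      rw [hsymm]
      show κ (cA a x) (QuotientGroup.mk b) = κ x (QuotientGroup.mk (a⁻¹ * b))
      rw [hκmk, hκmk]
      apply congrArg Additive.ofMul
      apply Subtype.ext
      show ρ₀ ⟨((b : G))⁻¹ * ((cA a x : ↥L) : G) * (b : G), hconjK b (cA a x)⟩ =
        ρ₀ ⟨(((a⁻¹ * b : ↥A) : G))⁻¹ * (x : G) * ((a⁻¹ * b : ↥A) : G), hconjK (a⁻¹ * b) x⟩
      apply hρcongr
      show ((b : G))⁻¹ * ((a : G) * (x : G) * ((a : G))⁻¹) * (b : G) = _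
      push_cast
      group
  -- the permutation representation on Ma
  set βP : Equiv.Perm Qt →* (Ma ≃ₗ[ℤ] Ma) :=
    { toFun := fun σ =>
        { toFun := fun m => m ∘ ⇑σ.symm
          map_add' := fun _ _ => rfl
          map_smul' := fun _ _ => rfl
          invFun := fun m => m ∘ ⇑σ
          left_inv := fun m => funext fun q => by simp
          right_inv := fun m => funext fun q => by simp }
      map_one' := rfl
      map_mul' := fun σ₁ σ₂ => rfl } with hβPdef
  have hβPapp : ∀ (σ : Equiv.Perm Qt) (m : Ma) (q : Qt), βP σ m q = m (σ.symm q) :=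
    fun _ _ _ => rfl
  set Γ : Subgroup (Equiv.Perm Qt) := τ.range with hΓdef
  haveI hΓfin : Finite ↥Γ := inferInstance
  set β : ↥Γ →* (Ma ≃ₗ[ℤ] Ma) := βP.comp Γ.subtype with hβdef
  -- the submodule U : image of A ∩ L under κ
  set Uadd : AddSubgroup Ma :=
    { carrier := {m | ∃ x : ↥L, (x : G) ∈ A ∧ κ x = m}
      zero_mem' := ⟨1, by simpa using A.one_mem, hκone⟩
      add_mem' := by
        rintro m₁ m₂ ⟨x, hxA, rfl⟩ ⟨y, hyA, rfl⟩
        exact ⟨x * y, by simpa using A.mul_mem hxA hyA, hκadd x y⟩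
      neg_mem' := by
        rintro m ⟨x, hxA, rfl⟩
        exact ⟨x⁻¹, by simpa using A.inv_mem hxA, hκinv x⟩ } with hUadd
  set U : Submodule ℤ Ma := AddSubgroup.toIntSubmodule Uadd with hUdef
  have hUmem : ∀ m : Ma, m ∈ U ↔ ∃ x : ↥L, (x : G) ∈ A ∧ κ x = m := fun m => Iff.rfl
  -- the key conjugation-compatibility of β with κ
  have hβκ : ∀ (a : ↥A) (x : ↥L), βP (τ a) (κ x) = κ (cA a x) := by
    intro a x
    funext q
    rw [hβPapp]
    exact (hκconj a x q).symm
  have hUinv : ∀ (γ : ↥Γ), ∀ u ∈ U, β γ u ∈ U := by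
    rintro γ u hu
    obtain ⟨x, hxA, rfl⟩ := (hUmem u).1 hu
    obtain ⟨a, ha⟩ := γ.2
    refine (hUmem _).2 ⟨cA a x, ?_, ?_⟩
    · show (a : G) * (x : G) * ((a : G))⁻¹ ∈ A
      exact A.mul_mem (A.mul_mem a.2 hxA) (A.inv_mem a.2)
    · rw [← hβκ a x]
      show βP (τ a) (κ x) = βP (γ : Equiv.Perm Qt) (κ x)
      rw [ha]
  obtain ⟨C, hCinv, hCfin, eZ, heZ0, hUC⟩ := VR.maschke β U hUinv
  -- the subgroups N_L and W of L
  set N_L : Subgroup ↥L :=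
    { carrier := {x | κ x ∈ C}
      one_mem' := by show κ 1 ∈ C; rw [hκone]; exact C.zero_mem
      mul_mem' := by
        intro x y hx hy
        show κ (x * y) ∈ C
        rw [hκadd]
        exact C.add_mem hx hy
      inv_mem' := by
        intro x hx
        show κ x⁻¹ ∈ C
        rw [hκinv]
        exact C.neg_mem hx } with hNLdef
  set W : Subgroup ↥L :=
    { carrier := {x | κ x ∈ U ⊔ C}
      one_mem' := by show κ 1 ∈ U ⊔ C; rw [hκone]; exact (U ⊔ C).zero_mem
      mul_mem' := by
        intro x y hx hy
        show κ (x * y) ∈ U ⊔ C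
        rw [hκadd]
        exact (U ⊔ C).add_mem hx hy
      inv_mem' := by
        intro x hx
        show κ x⁻¹ ∈ U ⊔ C
        rw [hκinv]
        exact (U ⊔ C).neg_mem hx } with hWdef
  set N : Subgroup G := N_L.map L.subtype with hNdef
  have hNL : N ≤ L := Subgroup.map_subtype_le N_L
  have hNmem : ∀ g : G, g ∈ N ↔ ∃ x : ↥L, x ∈ N_L ∧ (x : G) = g := by
    intro g
    constructor
    · rintro ⟨x, hx, rfl⟩
      exact ⟨x, hx, rfl⟩
    · rintro ⟨x, hx, rfl⟩
      exact ⟨x, hx, rfl⟩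
  -- (f1) W has finite index in L
  haveI : Module.Finite ℤ (Ma ⧸ (U ⊔ C)) := inferInstance
  have hexpQ : ∀ z : Ma ⧸ (U ⊔ C), eZ • z = 0 := by
    intro z
    obtain ⟨m, rfl⟩ := Submodule.Quotient.mk_surjective _ z
    rw [← Submodule.Quotient.mk_smul, Submodule.Quotient.mk_eq_zero]
    exact hUC m
  haveI hQfin : Finite (Ma ⧸ (U ⊔ C)) := VR.finite_of_exponent eZ heZ0 hexpQ
  have hWrel : ∀ x y : ↥L, (QuotientGroup.leftRel W) x y ↔ κ x⁻¹ + κ y ∈ U ⊔ C := by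
    intro x y
    rw [QuotientGroup.leftRel_apply]
    have : κ (x⁻¹ * y) = κ x⁻¹ + κ y := hκadd _ _
    constructor
    · intro h
      have : κ (x⁻¹ * y) ∈ U ⊔ C := h
      rwa [hκadd] at this
    · intro h
      show κ (x⁻¹ * y) ∈ U ⊔ C
      rwa [hκadd]
  set fInj : (↥L ⧸ W) → (Ma ⧸ (U ⊔ C)) := fun q =>
    Quotient.liftOn' q (fun x => Submodule.Quotient.mk (κ x))
      (by
        intro x y hxy
        rw [hWrel] at hxy
        apply (Submodule.Quotient.eq _).2
        have : κ x - κ y = -(κ x⁻¹ + κ y) + (κ x⁻¹ + κ x) := by abel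
        rw [this]
        have h2 : κ x⁻¹ + κ x = 0 := by rw [← hκadd, inv_mul_cancel, hκone]
        rw [h2, add_zero]
        exact (U ⊔ C).neg_mem hxy) with hfInj
  have hfInjInj : Function.Injective fInj := by
    intro q₁ q₂ h
    induction q₁ using Quotient.inductionOn' with
    | h x =>
      induction q₂ using Quotient.inductionOn' with
      | h y =>
        apply Quotient.sound'
        rw [hWrel]
        have h' : (Submodule.Quotient.mk (κ x) : Ma ⧸ (U ⊔ C)) = Submodule.Quotient.mk (κ y) := h
        have hsub : κ x - κ y ∈ U ⊔ C := (Submodule.Quotient.eq _).1 h'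
        have : κ x⁻¹ + κ y = -(κ x - κ y) + (κ x⁻¹ + κ x) := by abel
        rw [this]
        have h2 : κ x⁻¹ + κ x = 0 := by rw [← hκadd, inv_mul_cancel, hκone]
        rw [h2, add_zero]
        exact (U ⊔ C).neg_mem hsub
  haveI : Finite (↥L ⧸ W) := Finite.of_injective fInj hfInjInj
  have hWidx : W.index ≠ 0 := Nat.card_ne_zero.2 ⟨inferInstance, inferInstance⟩
  -- (f2) decomposition of elements of W
  have hWdec : ∀ x : ↥L, x ∈ W → ∃ g n : G, g ∈ A ∧ n ∈ N ∧ (x : G) = g * n := by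
    intro x hx
    have hx' : κ x ∈ U ⊔ C := hx
    obtain ⟨u, huU, c, hcC, hsum⟩ := Submodule.mem_sup.1 hx'
    obtain ⟨w, hwA, hwu⟩ := (hUmem u).1 huU
    refine ⟨(w : G), ((w⁻¹ * x : ↥L) : G), hwA, ?_, ?_⟩
    · refine (hNmem _).2 ⟨w⁻¹ * x, ?_, rfl⟩
      show κ (w⁻¹ * x) ∈ C
      rw [hκadd, hκinv, hwu, ← hsum]
      have : -u + (u + c) = c := by abel
      rw [this]
      exact hcC
    · push_cast
      group
  -- (f3) the image of W in G has finite index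
  set Wg : Subgroup G := W.map L.subtype with hWgdef
  have hWgL : Wg ≤ L := Subgroup.map_subtype_le W
  have hWgsub : Wg.subgroupOf L = W :=
    Subgroup.comap_map_eq_self_of_injective L.subtype_injective W
  have hWgidx : Wg.index ≠ 0 := by
    have hrel : Wg.relIndex L * L.index = Wg.index := Subgroup.relIndex_mul_index hWgL
    rw [← hrel]
    apply mul_ne_zero
    · show (Wg.subgroupOf L).index ≠ 0
      rw [hWgsub]
      exact hWidx
    · exact hLfi.index_ne_zero
  -- (f4) A normalizes N
  have hnormN : ∀ a ∈ A, ∀ n ∈ N, a * n * a⁻¹ ∈ N := by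
    intro a haA n hn
    obtain ⟨x, hxNL, rfl⟩ := (hNmem n).1 hn
    refine (hNmem _).2 ⟨cA ⟨a, haA⟩ x, ?_, rfl⟩
    show κ (cA ⟨a, haA⟩ x) ∈ C
    have : κ (cA ⟨a, haA⟩ x) = βP (τ ⟨a, haA⟩) (κ x) := (hβκ ⟨a, haA⟩ x).symm
    rw [this]
    have hγ : τ ⟨a, haA⟩ ∈ Γ := ⟨⟨a, haA⟩, rfl⟩
    exact hCinv ⟨τ ⟨a, haA⟩, hγ⟩ (κ x) hxNL
  -- (f5) A ⊓ N is finite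
  have hHNfin : Finite ↥(H ⊓ N : Subgroup G) := by
    set fmap : ↥(H ⊓ N : Subgroup G) → ↥(U ⊓ C) := fun z =>
      ⟨κ ⟨(z : G), hNL z.2.2⟩, by
        refine Submodule.mem_inf.2 ⟨?_, ?_⟩
        · exact (hUmem _).2 ⟨⟨(z : G), hNL z.2.2⟩, hHA z.2.1, rfl⟩
        · obtain ⟨x, hxNL, hxz⟩ := (hNmem (z : G)).1 z.2.2
          have : (⟨(z : G), hNL z.2.2⟩ : ↥L) = x := Subtype.ext hxz.symm
          rw [this]
          exact hxNL⟩ with hfmap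
    have hfmapinj : Function.Injective fmap := by
      intro z₁ z₂ h
      have hκeq : κ ⟨(z₁ : G), hNL z₁.2.2⟩ = κ ⟨(z₂ : G), hNL z₂.2.2⟩ := congrArg Subtype.val h
      have h1 := hκH ⟨(z₁ : G), hNL z₁.2.2⟩ z₁.2.1
      have h2 := hκH ⟨(z₂ : G), hNL z₂.2.2⟩ z₂.2.1
      have := h1.symm.trans ((congrFun hκeq (QuotientGroup.mk (1 : ↥A))).trans h2)
      have hval : ((⟨(z₁ : G), z₁.2.1⟩ : ↥H) : G) = ((⟨(z₂ : G), z₂.2.1⟩ : ↥H) : G) :=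
        congrArg Subtype.val (Additive.ofMul.injective this)
      exact Subtype.ext hval
    haveI := hCfin
    exact Finite.of_injective fmap hfmapinj
  have hANfin : Finite ↥(A ⊓ N : Subgroup G) := by
    have heqHN : H ⊓ (A ⊓ N) = H ⊓ N := by rw [← inf_assoc, inf_of_le_left hHA]
    have h1 : (H ⊓ (A ⊓ N)).relIndex (A ⊓ N) ≠ 0 := by
      rw [Subgroup.inf_relIndex_right]
      intro h0
      exact hidx (Subgroup.relIndex_eq_zero_of_le_right inf_le_left h0)
    refine VR.finite_of_finite_relindex (H ⊓ (A ⊓ N)) (A ⊓ N) inf_le_right ?_ h1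
    rw [heqHN]
    exact hHNfin
  -- (f6) residual finiteness: avoid the finite intersection
  obtain ⟨Mrf, hMnorm, hMfi, hMF⟩ := exists_normal_avoiding hG (A ⊓ N) hANfin
  set Nstar : Subgroup G := N ⊓ Mrf with hNstar
  have htriv : A ⊓ Nstar = ⊥ := by rw [hNstar, ← inf_assoc]; exact hMF
  have hnormstar : ∀ a ∈ A, ∀ n ∈ Nstar, a * n * a⁻¹ ∈ Nstar := by
    intro a ha n hn
    exact ⟨hnormN a ha n hn.1, hMnorm.conj_mem n hn.2 a⟩
  -- (f7) A ⊔ Nstar has finite index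
  have hEidx : (A ⊔ N).index ≠ 0 := by
    have hWgle : Wg ≤ A ⊔ N := by
      rintro g ⟨x, hxW, rfl⟩
      obtain ⟨g', n, hg', hn, hx⟩ := hWdec x hxW
      show (x : G) ∈ A ⊔ N
      rw [hx]
      exact Subgroup.mul_mem _ ((le_sup_left : A ≤ A ⊔ N) hg')
        ((le_sup_right : N ≤ A ⊔ N) hn)
    have hdvd : (A ⊔ N).index ∣ Wg.index := Subgroup.index_dvd_of_le hWgle
    intro h0
    rw [h0] at hdvd
    exact hWgidx (zero_dvd_iff.1 hdvd)
  have hXidx : (A ⊔ Nstar).index ≠ 0 := by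
    have hXE : A ⊔ Nstar ≤ A ⊔ N := sup_le le_sup_left (le_trans inf_le_left le_sup_right)
    have hrel0 : Mrf.relIndex N ≠ 0 :=
      VR.relindex_ne_zero_of_index Mrf N hMfi.index_ne_zero
    have hrelstar : Nstar.relIndex N ≠ 0 := by
      have : (Mrf ⊓ N).relIndex N = Mrf.relIndex N := Subgroup.inf_relIndex_right Mrf N
      rw [hNstar, inf_comm]
      rw [this]
      exact hrel0
    have hrelinf : ((A ⊔ Nstar) ⊓ N).relIndex N ≠ 0 := by
      have hle : Nstar ≤ (A ⊔ Nstar) ⊓ N := le_inf le_sup_right inf_le_left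
      have hdvd := Subgroup.relIndex_dvd_of_le_left N hle
      intro h0
      rw [h0] at hdvd
      exact hrelstar (zero_dvd_iff.1 hdvd)
    have hreldec : (A ⊔ Nstar).relIndex (A ⊔ N) ≠ 0 := by
      refine VR.relindex_ne_zero_of_prod (A ⊔ Nstar) N (A ⊔ N) hXE le_sup_right ?_ hrelinf
      intro e he
      obtain ⟨a, ha, n, hn, rfl⟩ := VR.prod_decomp A N hnormN e he
      exact ⟨a * n * a⁻¹, hnormN a ha n hn, a, (le_sup_left : A ≤ A ⊔ Nstar) ha, by group⟩
    have := Subgroup.relIndex_mul_index hXE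
    rw [← this]
    exact mul_ne_zero hreldec hEidx
  -- conclude
  obtain ⟨K, hAK, hKfi, ρ, hmem, hid⟩ :=
    VR.retract_of_complement A Nstar hnormstar htriv hXidx
  exact ⟨K, hAK, hKfi, ρ, hmem, hid⟩

/-- Theorem 1.3: if `G` is residually finite, `H ≤vr G` is finitely generated and virtually
abelian, and `H ≤ A ≤ G` with `|A : H| < ∞`, then `A ≤vr G`. -/
theorem virtualRetract_of_finiteIndex_overgroup {G : Type*} [Group G]
    (hG : ResiduallyFinite G) (H A : Subgroup G)
    (hvr : IsVirtualRetract H) (hfg : H.FG) (hva : VirtuallyAbelian ↥H)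
    (hHA : H ≤ A) (hidx : H.relIndex A ≠ 0) :
    IsVirtualRetract A := by
  classical
  obtain ⟨Bt, hBtfi, hBtcomm⟩ := hva
  set B : Subgroup G := Bt.map H.subtype with hBdef
  have hBH : B ≤ H := Subgroup.map_subtype_le Bt
  -- commutativity of B at the level of G
  have hcommB : ∀ x y : G, x ∈ B → y ∈ B → x * y = y * x := by
    rintro x y ⟨xt, hxt, rfl⟩ ⟨yt, hyt, rfl⟩
    have := hBtcomm ⟨xt, hxt⟩ ⟨yt, hyt⟩
    have h2 : (⟨xt, hxt⟩ : ↥Bt) * ⟨yt, hyt⟩ = ((⟨yt, hyt⟩ : ↥Bt) * ⟨xt, hxt⟩ : ↥Bt) := this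
    have h3 : xt * yt = yt * xt := by
      have := congrArg Subtype.val h2
      exact this
    have := congrArg Subtype.val h3
    exact this
  -- B is a virtual retract of G
  obtain ⟨K₀, hHK₀, hK₀fi, ρ₀, hρmem, hρid⟩ := hvr
  haveI := hK₀fi
  set ρ' : ↥K₀ →* ↥H := ρ₀.codRestrict H hρmem with hρ'def
  have hρ'surj : Function.Surjective ρ' := by
    intro h
    refine ⟨⟨(h : G), hHK₀ h.2⟩, ?_⟩
    apply Subtype.ext
    show ρ₀ ⟨(h : G), hHK₀ h.2⟩ = (h : G)
    exact hρid _ h.2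
  set K₁ : Subgroup G := (Bt.comap ρ').map K₀.subtype with hK₁def
  have hK₁K₀ : K₁ ≤ K₀ := Subgroup.map_subtype_le _
  have hBK₁ : B ≤ K₁ := by
    rintro b ⟨bt, hbt, rfl⟩
    refine ⟨⟨(bt : G), hHK₀ bt.2⟩, ?_, rfl⟩
    show ρ' ⟨(bt : G), hHK₀ bt.2⟩ ∈ Bt
    have : ρ' ⟨(bt : G), hHK₀ bt.2⟩ = bt := by
      apply Subtype.ext
      show ρ₀ ⟨(bt : G), hHK₀ bt.2⟩ = (bt : G)
      exact hρid _ bt.2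
    rw [this]
    exact hbt
  have hK₁fi : K₁.FiniteIndex := by
    constructor
    have hrel : K₁.relIndex K₀ * K₀.index = K₁.index := Subgroup.relIndex_mul_index hK₁K₀
    rw [← hrel]
    apply mul_ne_zero
    · show (K₁.subgroupOf K₀).index ≠ 0
      have : K₁.subgroupOf K₀ = Bt.comap ρ' :=
        Subgroup.comap_map_eq_self_of_injective K₀.subtype_injective _
      rw [this, Subgroup.index_comap, MonoidHom.range_eq_top_of_surjective ρ' hρ'surj,
        Subgroup.relIndex_top_right]
      exact hBtfi.index_ne_zero
    · exact hK₀fi.index_ne_zero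
  have hvrB : IsVirtualRetract B := by
    refine ⟨K₁, hBK₁, hK₁fi, ρ₀.comp (Subgroup.inclusion hK₁K₀), ?_, ?_⟩
    · rintro ⟨k, hk⟩
      obtain ⟨y, hy, hyk⟩ := hk
      have : Subgroup.inclusion hK₁K₀ ⟨k, ⟨y, hy, hyk⟩⟩ = y := by
        apply Subtype.ext
        exact hyk.symm
      rw [MonoidHom.comp_apply, this]
      exact ⟨ρ' y, hy, rfl⟩
    · intro b hb
      rw [MonoidHom.comp_apply]
      have : Subgroup.inclusion hK₁K₀ ⟨b, hBK₁ hb⟩ = ⟨b, hHK₀ (hBH hb)⟩ := rfl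
      rw [this]
      exact hρid b (hBH hb)
  -- B is finitely generated
  haveI hHfg' : Group.FG ↥H := (Group.fg_iff_subgroup_fg H).2 hfg
  haveI := hBtfi
  haveI hBtfg : Group.FG ↥Bt := Subgroup.fg_of_index_ne_zero Bt
  have hBfg : B.FG := by
    rw [← Group.fg_iff_subgroup_fg]
    exact Group.fg_of_surjective
      (f := (Bt.equivMapOfInjective H.subtype H.subtype_injective).toMonoidHom)
      (Bt.equivMapOfInjective H.subtype H.subtype_injective).surjective
  -- relative index of B in A
  have hBidx : B.relIndex A ≠ 0 := by
    have hrel : B.relIndex H * H.relIndex A = B.relIndex A :=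
      Subgroup.relIndex_mul_relIndex B H A hBH hHA
    rw [← hrel]
    apply mul_ne_zero
    · show (B.subgroupOf H).index ≠ 0
      have : B.subgroupOf H = Bt :=
        Subgroup.comap_map_eq_self_of_injective H.subtype_injective _
      rw [this]
      exact hBtfi.index_ne_zero
    · exact hidx
  exact main_abelian hG B A hvrB hBfg hcommB (hBH.trans hHA) hBidx
end

section
/- Let X be a group and let G = (X × X) ⋊ ⟨α⟩ be the semidirect product of X × X with a cyclic group of order 2 generated by α, where α acts by swapping the two coordinates: α(x,y)α⁻¹ = (y,x). Let H = {(x,x) : x ∈ X} be the diagonal subgroup and let A = H⟨α⟩ be the subgroup of G generated by H and α (so A is the centralizer of α in G and |A : H| = 2). If A is a virtual retract of G, then X has an abelian subgroup of finite index. -/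
/-- The coordinate-swap automorphism of `X × X`. -/
def swapAut (X : Type*) [Group X] : MulAut (X × X) := (MulEquiv.prodComm : X × X ≃* X × X)

/-- The action of `ℤ/2` on `X × X` in which the generator swaps the two coordinates. -/
def swapAction (X : Type*) [Group X] : Multiplicative (ZMod 2) →* MulAut (X × X) where
  toFun a := if Multiplicative.toAdd a = 0 then 1 else swapAut X
  map_one' := by simp
  map_mul' a b := by
    have h2 : ∀ c : ZMod 2, c = 0 ∨ c = 1 := by decide
    have hsq : swapAut X * swapAut X = 1 := by
      ext p <;> rfl
    have e11 : (1 + 1 : ZMod 2) = 0 := by decide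
    have e10 : (1 : ZMod 2) ≠ 0 := by decide
    rcases h2 (Multiplicative.toAdd a) with ha | ha <;>
      rcases h2 (Multiplicative.toAdd b) with hb | hb <;>
      simp [toAdd_mul, ha, hb, e11, e10, hsq]

/-- The wreath-type product `G = (X × X) ⋊ ⟨α⟩₂` where `α` swaps the coordinates. -/
abbrev WreathZ2 (X : Type*) [Group X] :=
  SemidirectProduct (X × X) (Multiplicative (ZMod 2)) (swapAction X)

/-- The diagonal subgroup `H = {(x,x) : x ∈ X}` of `G = (X × X) ⋊ ⟨α⟩₂`. -/
def diagSubgroup (X : Type*) [Group X] : Subgroup (WreathZ2 X) :=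
  ((SemidirectProduct.inl : (X × X) →* WreathZ2 X).comp
    ((MonoidHom.id X).prod (MonoidHom.id X))).range

/-- The order-two element `α` of `G = (X × X) ⋊ ⟨α⟩₂`. -/
def wreathAlpha (X : Type*) [Group X] : WreathZ2 X :=
  SemidirectProduct.inr (Multiplicative.ofAdd (1 : ZMod 2))

section Aux

variable {X : Type*} [Group X]

lemma swapAction_apply (t : Multiplicative (ZMod 2)) (p : X × X) :
    swapAction X t p = if Multiplicative.toAdd t = 0 then p else (p.2, p.1) := by
  show (if Multiplicative.toAdd t = 0 then (1 : MulAut (X × X)) else swapAut X) p = _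
  split_ifs <;> rfl

lemma swapAction_diag (t : Multiplicative (ZMod 2)) {p : X × X} (hp : p.1 = p.2) :
    swapAction X t p = p := by
  rw [swapAction_apply]
  split_ifs with h
  · rfl
  · exact Prod.ext hp.symm hp

/-- The subgroup of `WreathZ2 X` of elements with diagonal `left` part. -/
def diagLeft (X : Type*) [Group X] : Subgroup (WreathZ2 X) where
  carrier := {g | g.left.1 = g.left.2}
  one_mem' := rfl
  mul_mem' := by
    intro a b ha hb
    show (a * b).left.1 = (a * b).left.2
    rw [SemidirectProduct.mul_left, swapAction_diag _ hb]
    simp only [Prod.fst_mul, Prod.snd_mul]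
    rw [ha, hb]
  inv_mem' := by
    intro a ha
    have h : (a.left⁻¹).1 = (a.left⁻¹).2 := by
      show a.left.1⁻¹ = a.left.2⁻¹
      rw [ha]
    show (a⁻¹).left.1 = (a⁻¹).left.2
    rw [SemidirectProduct.inv_left, swapAction_diag _ h]
    exact h

lemma A_le_diagLeft :
    diagSubgroup X ⊔ Subgroup.zpowers (wreathAlpha X) ≤ diagLeft X := by
  apply sup_le
  · rintro g ⟨x, rfl⟩
    rfl
  · rw [Subgroup.zpowers_le]
    rfl

lemma alpha_mul_diag {g : WreathZ2 X} (hg : g.left.1 = g.left.2) :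
    wreathAlpha X * g = g * wreathAlpha X := by
  apply SemidirectProduct.ext
  · rw [SemidirectProduct.mul_left, SemidirectProduct.mul_left]
    show (1 : X × X) * swapAction X _ g.left = g.left * swapAction X _ (1 : X × X)
    rw [one_mul, map_one, swapAction_diag _ hg, mul_one]
  · rw [SemidirectProduct.mul_right, SemidirectProduct.mul_right]
    exact mul_comm _ _

lemma alpha_conj_diag {g : WreathZ2 X} (hg : g.left.1 = g.left.2) :
    wreathAlpha X * g * (wreathAlpha X)⁻¹ = g := by
  rw [alpha_mul_diag hg, mul_inv_cancel_right]

lemma diag_mem_A (x : X) :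
    SemidirectProduct.inl (x, x) ∈ diagSubgroup X ⊔ Subgroup.zpowers (wreathAlpha X) :=
  Subgroup.mem_sup_left ⟨x, rfl⟩

lemma alpha_mem_A :
    wreathAlpha X ∈ diagSubgroup X ⊔ Subgroup.zpowers (wreathAlpha X) :=
  Subgroup.mem_sup_right (Subgroup.mem_zpowers _)

lemma alpha_conj_inl (x : X) :
    wreathAlpha X * SemidirectProduct.inl (x, 1) * (wreathAlpha X)⁻¹ =
      SemidirectProduct.inl ((1 : X), x) := by
  show SemidirectProduct.inr (Multiplicative.ofAdd (1 : ZMod 2)) *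
      SemidirectProduct.inl (x, 1) * (SemidirectProduct.inr (Multiplicative.ofAdd (1 : ZMod 2)))⁻¹
      = SemidirectProduct.inl ((1 : X), x)
  rw [← map_inv, ← SemidirectProduct.inl_aut]
  congr 1

end Aux

/-- Proposition 3.8: if `A = H⟨α⟩` is a virtual retract of `G = (X × X) ⋊ ⟨α⟩₂`, then `X`
is virtually abelian. -/
theorem virtuallyAbelian_of_virtualRetract_wreath (X : Type*) [Group X]
    (h : IsVirtualRetract (diagSubgroup X ⊔ Subgroup.zpowers (wreathAlpha X))) :
    ∃ B : Subgroup X, B.FiniteIndex ∧ ∀ x y : ↥B, x * y = y * x := by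
  obtain ⟨K, hAK, hKfi, ρ, hρA, hρid⟩ := h
  haveI := hKfi
  set ι : X →* WreathZ2 X :=
    SemidirectProduct.inl.comp ((MonoidHom.id X).prod 1) with hι
  have hιx : ∀ x : X, ι x = SemidirectProduct.inl (x, (1 : X)) := fun x => rfl
  refine ⟨K.comap ι, ⟨by
    rw [Subgroup.index_comap]
    exact (Subgroup.instFiniteIndex_subgroupOf K ι.range).index_ne_zero⟩, ?_⟩
  have hαK : wreathAlpha X ∈ K := hAK alpha_mem_A
  set a : ↥K := ⟨wreathAlpha X, hαK⟩ with ha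
  have hρa : ρ a = wreathAlpha X := hρid _ alpha_mem_A
  intro x y
  have hxK : ι (x : X) ∈ K := x.2
  have hyK : ι (y : X) ∈ K := y.2
  set kx : ↥K := ⟨ι (x : X), hxK⟩ with hkx
  set ky : ↥K := ⟨ι (y : X), hyK⟩ with hky
  have hdx : (ρ kx).left.1 = (ρ kx).left.2 := A_le_diagLeft (hρA kx)
  have hdy : (ρ ky).left.1 = (ρ ky).left.2 := A_le_diagLeft (hρA ky)
  set cx : ↥K := a * kx * a⁻¹ with hcx
  set cy : ↥K := a * ky * a⁻¹ with hcy
  have hρcx : ρ cx = ρ kx := by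
    rw [hcx, map_mul, map_mul, map_inv, hρa]
    exact alpha_conj_diag hdx
  have hρcy : ρ cy = ρ ky := by
    rw [hcy, map_mul, map_mul, map_inv, hρa]
    exact alpha_conj_diag hdy
  have hcxval : (cx : WreathZ2 X) = SemidirectProduct.inl ((1 : X), (x : X)) := by
    rw [hcx]
    push_cast
    rw [show (kx : WreathZ2 X) = ι (x : X) from rfl, hιx]
    exact alpha_conj_inl _
  have hcyval : (cy : WreathZ2 X) = SemidirectProduct.inl ((1 : X), (y : X)) := by
    rw [hcy]
    push_cast
    rw [show (ky : WreathZ2 X) = ι (y : X) from rfl, hιx]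
    exact alpha_conj_inl _
  have hsq : ∀ (z : ↥(K.comap ι)) (kz cz : ↥K), (kz : WreathZ2 X) = ι (z : X) →
      (cz : WreathZ2 X) = SemidirectProduct.inl ((1 : X), (z : X)) → ρ cz = ρ kz →
      ρ kz * ρ kz = SemidirectProduct.inl ((z : X), (z : X)) := by
    intro z kz cz hkz hcz hrc
    have hmul : kz * cz = ⟨SemidirectProduct.inl ((z : X), (z : X)), hAK (diag_mem_A _)⟩ := by
      apply Subtype.ext
      push_cast
      rw [hkz, hcz, hιx, ← map_mul]
      congr 1
      rw [Prod.mk_mul_mk, mul_one, one_mul]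
    have := hρid (SemidirectProduct.inl ((z : X), (z : X))) (diag_mem_A _)
    rw [← hmul, map_mul, hrc] at this
    exact this
  have hsqx := hsq x kx cx rfl hcxval hρcx
  have hsqy := hsq y ky cy rfl hcyval hρcy
  have hcomm : ρ kx * ρ ky = ρ ky * ρ kx := by
    have hmul : kx * cy = cy * kx := by
      apply Subtype.ext
      push_cast
      rw [hcyval, show (kx : WreathZ2 X) = ι (x : X) from rfl, hιx, ← map_mul, ← map_mul]
      congr 1
      rw [Prod.mk_mul_mk, Prod.mk_mul_mk, mul_one, one_mul, mul_one, one_mul]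
    rw [← hρcy, ← map_mul, ← map_mul, hmul]
  have hmulleft : ∀ g g' : WreathZ2 X, g.left.1 = g.left.2 → g'.left.1 = g'.left.2 →
      (g * g').left.1 = g.left.1 * g'.left.1 := by
    intro g g' hg hg'
    rw [SemidirectProduct.mul_left, swapAction_diag _ hg']
    rfl
  have hfxx : (ρ kx).left.1 * (ρ kx).left.1 = (x : X) := by
    have h : (ρ kx * ρ kx).left.1 =
        (SemidirectProduct.inl ((x : X), (x : X)) : WreathZ2 X).left.1 := by rw [hsqx]
    rw [hmulleft _ _ hdx hdx] at h
    exact h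
  have hfyy : (ρ ky).left.1 * (ρ ky).left.1 = (y : X) := by
    have h : (ρ ky * ρ ky).left.1 =
        (SemidirectProduct.inl ((y : X), (y : X)) : WreathZ2 X).left.1 := by rw [hsqy]
    rw [hmulleft _ _ hdy hdy] at h
    exact h
  have hfc : Commute (ρ kx).left.1 (ρ ky).left.1 := by
    have h : (ρ kx * ρ ky).left.1 = (ρ ky * ρ kx).left.1 := by rw [hcomm]
    rw [hmulleft _ _ hdx hdy, hmulleft _ _ hdy hdx] at h
    exact h
  apply Subtype.ext
  push_cast
  rw [← hfxx, ← hfyy]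
  exact ((hfc.mul_left hfc).mul_right (hfc.mul_left hfc)).eq
end

section
/- If G is a residually finite group and H is a virtual retract of G, then H is closed in the profinite topology on G; that is, for every g ∈ G with g ∉ H there exists a finite-index subgroup K of G such that H ⊆ K and g ∉ K. -/
/-- Lemma 2.2: a virtual retract of a residually finite group is closed in the
profinite topology. -/
theorem virtualRetract_closed_in_profinite_topology {G : Type*} [Group G]
    (hG : ResiduallyFinite G) (H : Subgroup G) (hvr : IsVirtualRetract H) :
    ∀ g : G, g ∉ H → ∃ K : Subgroup G, K.FiniteIndex ∧ H ≤ K ∧ g ∉ K := by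
  obtain ⟨K, hHK, hKfi, ρ, hρH, hρid⟩ := hvr
  intro g hg
  by_cases hgK : g ∈ K
  · -- g ∈ K: use residual finiteness on ρ(g)⁻¹ * g
    set x : G := (ρ ⟨g, hgK⟩)⁻¹ * g with hx
    have hx1 : x ≠ 1 := by
      intro h
      apply hg
      have : ρ ⟨g, hgK⟩ = g := by
        have := mul_eq_one_iff_inv_eq.mp h
        simpa [eq_comm] using this
      rw [← this]; exact hρH _
    obtain ⟨N, hNnorm, hNfi, hxN⟩ := hG x hx1
    haveI := hNnorm
    haveI := hNfi
    -- two homomorphisms K → G ⧸ N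
    let f1 : ↥K →* G ⧸ N := (QuotientGroup.mk' N).comp K.subtype
    let f2 : ↥K →* G ⧸ N := (QuotientGroup.mk' N).comp ρ
    let L : Subgroup ↥K := f1.eqLocus f2
    have hker : f1.ker ⊓ f2.ker ≤ L := by
      rintro k ⟨h1, h2⟩
      show f1 k = f2 k
      rw [MonoidHom.mem_ker.mp h1, MonoidHom.mem_ker.mp h2]
    haveI : Finite (G ⧸ N) := N.finite_quotient_of_finiteIndex
    haveI : Finite f1.range := Subtype.finite
    haveI : Finite f2.range := Subtype.finite
    haveI : L.FiniteIndex := Subgroup.finiteIndex_of_le hker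
    refine ⟨L.map K.subtype, ?_, ?_, ?_⟩
    · constructor
      rw [Subgroup.index_map_subtype]
      exact Nat.mul_ne_zero Subgroup.FiniteIndex.index_ne_zero hKfi.index_ne_zero
    · intro h hh
      refine ⟨⟨h, hHK hh⟩, ?_, rfl⟩
      show f1 _ = f2 _
      simp only [f1, f2, MonoidHom.comp_apply, Subgroup.coe_subtype, hρid h hh]
    · rintro ⟨k, hkL, hkg⟩
      have hk : k = ⟨g, hgK⟩ := Subtype.ext hkg
      rw [hk] at hkL
      have : f1 ⟨g, hgK⟩ = f2 ⟨g, hgK⟩ := hkL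
      simp only [f1, f2, MonoidHom.comp_apply, Subgroup.coe_subtype] at this
      apply hxN
      rw [hx, ← QuotientGroup.eq]
      exact this.symm
  · exact ⟨K, hKfi, hHK, hgK⟩
end

section
/- If G is a group with property (VRC), then G is residually finite. -/
/-- Property (VRC): every cyclic subgroup is a virtual retract. -/
def VRC (G : Type*) [Group G] : Prop :=
  ∀ g : G, IsVirtualRetract (Subgroup.zpowers g)

open Subgroup

-- inside any group, for g ≠ 1 there is M ≤ zpowers g with g ∉ M and finite relindex
lemma key {G : Type*} [Group G] (g : G) (hg : g ≠ 1) :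
    ∃ M : Subgroup G, g ∉ M ∧ M.relIndex (Subgroup.zpowers g) ≠ 0 := by
  by_cases hfin : IsOfFinOrder g
  · refine ⟨⊥, by simpa using hg, ?_⟩
    rw [Subgroup.relIndex_bot_left]
    haveI : Finite (zpowers g) := hfin.finite_zpowers.to_subtype
    exact Nat.card_pos.ne'
  · refine ⟨zpowers (g ^ 2), ?_, ?_⟩
    · rintro ⟨k, hk⟩
      have hk' : (g ^ (2:ℕ)) ^ k = g := hk
      rw [← zpow_natCast g 2, ← zpow_mul] at hk'
      have h2 := (injective_zpow_iff_not_isOfFinOrder.2 hfin) (a₁ := (2:ℕ) * k) (a₂ := 1)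
        (by simpa using hk')
      omega
    · have hrange : (zpowersHom G g).range = zpowers g := Subgroup.range_zpowersHom g
      rw [← hrange, ← Subgroup.index_comap]
      have hle : zpowers (Multiplicative.ofAdd (2:ℤ)) ≤
          (zpowers (g ^ 2)).comap (zpowersHom G g) := by
        rw [Subgroup.zpowers_le]
        simp only [Subgroup.mem_comap]
        show g ^ (2:ℤ) ∈ zpowers (g ^ 2)
        rw [show ((2:ℤ)) = ((2:ℕ):ℤ) by norm_num, zpow_natCast]
        exact Subgroup.mem_zpowers _
      have hdvd := Subgroup.index_dvd_of_le hle
      have h2 : (zpowers (Multiplicative.ofAdd (2:ℤ))).index = 2 := by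
        have : AddSubgroup.toSubgroup (AddSubgroup.zmultiples (2:ℤ)) =
            zpowers (Multiplicative.ofAdd (2:ℤ)) := by
          have hmem : ∀ x : Multiplicative ℤ,
              x ∈ AddSubgroup.toSubgroup (AddSubgroup.zmultiples (2:ℤ)) ↔
                x.toAdd ∈ AddSubgroup.zmultiples (2:ℤ) := fun x => Iff.rfl
          ext x
          rw [hmem, AddSubgroup.mem_zmultiples_iff, Subgroup.mem_zpowers_iff]
          constructor
          · rintro ⟨k, hk⟩
            exact ⟨k, by rw [← ofAdd_zsmul, hk]; rfl⟩
          · rintro ⟨k, hk⟩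
            exact ⟨k, by rw [← hk, ← ofAdd_zsmul]; rfl⟩
        rw [← this, AddSubgroup.index_toSubgroup, Int.index_zmultiples]
        rfl
      rw [h2] at hdvd
      intro h0
      rw [h0] at hdvd
      simp at hdvd

/-- Lemma 2.3: a group with property (VRC) is residually finite. -/
theorem residuallyFinite_of_VRC {G : Type*} [Group G] (hG : VRC G) :
    ResiduallyFinite G := by
  intro g hg
  obtain ⟨K, hHK, hKfi, ρ, hmem, hid⟩ := hG g
  obtain ⟨M, hgM, hMrel⟩ := key g hg
  set L : Subgroup G := (M.comap ρ).map K.subtype with hL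
  have hrange : ρ.range = zpowers g := by
    apply le_antisymm
    · rintro x ⟨k, rfl⟩
      exact hmem k
    · rw [Subgroup.zpowers_le]
      exact ⟨⟨g, hHK (Subgroup.mem_zpowers g)⟩, hid g (Subgroup.mem_zpowers g)⟩
  have hLindex : L.index ≠ 0 := by
    rw [hL, Subgroup.index_map, Subgroup.ker_subtype, Subgroup.range_subtype, sup_bot_eq]
    apply mul_ne_zero
    · rw [Subgroup.index_comap, hrange]
      exact hMrel
    · exact hKfi.index_ne_zero
  have hgL : g ∉ L := by
    rintro ⟨x, hx, hxg⟩
    have hxeq : x = ⟨g, hHK (Subgroup.mem_zpowers g)⟩ := Subtype.ext hxg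
    rw [hxeq] at hx
    have hx' : ρ ⟨g, hHK (Subgroup.mem_zpowers g)⟩ ∈ M := hx
    rw [hid g (Subgroup.mem_zpowers g)] at hx'
    exact hgM hx'
  haveI : L.FiniteIndex := ⟨hLindex⟩
  exact ⟨L.normalCore, L.normalCore_normal, Subgroup.finiteIndex_normalCore L,
    fun h => hgL (L.normalCore_le h)⟩
end

section
/- Let G be a residually finite group, let H be a retract of G (i.e., there is a homomorphism ρ : G → H restricting to the identity on H), and let A be a subgroup of G with H ⊆ A and |A : H| < ∞. Then A is a virtual retract of G. -/
open scoped Pointwise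



/-- Lemma 3.5: if `G` is residually finite, `H` is a retract of `G` and `H ≤ A ≤ G` with
`|A : H| < ∞`, then `A ≤vr G`. -/
theorem virtualRetract_of_finiteIndex_overgroup_of_retract {G : Type*} [Group G]
    (hG : ResiduallyFinite G) (H A : Subgroup G)
    (ρ : G →* G) (hρ_mem : ∀ g : G, ρ g ∈ H) (hρ_id : ∀ h ∈ H, ρ h = h)
    (hHA : H ≤ A) (hidx : H.relIndex A ≠ 0) :
    IsVirtualRetract A := by
  classical
  haveI : (H.subgroupOf A).FiniteIndex := ⟨hidx⟩
  -- `C = A ∩ ker ρ` is finite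
  set C : Subgroup G := A ⊓ ρ.ker with hCdef
  have hCfin : Finite ↥C := by
    refine Finite.of_injective
      (fun c : ↥C => ((⟨(c : G), c.2.1⟩ : ↥A) : A ⧸ H.subgroupOf A)) ?_
    intro c₁ c₂ h
    rw [QuotientGroup.eq, Subgroup.mem_subgroupOf] at h
    have hmem : (c₁ : G)⁻¹ * (c₂ : G) ∈ H := by simpa using h
    have h1 : ρ ((c₁ : G)⁻¹ * (c₂ : G)) = (c₁ : G)⁻¹ * (c₂ : G) := hρ_id _ hmem
    have h2 : ρ ((c₁ : G)⁻¹ * (c₂ : G)) = 1 := by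
      have k1 : ρ (c₁ : G) = 1 := c₁.2.2
      have k2 : ρ (c₂ : G) = 1 := c₂.2.2
      rw [map_mul, map_inv, k1, k2, inv_one, one_mul]
    have hc : (c₁ : G)⁻¹ * (c₂ : G) = 1 := by rw [← h1, h2]
    exact Subtype.ext (inv_mul_eq_one.mp hc)
  haveI := Fintype.ofFinite ↥C
  -- pick a finite-index normal subgroup avoiding every nontrivial element of `C`
  choose Lf hLf using fun c : {c : ↥C // (c : G) ≠ 1} => hG (c.1 : G) c.2
  set L : Subgroup G := ⨅ c, Lf c with hLdef
  haveI hLn : L.Normal := by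
    constructor
    intro n hn g
    rw [Subgroup.mem_iInf] at hn ⊢
    exact fun c => (hLf c).1.conj_mem n (hn c) g
  haveI hLfin : L.FiniteIndex := Subgroup.finiteIndex_iInf fun c => (hLf c).2.1
  -- The normal subgroup `M = ker ρ ∩ L`
  set M : Subgroup G := ρ.ker ⊓ L with hMdef
  haveI hMn : M.Normal := by
    constructor
    intro n hn g
    exact ⟨(MonoidHom.normal_ker ρ).conj_mem n hn.1 g, hLn.conj_mem n hn.2 g⟩
  -- A ∩ M is trivial
  have hAM : ∀ x : G, x ∈ A → x ∈ M → x = 1 := by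
    intro x hxA hxM
    by_contra hx1
    have hxC : x ∈ C := ⟨hxA, hxM.1⟩
    exact (hLf ⟨⟨x, hxC⟩, hx1⟩).2.2 (Subgroup.mem_iInf.mp hxM.2 _)
  -- the finite index subgroup `K = A ⊔ M`
  set K : Subgroup G := A ⊔ M with hKdef
  have hAK : A ≤ K := le_sup_left
  have hMK : M ≤ K := le_sup_right
  -- every element of `K` is a product `a * m`
  have hKmem : ∀ k : G, k ∈ K → ∃ a ∈ A, ∃ m ∈ M, a * m = k := by
    intro k hk
    have : k ∈ (A : Set G) * (M : Set G) := by rw [← Subgroup.mul_normal A M]; exact hk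
    obtain ⟨a, ha, m, hm, hamk⟩ := this
    exact ⟨a, ha, m, hm, hamk⟩
  -- `K` has finite index
  haveI hLK : (L.subgroupOf ρ.ker).FiniteIndex := by
    constructor
    have hdvd : L.relIndex ρ.ker ∣ L.index := Subgroup.relIndex_dvd_index_of_normal L ρ.ker
    intro h0
    exact hLfin.index_ne_zero (Nat.eq_zero_of_zero_dvd (h0 ▸ hdvd))
  haveI : Finite (G ⧸ K) := by
    have hresp : ∀ a b : ↥ρ.ker, @Setoid.r _ (QuotientGroup.leftRel (L.subgroupOf ρ.ker)) a b →
        ((a : G) : G ⧸ K) = ((b : G) : G ⧸ K) := by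
      intro a b hab
      rw [QuotientGroup.leftRel_apply, Subgroup.mem_subgroupOf] at hab
      have hker : (a : G)⁻¹ * (b : G) ∈ ρ.ker := ρ.ker.mul_mem (ρ.ker.inv_mem a.2) b.2
      exact QuotientGroup.eq.mpr (hMK ⟨hker, by simpa using hab⟩)
    refine Finite.of_surjective
      (fun x : ↥ρ.ker ⧸ (L.subgroupOf ρ.ker) =>
        Quotient.liftOn' x (fun n : ↥ρ.ker => ((n : G) : G ⧸ K)) hresp) ?_
    intro q
    induction q using QuotientGroup.induction_on with
    | H g =>
      have hn : g * (ρ g)⁻¹ ∈ ρ.ker := by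
        have : ρ (ρ g) = ρ g := hρ_id _ (hρ_mem g)
        simp [MonoidHom.mem_ker, map_mul, map_inv, this]
      refine ⟨Quotient.mk'' (⟨g * (ρ g)⁻¹, hn⟩ : ↥ρ.ker), ?_⟩
      have : ((g * (ρ g)⁻¹ : G) : G ⧸ K) = (g : G ⧸ K) := by
        refine QuotientGroup.eq.mpr ?_
        have : (g * (ρ g)⁻¹)⁻¹ * g = ρ g := by group
        rw [this]
        exact hAK (hHA (hρ_mem g))
      simpa using this
  haveI hKfin : K.FiniteIndex := Subgroup.finiteIndex_of_finite_quotient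
  -- the retraction `K → A`
  set M' : Subgroup ↥K := M.subgroupOf K with hM'def
  haveI : M'.Normal := hMn.subgroupOf K
  set f : ↥A →* ↥K ⧸ M' := (QuotientGroup.mk' M').comp (Subgroup.inclusion hAK) with hf
  have hinj : Function.Injective f := by
    refine (injective_iff_map_eq_one f).mpr ?_
    intro a ha
    have : Subgroup.inclusion hAK a ∈ M' := (QuotientGroup.eq_one_iff _).mp ha
    rw [Subgroup.mem_subgroupOf] at this
    exact Subtype.ext (hAM (a : G) a.2 this)
  have hsurjf : Function.Surjective f := by
    intro q
    induction q using QuotientGroup.induction_on with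
    | H k =>
      obtain ⟨a, ha, m, hm, hamk⟩ := hKmem (k : G) k.2
      refine ⟨⟨a, ha⟩, ?_⟩
      show ((Subgroup.inclusion hAK ⟨a, ha⟩ : ↥K) : ↥K ⧸ M') = (k : ↥K ⧸ M')
      refine QuotientGroup.eq.mpr ?_
      rw [Subgroup.mem_subgroupOf]
      show ((Subgroup.inclusion hAK ⟨a, ha⟩ : ↥K) : G)⁻¹ * (k : G) ∈ M
      have : ((Subgroup.inclusion hAK ⟨a, ha⟩ : ↥K) : G) = a := rfl
      rw [this, ← hamk]
      simpa using hm
  set e : ↥A ≃* (↥K ⧸ M') := MulEquiv.ofBijective f ⟨hinj, hsurjf⟩ with he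
  refine ⟨K, hAK, hKfin,
    A.subtype.comp (e.symm.toMonoidHom.comp (QuotientGroup.mk' M')), ?_, ?_⟩
  · intro k
    exact (e.symm ((QuotientGroup.mk' M') k)).2
  · intro h hh
    have h1 : e ⟨h, hh⟩ = (QuotientGroup.mk' M') ⟨h, hAK hh⟩ := rfl
    have h2 : e.symm ((QuotientGroup.mk' M') ⟨h, hAK hh⟩) = ⟨h, hh⟩ := by
      rw [← h1, MulEquiv.symm_apply_apply]
    show A.subtype (e.symm ((QuotientGroup.mk' M') ⟨h, hAK hh⟩)) = h
    rw [h2]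
    rfl
end

section
/- Let G be a residually finite group, let H be a finitely generated virtually abelian subgroup of G which is a virtual retract of G, and let A be a subgroup of G with H ⊆ A and |A : H| < ∞. Then there exist a finitely generated virtually abelian group P and a surjective homomorphism φ : G → P whose restriction to A is injective. -/
universe u

open Subgroup

/-- If a group has a finitely generated subgroup of finite index, it is finitely generated. -/
lemma group_fg_of_fg_finiteIndex {G : Type*} [Group G] (K : Subgroup G) [K.FiniteIndex]
    (hK : K.FG) : Group.FG G := by
  obtain ⟨S, hS, hSfin⟩ := (Subgroup.fg_iff K).mp hK
  rw [Group.fg_iff]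
  refine ⟨S ∪ Set.range (fun q : G ⧸ K => q.out), ?_, hSfin.union (Set.finite_range _)⟩
  rw [eq_top_iff]
  intro g _
  have h1 : (QuotientGroup.mk g : G ⧸ K).out ∈
      Subgroup.closure (S ∪ Set.range (fun q : G ⧸ K => q.out)) :=
    subset_closure (Or.inr ⟨_, rfl⟩)
  have h2 : ((QuotientGroup.mk g : G ⧸ K).out)⁻¹ * g ∈ K := by
    rw [← QuotientGroup.eq, QuotientGroup.out_eq']
  have h3 : ((QuotientGroup.mk g : G ⧸ K).out)⁻¹ * g ∈
      Subgroup.closure (S ∪ Set.range (fun q : G ⧸ K => q.out)) := by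
    have hle : K ≤ Subgroup.closure (S ∪ Set.range (fun q : G ⧸ K => q.out)) := by
      rw [← hS]; exact closure_mono Set.subset_union_left
    exact hle h2
  simpa [mul_assoc] using mul_mem h1 h3

/-- Subgroups of finitely generated commutative groups are finitely generated. -/
lemma subgroup_fg_of_comm {C : Type*} [CommGroup C] [Group.FG C] (S : Subgroup C) : S.FG := by
  haveI h2 : Module.Finite ℤ (Additive C) :=
    Module.Finite.iff_addGroup_fg.mpr inferInstance
  haveI h3 : IsNoetherian ℤ (Additive C) := isNoetherian_of_isNoetherianRing_of_finite ℤ _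
  have h4 := IsNoetherian.noetherian (AddSubgroup.toIntSubmodule (Subgroup.toAddSubgroup S))
  rw [Subgroup.fg_iff_add_fg]
  have h5 := (Submodule.fg_iff_addSubgroup_fg _).1 h4
  rwa [AddSubgroup.toIntSubmodule_toAddSubgroup] at h5

lemma group_fg_prod {G H : Type*} [Group G] [Group H] [Group.FG G] [Group.FG H] :
    Group.FG (G × H) := by
  obtain ⟨S, hS, hSfin⟩ := Group.fg_iff.mp ‹Group.FG G›
  obtain ⟨T, hT, hTfin⟩ := Group.fg_iff.mp ‹Group.FG H›
  rw [Group.fg_iff]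
  refine ⟨(insert 1 S) ×ˢ (insert 1 T), ?_, (hSfin.insert 1).prod (hTfin.insert 1)⟩
  rw [Subgroup.closure_prod (Set.mem_insert 1 S) (Set.mem_insert 1 T)]
  have h1 : Subgroup.closure (insert 1 S) = ⊤ :=
    eq_top_iff.2 (hS ▸ closure_mono (Set.subset_insert _ _))
  have h2 : Subgroup.closure (insert 1 T) = ⊤ :=
    eq_top_iff.2 (hT ▸ closure_mono (Set.subset_insert _ _))
  rw [h1, h2, Subgroup.top_prod_top]

lemma group_fg_of_mulEquiv {G H : Type*} [Group G] [Group H] (e : G ≃* H) [Group.FG G] :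
    Group.FG H :=
  Group.fg_of_surjective (f := e.toMonoidHom) e.surjective

/-- finite products of f.g. groups are f.g. -/
lemma group_fg_pi {X : Type*} [Finite X] {M : Type*} [Group M] [Group.FG M] :
    Group.FG (X → M) := by
  obtain ⟨n, ⟨e⟩⟩ := Finite.exists_equiv_fin X
  suffices h : Group.FG (Fin n → M) by
    exact group_fg_of_mulEquiv (MulEquiv.arrowCongr e.symm (MulEquiv.refl M))
  clear e
  induction n with
  | zero => infer_instance
  | succ n ih =>
    have e : (M × (Fin n → M)) ≃* (Fin (n+1) → M) :=
      { toFun := fun p => Fin.cons p.1 p.2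
        invFun := fun f => (f 0, fun i => f i.succ)
        left_inv := fun p => by
          ext <;> simp
        right_inv := fun f => by
          exact Fin.cons_self_tail f
        map_mul' := fun p q => by
          funext i
          refine Fin.cases ?_ ?_ i <;> simp }
    haveI : Group.FG (M × (Fin n → M)) := @group_fg_prod _ _ _ _ _ ih
    exact group_fg_of_mulEquiv e

/-- FG and virtual abelianness pass to subgroups. -/
lemma subgroup_fg_va {W : Type*} [Group W] (hfg : Group.FG W) (hva : VirtuallyAbelian W)
    (P : Subgroup W) : Group.FG ↥P ∧ VirtuallyAbelian ↥P := by
  obtain ⟨B, hBi, hBc⟩ := hva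
  haveI := hBi
  haveI := hfg
  letI : CommGroup ↥B := { (inferInstance : Group ↥B) with mul_comm := hBc }
  haveI : Group.FG ↥B := inferInstance
  have hfg1 : ((B ⊓ P).subgroupOf B).FG := subgroup_fg_of_comm _
  haveI hfg2 : Group.FG ↥((B ⊓ P).subgroupOf B) := (Group.fg_iff_subgroup_fg _).2 hfg1
  have e1 : ↥((B ⊓ P).subgroupOf B) ≃* ↥(B ⊓ P) := Subgroup.subgroupOfEquivOfLe inf_le_left
  have e2 : ↥((B ⊓ P).subgroupOf P) ≃* ↥(B ⊓ P) := Subgroup.subgroupOfEquivOfLe inf_le_right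
  haveI hfg3 : Group.FG ↥((B ⊓ P).subgroupOf P) :=
    group_fg_of_mulEquiv (e1.trans e2.symm)
  have hBPeq : (B ⊓ P).subgroupOf P = B.subgroupOf P := Subgroup.inf_subgroupOf_right B P
  haveI hidx : (B.subgroupOf P).FiniteIndex := Subgroup.instFiniteIndex_subgroupOf B P
  rw [hBPeq] at hfg3
  constructor
  · exact group_fg_of_fg_finiteIndex (B.subgroupOf P) ((Group.fg_iff_subgroup_fg _).1 hfg3)
  · refine ⟨B.subgroupOf P, hidx, ?_⟩
    intro x y
    have hx : (x.1 : W) ∈ B := Subgroup.mem_subgroupOf.mp x.2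
    have hy : (y.1 : W) ∈ B := Subgroup.mem_subgroupOf.mp y.2
    have := hBc ⟨x.1.1, hx⟩ ⟨y.1.1, hy⟩
    have h' : (x.1.1 : W) * y.1.1 = y.1.1 * x.1.1 := congrArg Subtype.val this
    exact Subtype.ext (Subtype.ext h')

/-- residual finiteness: avoid a finite set of nontrivial elements. -/
lemma exists_normal_finiteIndex_avoiding {G : Type*} [Group G]
    (hG : ∀ g : G, g ≠ 1 → ∃ N : Subgroup G, N.Normal ∧ N.FiniteIndex ∧ g ∉ N)
    {S : Set G} (hS : S.Finite) :
    ∃ M : Subgroup G, M.Normal ∧ M.FiniteIndex ∧ ∀ s ∈ S, s ≠ 1 → s ∉ M := by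
  refine Set.Finite.induction_on
    (motive := fun s _ => ∃ M : Subgroup G, M.Normal ∧ M.FiniteIndex ∧ ∀ t ∈ s, t ≠ 1 → t ∉ M)
    S hS ⟨⊤, inferInstance, inferInstance, by simp⟩ ?_
  intro a s _ _ ih
  obtain ⟨M, hMn, hMi, hM⟩ := ih
  by_cases h1 : a = 1
  · refine ⟨M, hMn, hMi, ?_⟩
    intro t ht htne
    rcases ht with rfl | ht
    · exact absurd h1 htne
    · exact hM t ht htne
  · obtain ⟨N, hNn, hNi, hN⟩ := hG a h1
    haveI := hMi; haveI := hNi; haveI := hMn; haveI := hNn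
    refine ⟨N ⊓ M, inferInstance, inferInstance, ?_⟩
    intro t ht htne
    rcases ht with rfl | ht
    · exact fun hmem => hN hmem.1
    · exact fun hmem => hM t ht htne hmem.2

/-- functions into a subgroup, as a subgroup of functions. -/
def piSubgroupEquiv {X : Type*} {C : Type*} [Group C] (D : Subgroup C) :
    (X → ↥D) ≃* ↥(Subgroup.pi Set.univ fun _ : X => D) where
  toFun f := ⟨fun x => (f x : C), fun x _ => (f x).2⟩
  invFun f x := ⟨f.1 x, f.2 x (Set.mem_univ x)⟩
  left_inv f := rfl
  right_inv f := rfl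
  map_mul' f g := rfl

/-- permutations act on tuples by precomposition with the inverse. -/
def permAut (X : Type*) (C : Type*) [Group C] : Equiv.Perm X →* MulAut (X → C) where
  toFun σ :=
    { toFun := fun f => f ∘ σ.symm
      invFun := fun f => f ∘ σ
      left_inv := fun f => by funext x; simp
      right_inv := fun f => by funext x; simp
      map_mul' := fun f g => rfl }
  map_one' := by
    ext f x
    rfl
  map_mul' σ τ := by
    ext f x
    rfl

@[simp] lemma permAut_apply {X C : Type*} [Group C] (σ : Equiv.Perm X) (f : X → C) (x : X) :
    (permAut X C σ) f x = f (σ.symm x) := rfl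

/-- The induced (monomial) representation attached to a virtual retraction onto `H`. -/
lemma induced_rep {G : Type u} [Group G] (H K : Subgroup G) (hHK : H ≤ K) [K.FiniteIndex]
    (ρ : ↥K →* G) (hρH : ∀ k, ρ k ∈ H) (hρid : ∀ (h : G) (hh : h ∈ H), ρ ⟨h, hHK hh⟩ = h)
    (hfg : H.FG) (hva : VirtuallyAbelian ↥H) :
    ∃ (W : Type u) (_ : Group W), Group.FG W ∧ VirtuallyAbelian W ∧
      ∃ φ₀ : G →* W, ∀ g ∈ H, φ₀ g = 1 → g = 1 := by
  classical
  set X := G ⧸ K with hX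
  set C := ↥H
  have keymem : ∀ (g : G) (x : X), (x.out)⁻¹ * g * ((g⁻¹ • x).out) ∈ K := by
    intro g x
    have : ((x.out : G) : X) = ((g * (g⁻¹ • x).out : G) : X) := by
      rw [QuotientGroup.out_eq']
      have : ((g * (g⁻¹ • x).out : G) : X) = g • (((g⁻¹ • x).out : G) : X) := rfl
      rw [this, QuotientGroup.out_eq', smul_smul, mul_inv_cancel, one_smul]
    have h2 := QuotientGroup.eq.mp this
    rwa [← mul_assoc] at h2
  set ρ' : ↥K →* C := ρ.codRestrict H hρH with hρ'
  set θ : Equiv.Perm X →* MulAut (X → C) := permAut X C with hθ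
  set W := (X → C) ⋊[θ] Equiv.Perm X with hW
  set κ : G → X → ↥K := fun g x => ⟨(x.out)⁻¹ * g * ((g⁻¹ • x).out), keymem g x⟩ with hκ
  have hκmul : ∀ (g h : G) (x : X), κ (g * h) x = κ g x * κ h (g⁻¹ • x) := by
    intro g h x
    apply Subtype.ext
    push_cast [hκ]
    rw [smul_smul, ← mul_inv_rev]
    group
  set φ₀ : G →* W := MonoidHom.mk'
    (fun g => ⟨fun x => ρ' (κ g x), MulAction.toPermHom G X g⟩)
    (by
      intro g h
      refine SemidirectProduct.ext ?_ (map_mul _ g h)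
      funext x
      show ρ' (κ (g * h) x) = ρ' (κ g x) * ρ' (κ h (g⁻¹ • x))
      rw [hκmul g h x, map_mul]) with hφ₀
  have hker : ∀ g ∈ H, φ₀ g = 1 → g = 1 := by
    intro g hg hφg
    have hgK : g ∈ K := hHK hg
    set x₀ : X := QuotientGroup.mk (1 : G) with hx₀
    have hfix : g⁻¹ • x₀ = x₀ := by
      have : g⁻¹ • x₀ = ((g⁻¹ * 1 : G) : X) := rfl
      rw [this, mul_one, QuotientGroup.eq]
      simpa using hgK
    have hcK : (x₀.out : G) ∈ K := by
      have := QuotientGroup.out_eq' x₀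
      rw [hx₀] at this
      have h2 := QuotientGroup.eq.mp this.symm
      simpa using h2
    have hleft : (fun x => ρ' (κ g x)) = (1 : X → C) :=
      congrArg SemidirectProduct.left hφg
    have h1 : ρ' (κ g x₀) = 1 := congrFun hleft x₀
    have hκg : κ g x₀ = ⟨x₀.out, hcK⟩⁻¹ * ⟨g, hgK⟩ * ⟨x₀.out, hcK⟩ := by
      apply Subtype.ext
      push_cast [hκ]
      rw [hfix]
    have h2 : ρ (κ g x₀) = 1 := congrArg Subtype.val h1
    rw [hκg, map_mul, map_mul, map_inv] at h2
    rw [hρid g hg] at h2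
    have h3 := congrArg (fun y => ρ ⟨x₀.out, hcK⟩ * y * (ρ ⟨x₀.out, hcK⟩)⁻¹) h2
    simpa [mul_assoc] using h3
  -- virtually abelian and finitely generated
  obtain ⟨D, hDi, hDc⟩ := hva
  haveI : K.FiniteIndex := ‹_›
  haveI : Finite X := Subgroup.finite_quotient_of_finiteIndex
  haveI : D.FiniteIndex := hDi
  set Bpi : Subgroup (X → C) := Subgroup.pi Set.univ (fun _ => D) with hBpi
  set B : Subgroup W := Bpi.map SemidirectProduct.inl with hB
  have memB : ∀ w : W, w ∈ B ↔ w.right = 1 ∧ ∀ x, w.left x ∈ D := by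
    intro w
    constructor
    · rintro ⟨f, hf, rfl⟩
      exact ⟨rfl, fun x => hf x (Set.mem_univ x)⟩
    · rintro ⟨hr, hl⟩
      exact ⟨w.left, fun x _ => hl x, SemidirectProduct.ext rfl hr.symm⟩
  have finQB : Finite (W ⧸ B) := by
    refine Finite.of_injective
      (fun z : W ⧸ B =>
        ((fun x => ((z.out.left x : C) : C ⧸ D)), z.out.right)) ?_
    intro z₁ z₂ hz
    have hr : z₁.out.right = z₂.out.right := congrArg Prod.snd hz
    have hl : ∀ x : X, ((z₁.out.left x : C) : C ⧸ D) = ((z₂.out.left x : C) : C ⧸ D) :=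
      fun x => congrFun (congrArg Prod.fst hz) x
    rw [← QuotientGroup.out_eq' z₁, ← QuotientGroup.out_eq' z₂, QuotientGroup.eq, memB]
    constructor
    · show (z₁.out⁻¹ * z₂.out).right = 1
      rw [SemidirectProduct.mul_right, SemidirectProduct.inv_right, hr, inv_mul_cancel]
    · intro x
      have hx : ((z₁.out⁻¹ * z₂.out).left) x =
          (z₁.out.left (z₁.out.right x))⁻¹ * z₂.out.left (z₁.out.right x) := by
        rw [SemidirectProduct.mul_left, Pi.mul_apply, SemidirectProduct.inv_left,
          SemidirectProduct.inv_right]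
        simp [hθ, Equiv.Perm.inv_def, Pi.inv_apply]
      rw [hx]
      exact QuotientGroup.eq.mp (hl (z₁.out.right x))
  haveI hBfi : B.FiniteIndex := Subgroup.finiteIndex_of_finite_quotient
  have hBcomm : ∀ x y : ↥B, x * y = y * x := by
    intro a b
    obtain ⟨ha1, ha2⟩ := (memB a.1).mp a.2
    obtain ⟨hb1, hb2⟩ := (memB b.1).mp b.2
    apply Subtype.ext
    refine SemidirectProduct.ext ?_ ?_
    · funext x
      show ((a.1 * b.1).left) x = ((b.1 * a.1).left) x
      rw [SemidirectProduct.mul_left, SemidirectProduct.mul_left, ha1, hb1]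
      simp only [map_one, MulAut.one_apply, Pi.mul_apply]
      exact congrArg Subtype.val (hDc ⟨a.1.left x, ha2 x⟩ ⟨b.1.left x, hb2 x⟩)
    · show ((a.1 * b.1).right) = ((b.1 * a.1).right)
      rw [SemidirectProduct.mul_right, SemidirectProduct.mul_right, ha1, hb1]
  -- FG of B
  haveI : Group.FG C := (Group.fg_iff_subgroup_fg H).2 hfg
  letI : CommGroup ↥D := { (inferInstance : Group ↥D) with mul_comm := hDc }
  haveI : Group.FG ↥D := inferInstance
  haveI : Group.FG (X → ↥D) := group_fg_pi
  haveI : Group.FG ↥Bpi := group_fg_of_mulEquiv (piSubgroupEquiv D)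
  haveI : Group.FG ↥B :=
    group_fg_of_mulEquiv (Subgroup.equivMapOfInjective Bpi _ SemidirectProduct.inl_injective)
  have hWfg : Group.FG W :=
    group_fg_of_fg_finiteIndex B ((Group.fg_iff_subgroup_fg _).1 inferInstance)
  exact ⟨W, inferInstance, hWfg, ⟨B, hBfi, hBcomm⟩, φ₀, hker⟩

/-- Lemma 4.1: if `G` is residually finite, `H ≤vr G` is finitely generated virtually abelian
and `H ≤ A` with `|A : H| < ∞`, then there is a finitely generated virtually abelian group `P`
and an epimorphism `φ : G → P` injective on `A`. -/
theorem exists_epimorphism_to_virtuallyAbelian_injective_on_overgroup {G : Type u} [Group G]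
    (hG : ResiduallyFinite G) (H A : Subgroup G)
    (hvr : IsVirtualRetract H) (hfg : H.FG) (hva : VirtuallyAbelian ↥H)
    (hHA : H ≤ A) (hidx : H.relIndex A ≠ 0) :
    ∃ (P : Type u) (_ : Group P), Group.FG P ∧ VirtuallyAbelian P ∧
      ∃ φ : G →* P, Function.Surjective φ ∧ Set.InjOn φ (A : Set G) := by
  classical
  obtain ⟨K, hHK, hKi, ρ, hρH, hρid⟩ := hvr
  haveI := hKi
  obtain ⟨W, instW, hWfg, hWva, φ₀, hker⟩ := induced_rep H K hHK ρ hρH hρid hfg hva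
  haveI : (H.subgroupOf A).FiniteIndex := ⟨hidx⟩
  have hfin : Finite ↥(A ⊓ φ₀.ker) := by
    refine Finite.of_injective
      (fun j : ↥(A ⊓ φ₀.ker) =>
        (QuotientGroup.mk ⟨j.1, j.2.1⟩ : A ⧸ H.subgroupOf A)) ?_
    intro j₁ j₂ hj
    have h1 : (⟨j₁.1, j₁.2.1⟩ : ↥A)⁻¹ * ⟨j₂.1, j₂.2.1⟩ ∈ H.subgroupOf A :=
      QuotientGroup.eq.mp hj
    have h2 : (j₁.1⁻¹ * j₂.1 : G) ∈ H := by
      simpa [Subgroup.mem_subgroupOf] using h1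
    have h3 : φ₀ (j₁.1⁻¹ * j₂.1) = 1 := by
      have k1 : φ₀ j₁.1 = 1 := j₁.2.2
      have k2 : φ₀ j₂.1 = 1 := j₂.2.2
      rw [map_mul, map_inv, k1, k2, inv_one, one_mul]
    exact Subtype.ext (inv_mul_eq_one.mp (hker _ h2 h3))
  have hSetfin : ((A ⊓ φ₀.ker : Subgroup G) : Set G).Finite := Set.finite_coe_iff.mp hfin
  obtain ⟨M, hMn, hMi, hM⟩ := exists_normal_finiteIndex_avoiding hG hSetfin
  haveI := hMn; haveI := hMi
  haveI : Finite (G ⧸ M) := Subgroup.finite_quotient_of_finiteIndex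
  haveI : Group.FG W := hWfg
  haveI : Group.FG (W × G ⧸ M) := group_fg_prod
  have hW'va : VirtuallyAbelian (W × G ⧸ M) := by
    obtain ⟨B, hBi, hBc⟩ := hWva
    haveI := hBi
    refine ⟨B.prod ⊥, ?_, ?_⟩
    · have h1 : B.prod ⊥ = (B.comap (MonoidHom.fst W (G ⧸ M))) ⊓
          ((⊥ : Subgroup (G ⧸ M)).comap (MonoidHom.snd W (G ⧸ M))) := by
        ext ⟨w, q⟩
        simp [Subgroup.mem_prod]
      haveI : (B.comap (MonoidHom.fst W (G ⧸ M))).FiniteIndex := by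
        constructor
        rw [Subgroup.index_comap_of_surjective _ Prod.fst_surjective]
        exact hBi.index_ne_zero
      haveI : ((⊥ : Subgroup (G ⧸ M)).comap (MonoidHom.snd W (G ⧸ M))).FiniteIndex := by
        constructor
        rw [Subgroup.index_comap_of_surjective _ Prod.snd_surjective]
        simp only [Subgroup.index_bot]
        exact Nat.card_ne_zero.mpr ⟨inferInstance, inferInstance⟩
      rw [h1]
      infer_instance
    · intro x y
      have hx := (Subgroup.mem_prod).mp x.2
      have hy := (Subgroup.mem_prod).mp y.2
      apply Subtype.ext
      refine Prod.ext ?_ ?_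
      · exact congrArg Subtype.val (hBc ⟨x.1.1, hx.1⟩ ⟨y.1.1, hy.1⟩)
      · show x.1.2 * y.1.2 = y.1.2 * x.1.2
        rw [Subgroup.mem_bot.mp hx.2, Subgroup.mem_bot.mp hy.2]
  set φtot : G →* W × G ⧸ M := φ₀.prod (QuotientGroup.mk' M) with hφtot
  obtain ⟨hPfg, hPva⟩ := subgroup_fg_va inferInstance hW'va φtot.range
  refine ⟨↥φtot.range, inferInstance, hPfg, hPva, φtot.rangeRestrict,
    φtot.rangeRestrict_surjective, ?_⟩
  intro a ha b hb heq
  have heq' : φtot a = φtot b := congrArg Subtype.val heq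
  have h1 : φ₀ a = φ₀ b := congrArg Prod.fst heq'
  have h2 : (QuotientGroup.mk a : G ⧸ M) = QuotientGroup.mk b := congrArg Prod.snd heq'
  have key : a⁻¹ * b = 1 := by
    by_contra hne
    have haA : a ∈ A := ha
    have hbA : b ∈ A := hb
    have hmem : a⁻¹ * b ∈ A ⊓ φ₀.ker := by
      refine Subgroup.mem_inf.mpr ⟨mul_mem (inv_mem haA) hbA, ?_⟩
      rw [MonoidHom.mem_ker, map_mul, map_inv, h1, inv_mul_cancel]
    have hinM : a⁻¹ * b ∈ M := QuotientGroup.eq.mp h2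
    exact hM _ hmem hne hinM
  exact inv_mul_eq_one.mp key
end

section
/- If P is a finitely generated virtually abelian group, then every subgroup Q of P is a virtual retract of P. -/
lemma exists_proj_smul (M : Type*) [AddCommGroup M] [Module.Finite ℤ M]
    [Module.Free ℤ M] (N : Submodule ℤ M) :
    ∃ D : ℤ, D ≠ 0 ∧ ∃ p : M →ₗ[ℤ] M, (∀ m, p m ∈ N) ∧ ∀ n ∈ N, p n = D • n := by
  classical
  let b := Module.Free.chooseBasis ℤ M
  obtain ⟨n, snf⟩ := N.smithNormalForm b
  have ha : ∀ i, snf.a i ≠ 0 := by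
    intro i h
    have h2 : (snf.bN i : M) = 0 := by rw [snf.snf i, h, zero_smul]
    exact absurd (Subtype.ext h2 : snf.bN i = 0) (snf.bN.ne_zero i)
  set D : ℤ := ∏ i, snf.a i with hD
  have hDne : D ≠ 0 := Finset.prod_ne_zero_iff.2 fun i _ => ha i
  set g : Module.Free.ChooseBasisIndex ℤ M → M :=
    fun j => if j ∈ Set.range snf.f then D • snf.bM j else 0 with hg
  have hgN : ∀ j, g j ∈ N := by
    intro j
    show (if j ∈ Set.range snf.f then D • snf.bM j else 0) ∈ N
    by_cases h : j ∈ Set.range ⇑snf.f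
    · rw [if_pos h]
      obtain ⟨i, rfl⟩ := h
      have hsplit : D = (∏ i' ∈ Finset.univ.erase i, snf.a i') * snf.a i :=
        (Finset.prod_erase_mul _ _ (Finset.mem_univ i)).symm
      rw [hsplit, mul_smul, ← snf.snf i]
      exact Submodule.smul_mem _ _ (snf.bN i).2
    · rw [if_neg h]; exact N.zero_mem
  refine ⟨D, hDne, Module.Basis.constr snf.bM ℤ g, ?_, ?_⟩
  · intro m
    rw [Module.Basis.constr_apply]
    exact Submodule.sum_mem _ fun j _ => Submodule.smul_mem _ _ (hgN j)
  · intro x hx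
    set s : Set M := Set.range (fun i => (snf.bN i : M)) with hs
    have hspan : x ∈ Submodule.span ℤ s := by
      have h1 : Submodule.span ℤ (Set.range snf.bN) = (⊤ : Submodule ℤ N) := snf.bN.span_eq
      have h3 : s = N.subtype '' (Set.range snf.bN) := by
        rw [← Set.range_comp]; rfl
      have h2 : Submodule.span ℤ s = N := by
        rw [h3, Submodule.span_image, h1, Submodule.map_top, Submodule.range_subtype]
      rw [h2]; exact hx
    have heq : Set.EqOn (⇑(Module.Basis.constr snf.bM ℤ g)) (⇑(D • (LinearMap.id : M →ₗ[ℤ] M)))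
        (Submodule.span ℤ s : Set M) := by
      refine LinearMap.eqOn_span ?_
      rintro y ⟨i, rfl⟩
      show (Module.Basis.constr snf.bM ℤ g) (snf.bN i : M) = (D • LinearMap.id (R := ℤ)) (snf.bN i : M)
      rw [snf.snf i, map_smul, Module.Basis.constr_basis]
      have h4 : g (snf.f i) = D • snf.bM (snf.f i) := by
        show (if snf.f i ∈ Set.range snf.f then D • snf.bM (snf.f i) else 0) = _
        rw [if_pos ⟨i, rfl⟩]
      rw [h4]
      simp [smul_smul, mul_comm]
    simpa using heq hspan


lemma exists_exponent_of_fg_commGroup (C : Type*) [CommGroup C] (hfg : Group.FG C) :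
    ∃ e : ℕ, e ≠ 0 ∧ ∀ x : C, IsOfFinOrder x → x ^ e = 1 := by
  haveI : AddGroup.FG (Additive C) := GroupFG.iff_add_fg.mp hfg
  haveI : Module.Finite ℤ (Additive C) := Module.Finite.iff_addGroup_fg.mpr ‹_›
  haveI : IsNoetherian ℤ (Additive C) := inferInstance
  set T : Submodule ℤ (Additive C) := Submodule.torsion ℤ (Additive C) with hT
  haveI : Module.Finite ℤ ↥T := Module.Finite.iff_fg.mpr (IsNoetherian.noetherian T)
  haveI hfin : Finite ↥T := Module.finite_of_fg_torsion ↥T (Submodule.torsion_isTorsion)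
  refine ⟨Nat.card ↥T, Nat.card_ne_zero.mpr ⟨⟨0, T.zero_mem⟩, hfin⟩, ?_⟩
  intro x hx
  obtain ⟨n, hn, hxn⟩ := hx.exists_pow_eq_one
  have hmem : Additive.ofMul x ∈ T := by
    refine ⟨⟨(n : ℤ), mem_nonZeroDivisors_of_ne_zero (by exact_mod_cast hn.ne')⟩, ?_⟩
    show (n : ℤ) • Additive.ofMul x = 0
    rw [natCast_zsmul]
    exact congrArg Additive.ofMul hxn |>.trans rfl
  have : (Nat.card ↥T) • (⟨Additive.ofMul x, hmem⟩ : ↥T) = 0 := card_nsmul_eq_zero'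
  have h2 : (Nat.card ↥T) • Additive.ofMul x = 0 := congrArg Subtype.val this
  exact h2


lemma finiteIndex_range_pow {C : Type*} [CommGroup C] (hfg : Group.FG C) (n : ℕ) (hn : n ≠ 0) :
    ((powMonoidHom n : C →* C).range).FiniteIndex := by
  set R : Subgroup C := (powMonoidHom n : C →* C).range with hR
  haveI : R.Normal := R.normal_of_comm
  haveI : Group.FG (C ⧸ R) := Group.fg_of_surjective (QuotientGroup.mk'_surjective R)
  have htor : Monoid.IsTorsion (C ⧸ R) := by
    intro x
    obtain ⟨b, rfl⟩ := QuotientGroup.mk'_surjective R x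
    refine isOfFinOrder_iff_pow_eq_one.mpr ⟨n, Nat.pos_of_ne_zero hn, ?_⟩
    rw [← map_pow]
    exact (QuotientGroup.eq_one_iff _).mpr ⟨b, rfl⟩
  haveI : Finite (C ⧸ R) := CommGroup.finite_of_fg_torsion (C ⧸ R) htor
  exact ⟨Subgroup.index_ne_zero_of_finite⟩

lemma main_retract {P : Type*} [Group P] (B : Subgroup P) [hBn : B.Normal]
    (hBfi : B.FiniteIndex) (hcomm : ∀ x y : ↥B, x * y = y * x) (hfgB : Group.FG ↥B)
    (htf : ∀ (b : ↥B) (n : ℤ), n ≠ 0 → b ^ n = 1 → b = 1)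
    (Q : Subgroup P) : IsVirtualRetract Q := by
  classical
  letI : CommGroup ↥B := { (inferInstance : Group ↥B) with mul_comm := hcomm }
  -- the ℤ-module M
  set M := Additive ↥B with hM
  haveI : AddGroup.FG M := GroupFG.iff_add_fg.mp hfgB
  haveI : Module.Finite ℤ M := Module.Finite.iff_addGroup_fg.mpr ‹_›
  haveI : NoZeroSMulDivisors ℤ M := by
    refine ⟨fun {c m} h => ?_⟩
    by_cases hc : c = 0
    · exact Or.inl hc
    · refine Or.inr ?_
      have h1 : Additive.toMul m ^ c = 1 := by
        have := congrArg Additive.toMul h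
        rwa [toMul_zsmul] at this
      exact htf (Additive.toMul m) c hc h1
  -- the submodule corresponding to A = Q ⊓ B
  set A_M : Submodule ℤ M :=
    AddSubgroup.toIntSubmodule (Subgroup.toAddSubgroup ((Q ⊓ B).subgroupOf B)) with hA_M
  have hAmem : ∀ m : M, m ∈ A_M ↔ ((Additive.toMul m : ↥B) : P) ∈ Q ⊓ B := fun m => Iff.rfl
  obtain ⟨D, hD, p, hpN, hpA⟩ := exists_proj_smul M A_M
  -- conjugation action
  set cAct : P → (M →+ M) := fun q => AddMonoidHom.mk'
    (fun m => Additive.ofMul (⟨q * ((Additive.toMul m : ↥B) : P) * q⁻¹,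
      hBn.conj_mem _ (SetLike.coe_mem _) q⟩ : ↥B))
    (by
      intro a b
      apply congrArg Additive.ofMul
      apply Subtype.ext
      show q * ((Additive.toMul (a + b) : ↥B) : P) * q⁻¹ = _
      rw [toMul_add]
      simp only [toMul_ofMul]
      push_cast
      group) with hcAct
  have hc_apply : ∀ (q : P) (m : M), ((Additive.toMul (cAct q m) : ↥B) : P)
      = q * ((Additive.toMul m : ↥B) : P) * q⁻¹ := fun q m => rfl
  have hc_mul : ∀ (q q' : P) (m : M), cAct q (cAct q' m) = cAct (q * q') m := by
    intro q q' m
    apply congrArg Additive.ofMul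
    apply Subtype.ext
    show q * (q' * ((Additive.toMul m : ↥B) : P) * q'⁻¹) * q⁻¹ = (q * q') * _ * (q * q')⁻¹
    group
  have hc_id : ∀ (b : P), b ∈ B → ∀ m, cAct b m = m := by
    intro b hb m
    apply congrArg Additive.ofMul
    apply Subtype.ext
    show b * ((Additive.toMul m : ↥B) : P) * b⁻¹ = ((Additive.toMul m : ↥B) : P)
    have := hcomm ⟨b, hb⟩ (Additive.toMul m)
    have h2 : b * ((Additive.toMul m : ↥B) : P) = ((Additive.toMul m : ↥B) : P) * b := by
      have h3 := congrArg (Subtype.val) this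
      push_cast at h3
      exact h3
    rw [h2]
    group
  have hc_inv : ∀ (q : P) (m : M), cAct q (cAct q⁻¹ m) = m := by
    intro q m
    rw [hc_mul, mul_inv_cancel]
    exact hc_id 1 B.one_mem m
  have hc_A : ∀ (q : P), q ∈ Q → ∀ m ∈ A_M, cAct q m ∈ A_M := by
    intro q hq m hm
    rw [hAmem] at hm ⊢
    rw [hc_apply]
    exact ⟨Q.mul_mem (Q.mul_mem hq hm.1) (Q.inv_mem hq), hBn.conj_mem _ hm.2 q⟩
  -- the finite quotient F = Q / (B ⊓ Q)
  set A_Q : Subgroup ↥Q := B.subgroupOf Q with hA_Q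
  haveI : A_Q.Normal := Subgroup.normal_subgroupOf
  haveI hAQfi : A_Q.FiniteIndex := by
    constructor
    show (B.subgroupOf Q).index ≠ 0
    have hdvd : B.relIndex Q ∣ B.index := Subgroup.relIndex_dvd_index_of_normal B Q
    exact fun h0 => hBfi.index_ne_zero (Nat.eq_zero_of_zero_dvd (h0 ▸ hdvd))
  set F := ↥Q ⧸ A_Q with hF
  haveI : Finite F := by
    have : Nat.card F ≠ 0 := hAQfi.index_ne_zero
    exact (Nat.card_ne_zero.mp this).2
  haveI : Fintype F := Fintype.ofFinite F
  -- the averaged projection ψ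
  set g : ↥Q → (M →+ M) := fun q =>
    ((cAct ↑q).comp (p.toAddMonoidHom)).comp (cAct ((↑q : P))⁻¹) with hg
  have hg_apply : ∀ (q : ↥Q) (m : M), g q m = cAct ↑q (p (cAct ((↑q : P))⁻¹ m)) :=
    fun q m => rfl
  have hgwd : ∀ (x y : ↥Q), QuotientGroup.leftRel A_Q x y → g x = g y := by
    intro x y hxy
    rw [QuotientGroup.leftRel_apply] at hxy
    have hb : ((x⁻¹ * y : ↥Q) : P) ∈ B := hxy
    have hyx : (y : P) = ↑x * ↑(x⁻¹ * y) := by push_cast; group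
    refine AddMonoidHom.ext fun m => ?_
    rw [hg_apply, hg_apply, hyx]
    rw [show (↑x * ↑(x⁻¹ * y) : P)⁻¹ = (↑(x⁻¹*y) : P)⁻¹ * (↑x : P)⁻¹ by group]
    rw [← hc_mul (↑x : P) (↑(x⁻¹ * y) : P), ← hc_mul ((↑(x⁻¹ * y) : P))⁻¹ ((↑x : P))⁻¹ m]
    rw [hc_id _ (B.inv_mem hb), hc_id _ hb]
  set glift : F → (M →+ M) := Quotient.lift g hgwd with hglift
  have hglift_mk : ∀ q : ↥Q, glift (QuotientGroup.mk q) = g q := fun q => rfl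
  set psi : M →+ M := ∑ c : F, glift c with hpsi
  have hpsi_apply : ∀ m, psi m = ∑ c : F, glift c m := by
    intro m; rw [hpsi, AddMonoidHom.finset_sum_apply]
  set k : ℤ := (Nat.card F : ℤ) * D with hk
  have hkne : k ≠ 0 := mul_ne_zero (Nat.cast_ne_zero.mpr hAQfi.index_ne_zero) hD
  -- psi maps into A_M
  have hpsiA : ∀ m, psi m ∈ A_M := by
    intro m
    rw [hpsi_apply]
    refine Submodule.sum_mem _ fun c _ => ?_
    induction c using Quotient.inductionOn with
    | h q =>
      rw [hglift_mk, hg_apply]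
      exact hc_A _ q.2 _ (hpN _)
  -- psi is multiplication by k on A_M
  have hpsiA_eq : ∀ m ∈ A_M, psi m = k • m := by
    intro m hm
    rw [hpsi_apply]
    have hterm : ∀ c : F, glift c m = D • m := by
      intro c
      induction c using Quotient.inductionOn with
      | h q =>
        rw [hglift_mk, hg_apply]
        have h1 : cAct ((↑q : P))⁻¹ m ∈ A_M := hc_A _ (Q.inv_mem q.2) _ hm
        rw [hpA _ h1, (cAct (↑q : P)).map_zsmul, hc_inv]
    rw [Finset.sum_congr rfl (fun c _ => hterm c)]
    rw [Finset.sum_const, Finset.card_univ, hk]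
    rw [mul_smul, natCast_zsmul]
    simp [Nat.card_eq_fintype_card]
  -- equivariance of psi
  have hpsi_equiv : ∀ (q : ↥Q) (m : M), psi (cAct ↑q m) = cAct ↑q (psi m) := by
    intro q m
    have hcommute : ∀ c : F, glift ((QuotientGroup.mk q) * c) = (cAct ↑q).comp
        ((glift c).comp (cAct ((↑q : P))⁻¹)) := by
      intro c
      induction c using Quotient.inductionOn with
      | h r =>
        have : (QuotientGroup.mk q) * (QuotientGroup.mk r) = (QuotientGroup.mk (q * r) : F) := rfl
        rw [this, hglift_mk, hglift_mk]
        refine AddMonoidHom.ext fun m' => ?_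
        rw [hg_apply]
        show cAct ↑(q*r) (p (cAct ((↑(q*r) : P))⁻¹ m')) = cAct ↑q (g r (cAct ((↑q : P))⁻¹ m'))
        rw [hg_apply]
        rw [show ((↑(q*r) : P))⁻¹ = ((↑r : P))⁻¹ * ((↑q : P))⁻¹ by push_cast; group]
        rw [← hc_mul ((↑r : P))⁻¹ ((↑q : P))⁻¹ m', hc_mul (↑q : P) (↑r : P)]
        push_cast
        rfl
    calc psi (cAct ↑q m) = ∑ c : F, glift ((QuotientGroup.mk q) * c) (cAct ↑q m) := by
          rw [hpsi_apply]
          exact (Fintype.sum_bijective (fun c => (QuotientGroup.mk q) * c)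
            (Group.mulLeft_bijective _) _ _ (fun c => rfl)).symm
      _ = ∑ c : F, cAct ↑q (glift c m) := by
          refine Finset.sum_congr rfl fun c _ => ?_
          rw [hcommute c]
          show cAct ↑q (glift c (cAct ((↑q:P))⁻¹ (cAct (↑q:P) m))) = _
          rw [show cAct ((↑q:P))⁻¹ (cAct (↑q:P) m) = m from by
            rw [hc_mul]; exact hc_id _ (by simp [B.one_mem]) m]
      _ = cAct ↑q (psi m) := by rw [hpsi_apply, map_sum]
  -- the subgroup N
  set N_B : Subgroup ↥B := AddSubgroup.toSubgroup' psi.ker with hN_B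
  have hNBmem : ∀ b : ↥B, b ∈ N_B ↔ psi (Additive.ofMul b) = 0 := fun b => Iff.rfl
  set N_P : Subgroup P := N_B.map B.subtype with hN_P
  have hNPmem : ∀ x : P, x ∈ N_P ↔ ∃ hx : x ∈ B, psi (Additive.ofMul (⟨x, hx⟩ : ↥B)) = 0 := by
    intro x
    constructor
    · rintro ⟨b, hb, rfl⟩
      exact ⟨b.2, (hNBmem b).mp hb⟩
    · rintro ⟨hx, hpsix⟩
      exact ⟨⟨x, hx⟩, (hNBmem _).mpr hpsix, rfl⟩
  have hNP_le_B : N_P ≤ B := Subgroup.map_subtype_le N_B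
  -- Q ∩ N_P is trivial
  have hQN : ∀ x : P, x ∈ Q → x ∈ N_P → x = 1 := by
    intro x hxQ hxN
    obtain ⟨hxB, hpsix⟩ := (hNPmem x).mp hxN
    have hmA : Additive.ofMul (⟨x, hxB⟩ : ↥B) ∈ A_M := by
      rw [hAmem]
      exact ⟨hxQ, hxB⟩
    have : k • Additive.ofMul (⟨x, hxB⟩ : ↥B) = 0 := by
      rw [← hpsiA_eq _ hmA, hpsix]
    have h0 : Additive.ofMul (⟨x, hxB⟩ : ↥B) = 0 := by
      rcases (smul_eq_zero.mp this) with h | h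
      · exact absurd h hkne
      · exact h
    have : (⟨x, hxB⟩ : ↥B) = 1 := h0
    exact congrArg Subtype.val this
  -- N_P is normalized by Q
  have hconjQ : ∀ q ∈ Q, ∀ x ∈ N_P, q * x * q⁻¹ ∈ N_P := by
    intro q hq x hx
    obtain ⟨hxB, hpsix⟩ := (hNPmem x).mp hx
    refine (hNPmem _).mpr ⟨hBn.conj_mem _ hxB q, ?_⟩
    have : Additive.ofMul (⟨q * x * q⁻¹, hBn.conj_mem _ hxB q⟩ : ↥B)
        = cAct q (Additive.ofMul (⟨x, hxB⟩ : ↥B)) := rfl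
    rw [this, hpsi_equiv ⟨q, hq⟩, hpsix, map_zero]
  -- N_P is normalized by B
  have hconjB : ∀ y ∈ B, ∀ x ∈ N_P, y * x * y⁻¹ ∈ N_P := by
    intro y hy x hx
    have hxB : x ∈ B := hNP_le_B hx
    have hcxy : y * x = x * y := by
      have := hcomm ⟨y, hy⟩ ⟨x, hxB⟩
      have h3 := congrArg (Subtype.val) this
      push_cast at h3
      exact h3
    rw [hcxy, show x * y * y⁻¹ = x by group]
    exact hx
  -- the subgroup K = Q ⊔ N_P and the decomposition of its elements
  set K : Subgroup P := Q ⊔ N_P with hK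
  have hQK : Q ≤ K := le_sup_left
  have hNK : N_P ≤ K := le_sup_right
  set S : Subgroup P :=
    { carrier := {x | ∃ q ∈ Q, ∃ nn ∈ N_P, x = q * nn}
      one_mem' := ⟨1, Q.one_mem, 1, N_P.one_mem, by group⟩
      mul_mem' := by
        rintro x y ⟨q, hq, nn, hnn, rfl⟩ ⟨q', hq', nn', hnn', rfl⟩
        refine ⟨q * q', Q.mul_mem hq hq', (q'⁻¹ * nn * q') * nn', ?_, by group⟩
        exact N_P.mul_mem (by simpa using hconjQ q'⁻¹ (Q.inv_mem hq') nn hnn) hnn'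
      inv_mem' := by
        rintro x ⟨q, hq, nn, hnn, rfl⟩
        refine ⟨q⁻¹, Q.inv_mem hq, q * nn⁻¹ * q⁻¹, hconjQ q hq nn⁻¹ (N_P.inv_mem hnn), by group⟩ } with hS
  have hKS : K ≤ S := sup_le (fun q hq => ⟨q, hq, 1, N_P.one_mem, by group⟩)
    (fun nn hnn => ⟨1, Q.one_mem, nn, hnn, by group⟩)
  have hKdecomp : ∀ x : P, x ∈ K → ∃ q ∈ Q, ∃ nn ∈ N_P, x = q * nn := fun x hx => hKS hx
  -- N' is normal in K
  set N' : Subgroup ↥K := N_P.subgroupOf K with hN'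
  haveI hN'normal : N'.Normal := by
    constructor
    intro n hn kk
    rw [Subgroup.mem_subgroupOf] at hn ⊢
    obtain ⟨q, hq, m, hm, hkk⟩ := hKdecomp ↑kk kk.2
    have hmB : (m : P) ∈ B := hNP_le_B hm
    push_cast
    rw [hkk]
    have h1 : q * m * ↑n * (q * m)⁻¹ = q * (m * ↑n * m⁻¹) * q⁻¹ := by group
    rw [h1]
    exact hconjQ q hq _ (hconjB m hmB _ hn)
  -- the retraction
  set j : ↥Q →* ↥K ⧸ N' := (QuotientGroup.mk' N').comp (Subgroup.inclusion hQK) with hj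
  have hjinj : Function.Injective j := by
    rw [← MonoidHom.ker_eq_bot_iff, Subgroup.eq_bot_iff_forall]
    intro q hq
    rw [MonoidHom.mem_ker] at hq
    have h1 : Subgroup.inclusion hQK q ∈ N' := (QuotientGroup.eq_one_iff _).mp hq
    rw [Subgroup.mem_subgroupOf] at h1
    have h2 : (q : P) ∈ N_P := h1
    exact Subtype.ext (hQN _ q.2 h2)
  have hjsurj : Function.Surjective j := by
    intro z
    induction z using Quotient.inductionOn with
    | h x =>
      obtain ⟨q, hq, nn, hnn, hx⟩ := hKdecomp ↑x x.2
      refine ⟨⟨q, hq⟩, ?_⟩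
      show QuotientGroup.mk (Subgroup.inclusion hQK ⟨q, hq⟩) = Quotient.mk _ x
      have : (Quotient.mk _ x : ↥K ⧸ N') = QuotientGroup.mk x := rfl
      rw [this, QuotientGroup.eq]
      rw [Subgroup.mem_subgroupOf]
      have hval : ((Subgroup.inclusion hQK ⟨q, hq⟩)⁻¹ * x : ↥K) = (⟨q⁻¹ * ↑x, K.mul_mem (K.inv_mem (hQK hq)) x.2⟩ : ↥K) := rfl
      rw [hval]
      show q⁻¹ * ↑x ∈ N_P
      rw [hx, show q⁻¹ * (q * nn) = nn by group]
      exact hnn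
  set e : ↥Q ≃* (↥K ⧸ N') := MulEquiv.ofBijective j ⟨hjinj, hjsurj⟩ with he
  set ρ : ↥K →* P := Q.subtype.comp (e.symm.toMonoidHom.comp (QuotientGroup.mk' N')) with hρ
  -- K has finite index
  have hbk : ∀ b : ↥B, ((b ^ (k : ℤ) : ↥B) : P) ∈ K := by
    intro b
    set m : M := Additive.ofMul b with hm'
    have hker : k • m - psi m ∈ psi.ker := by
      rw [AddMonoidHom.mem_ker, map_sub, map_zsmul, hpsiA_eq (psi m) (hpsiA m), sub_self]
    have hsplit : b ^ (k : ℤ) = Additive.toMul (psi m) * Additive.toMul (k • m - psi m) := by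
      rw [← toMul_add]
      have : psi m + (k • m - psi m) = k • m := by abel
      rw [this, toMul_zsmul]
      rfl
    rw [hsplit]
    push_cast
    refine K.mul_mem (hQK ?_) (hNK ?_)
    · exact ((hAmem (psi m)).mp (hpsiA m)).1
    · exact ⟨Additive.toMul (k • m - psi m), hker, rfl⟩
  have hkabs : k.natAbs ≠ 0 := Int.natAbs_ne_zero.mpr hkne
  have hbk' : ∀ b : ↥B, ((b ^ k.natAbs : ↥B) : P) ∈ K := by
    intro b
    rcases Int.natAbs_eq k with h | h
    · have : b ^ k.natAbs = b ^ (k : ℤ) := by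
        rw [← zpow_natCast, ← h]
      rw [this]; exact hbk b
    · have : b ^ k.natAbs = (b⁻¹) ^ (k : ℤ) := by
        rw [← zpow_natCast, inv_zpow, ← zpow_neg]
        congr 1
        omega
      rw [this]; exact hbk b⁻¹
  set Rmap : Subgroup P := ((powMonoidHom k.natAbs : ↥B →* ↥B).range).map B.subtype with hRmap
  have hRK : Rmap ≤ K := by
    rintro x ⟨c, ⟨b, rfl⟩, rfl⟩
    exact hbk' b
  haveI hRfi : Rmap.FiniteIndex := by
    constructor
    have h1 : Rmap.relIndex B * B.index = Rmap.index :=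
      Subgroup.relIndex_mul_index (Subgroup.map_subtype_le _)
    have h2 : Rmap.relIndex B = ((powMonoidHom k.natAbs : ↥B →* ↥B).range).index := by
      unfold Rmap
      rw [Subgroup.relIndex, Subgroup.subgroupOf, Subgroup.comap_map_eq_self_of_injective]
      exact Subtype.coe_injective
    rw [← h1, h2]
    exact Nat.mul_ne_zero (finiteIndex_range_pow hfgB k.natAbs hkabs).index_ne_zero hBfi.index_ne_zero
  haveI hKfi : K.FiniteIndex := Subgroup.finiteIndex_of_le hRK
  refine ⟨K, hQK, hKfi, ρ, ?_, ?_⟩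
  · intro kk
    exact (e.symm (QuotientGroup.mk' N' kk)).2
  · intro h hh
    have h1 : e ⟨h, hh⟩ = QuotientGroup.mk' N' ⟨h, hQK hh⟩ := rfl
    have h2 : e.symm (QuotientGroup.mk' N' ⟨h, hQK hh⟩) = ⟨h, hh⟩ :=
      e.symm_apply_eq.mpr h1.symm
    show Q.subtype (e.symm (QuotientGroup.mk' N' ⟨h, hQK hh⟩)) = h
    rw [h2]
    rfl

/-- Corollary 4.3: every subgroup of a finitely generated virtually abelian group is a
virtual retract. -/
theorem virtualRetract_of_subgroup_of_fg_virtuallyAbelian {P : Type*} [Group P]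
    (hfg : Group.FG P) (hva : VirtuallyAbelian P) (Q : Subgroup P) :
    IsVirtualRetract Q := by
  obtain ⟨B₀, hB₀fi, hB₀c⟩ := hva
  haveI := hfg
  haveI := hB₀fi
  letI : CommGroup ↥B₀ := { (inferInstance : Group ↥B₀) with mul_comm := hB₀c }
  haveI hfgB₀ : Group.FG ↥B₀ := Subgroup.fg_of_index_ne_zero B₀
  obtain ⟨e, he0, hekills⟩ := exists_exponent_of_fg_commGroup ↥B₀ hfgB₀
  set B₂ : Subgroup P := ((powMonoidHom e : ↥B₀ →* ↥B₀).range).map B₀.subtype with hB₂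
  have hB₂B₀ : B₂ ≤ B₀ := Subgroup.map_subtype_le _
  haveI hB₂fi : B₂.FiniteIndex := by
    constructor
    have h1 : B₂.relIndex B₀ * B₀.index = B₂.index :=
      Subgroup.relIndex_mul_index hB₂B₀
    have h2 : B₂.relIndex B₀ = ((powMonoidHom e : ↥B₀ →* ↥B₀).range).index := by
      rw [hB₂, Subgroup.relIndex, Subgroup.subgroupOf, Subgroup.comap_map_eq_self_of_injective]
      exact Subtype.coe_injective
    rw [← h1, h2]
    exact Nat.mul_ne_zero (finiteIndex_range_pow hfgB₀ e he0).index_ne_zero hB₀fi.index_ne_zero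
  have hB₂tf : ∀ x ∈ B₂, ∀ n : ℕ, n ≠ 0 → x ^ n = 1 → x = 1 := by
    rintro x ⟨c, ⟨b, rfl⟩, rfl⟩ n hn hxn
    have h1 : ((b ^ e) ^ n : ↥B₀) = 1 := by
      apply Subtype.ext
      rw [show ((((b ^ e) ^ n : ↥B₀)) : P) = (B₀.subtype ((powMonoidHom e) b)) ^ n from by
        push_cast; rfl, hxn]
      rfl
    have h2 : b ^ (e * n) = 1 := by rwa [pow_mul]
    have h3 : IsOfFinOrder b :=
      isOfFinOrder_iff_pow_eq_one.mpr ⟨e * n, Nat.pos_of_ne_zero (Nat.mul_ne_zero he0 hn), h2⟩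
    have h4 : b ^ e = 1 := hekills b h3
    show ((powMonoidHom e b : ↥B₀) : P) = 1
    rw [show powMonoidHom e b = b ^ e from rfl, h4]
    rfl
  set B : Subgroup P := B₂.normalCore with hB
  haveI : B.Normal := Subgroup.normalCore_normal B₂
  haveI hBfi : B.FiniteIndex := Subgroup.finiteIndex_normalCore B₂
  have hBle : B ≤ B₀ := B₂.normalCore_le.trans hB₂B₀
  have hcommB : ∀ x y : ↥B, x * y = y * x := by
    intro x y
    have := hB₀c ⟨↑x, hBle x.2⟩ ⟨↑y, hBle y.2⟩
    apply Subtype.ext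
    have h3 := congrArg Subtype.val this
    push_cast at h3 ⊢
    exact h3
  haveI hfgBB : Group.FG ↥B := Subgroup.fg_of_index_ne_zero B
  have htf : ∀ (b : ↥B) (n : ℤ), n ≠ 0 → b ^ n = 1 → b = 1 := by
    intro b n hn hbn
    have hxB₂ : (b : P) ∈ B₂ := B₂.normalCore_le b.2
    have h1 : ((b : P)) ^ (n : ℤ) = 1 := by
      have := congrArg Subtype.val hbn
      push_cast at this
      exact_mod_cast this
    have h2 : ((b : P)) ^ n.natAbs = 1 := by
      rcases Int.natAbs_eq n with h | h
      · rw [← zpow_natCast, ← h, h1]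
      · rw [← zpow_natCast, show ((n.natAbs : ℤ)) = -n by omega, zpow_neg, h1, inv_one]
    have := hB₂tf _ hxB₂ n.natAbs (Int.natAbs_ne_zero.mpr hn) h2
    exact Subtype.ext this
  exact main_retract B hBfi hcommB hfgBB htf Q
end

section
/- If K is a finite-index subgroup of a group G and K has property (VRC), then G also has property (VRC). -/
open Subgroup

/-- If there is a finite-index normal subgroup meeting `zpowers g` trivially, then
`zpowers g` is a virtual retract. -/
lemma vr_of_normal_avoid {G : Type*} [Group G] (g : G) (N : Subgroup G) [N.Normal]
    (hNfin : N.FiniteIndex) (htriv : ∀ x ∈ N, x ∈ Subgroup.zpowers g → x = 1) :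
    ∃ (P : Subgroup G) (hHK : Subgroup.zpowers g ≤ P), P.FiniteIndex ∧
      ∃ ρ : ↥P →* G, (∀ k : ↥P, ρ k ∈ Subgroup.zpowers g) ∧
        ∀ (h : G) (hh : h ∈ Subgroup.zpowers g), ρ ⟨h, hHK hh⟩ = h := by
  classical
  set π := QuotientGroup.mk' N with hπ
  set P : Subgroup G := (Subgroup.zpowers (π g)).comap π with hP
  have hle : Subgroup.zpowers g ≤ P := by
    intro x hx
    obtain ⟨k, rfl⟩ := Subgroup.mem_zpowers_iff.mp hx
    simp only [hP, Subgroup.mem_comap, map_zpow]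
    exact Subgroup.zpow_mem _ (Subgroup.mem_zpowers _) k
  have hNP : N ≤ P := by
    intro x hx
    simp only [hP, Subgroup.mem_comap]
    have : π x = 1 := by
      rwa [hπ, QuotientGroup.mk'_apply, QuotientGroup.eq_one_iff]
    rw [this]; exact one_mem _
  have hPfin : P.FiniteIndex := by
    constructor
    intro h0
    exact hNfin.index_ne_zero (Nat.eq_zero_of_zero_dvd (h0 ▸ Subgroup.index_dvd_of_le hNP))
  -- the restriction of π to zpowers g, as a map to zpowers (π g)
  have hmem₁ : ∀ x : ↥(Subgroup.zpowers g), π ↑x ∈ Subgroup.zpowers (π g) := by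
    rintro ⟨x, hx⟩
    obtain ⟨k, rfl⟩ := Subgroup.mem_zpowers_iff.mp hx
    simp only [map_zpow]
    exact Subgroup.zpow_mem _ (Subgroup.mem_zpowers _) k
  set π₁ : ↥(Subgroup.zpowers g) →* ↥(Subgroup.zpowers (π g)) :=
    (π.domRestrict (Subgroup.zpowers g)).codRestrict _ hmem₁ with hπ₁
  have hbij : Function.Bijective π₁ := by
    constructor
    · rintro ⟨x, hx⟩ ⟨y, hy⟩ hxy
      have h1 : π x = π y := congrArg Subtype.val hxy
      have h2 : x * y⁻¹ ∈ N := by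
        rw [← QuotientGroup.ker_mk' N, ← hπ]
        simp only [MonoidHom.mem_ker, map_mul, map_inv, h1, mul_inv_cancel]
      have h3 : x * y⁻¹ = 1 := htriv _ h2 (mul_mem hx (inv_mem hy))
      exact Subtype.ext (mul_inv_eq_one.mp h3)
    · rintro ⟨z, hz⟩
      obtain ⟨k, hk⟩ := Subgroup.mem_zpowers_iff.mp hz
      refine ⟨⟨g ^ k, Subgroup.zpow_mem _ (Subgroup.mem_zpowers _) k⟩, ?_⟩
      apply Subtype.ext
      show π (g ^ k) = z
      rw [map_zpow]
      exact hk
  set e := MulEquiv.ofBijective π₁ hbij with he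
  have hmem₂ : ∀ p : ↥P, π ↑p ∈ Subgroup.zpowers (π g) := fun p => p.2
  set π₂ : ↥P →* ↥(Subgroup.zpowers (π g)) := (π.domRestrict P).codRestrict _ hmem₂ with hπ₂
  refine ⟨P, hle, hPfin, (Subgroup.zpowers g).subtype.comp
    (e.symm.toMonoidHom.comp π₂), fun k => ?_, fun h hh => ?_⟩
  · exact SetLike.coe_mem _
  · have h1 : π₂ ⟨h, hle hh⟩ = e ⟨h, hh⟩ := by
      apply Subtype.ext
      rfl
    simp only [MonoidHom.comp_apply, h1, MulEquiv.toMonoidHom_eq_coe, MonoidHom.coe_coe]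
    rw [MulEquiv.symm_apply_apply]
    rfl

lemma exists_avoid {G : Type*} [Group G] (K : Subgroup G) (hK : K.FiniteIndex)
    (hVRC : VRC ↥K) (x : G) (hx1 : x ≠ 1) (hxfin : IsOfFinOrder x) :
    ∃ D : Subgroup G, D.FiniteIndex ∧ x ∉ D := by
  classical
  by_cases hx : x ∈ K
  · set xK : ↥K := ⟨x, hx⟩ with hxK
    obtain ⟨L', hle', hL'fin, ρ₀, hρrange, hρid⟩ := hVRC xK
    have hxKfin : IsOfFinOrder xK := Submonoid.isOfFinOrder_coe.mp hxfin
    have hzfin : (Subgroup.zpowers xK : Set ↥K).Finite := hxKfin.finite_zpowers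
    have hrangefin : (Set.range ρ₀).Finite :=
      hzfin.subset (by rintro - ⟨y, rfl⟩; exact hρrange y)
    have hkerfin : ρ₀.ker.FiniteIndex := by
      constructor
      rw [Subgroup.index_ker]
      have : (ρ₀.range : Set ↥K).Finite := by
        simpa [MonoidHom.coe_range] using hrangefin
      haveI : Finite ↥ρ₀.range := this.to_subtype
      exact Nat.card_pos.ne'
    refine ⟨(ρ₀.ker.map L'.subtype).map K.subtype, ?_, ?_⟩
    · constructor
      rw [Subgroup.index_map_subtype, Subgroup.index_map_subtype]
      exact Nat.mul_ne_zero (Nat.mul_ne_zero hkerfin.index_ne_zero hL'fin.index_ne_zero)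
        hK.index_ne_zero
    · intro hmem
      rw [Subgroup.mem_map] at hmem
      obtain ⟨y, hy, hyx⟩ := hmem
      rw [Subgroup.mem_map] at hy
      obtain ⟨z, hz, hzy⟩ := hy
      have hzx : ((z : ↥K) : G) = x := by rw [← hyx, ← hzy]; rfl
      have hz' : (z : ↥K) = xK := Subtype.ext hzx
      have hmem' : xK ∈ L' := hz' ▸ z.2
      have hzeq : z = ⟨xK, hmem'⟩ := Subtype.ext hz'
      have h1 : ρ₀ z = 1 := hz
      have h2 : ρ₀ ⟨xK, hle' (Subgroup.mem_zpowers xK)⟩ = xK :=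
        hρid xK (Subgroup.mem_zpowers xK)
      rw [hzeq] at h1
      have : xK = 1 := by rw [← h2]; exact h1
      exact hx1 (by simpa [hxK, Subtype.ext_iff] using this)
  · exact ⟨K, hK, hx⟩

lemma vr_infinite_case {G : Type*} [Group G] (K : Subgroup G)
    (hK : K.FiniteIndex) (hVRC : VRC ↥K) (g : G) (hford : ¬ IsOfFinOrder g) :
    IsVirtualRetract (Subgroup.zpowers g) := by
  classical
  haveI := hK
  have hginj : Function.Injective fun k : ℤ => g ^ k :=
    injective_zpow_iff_not_isOfFinOrder.mpr hford
  -- n and g^n ∈ K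
  set C := K.normalCore with hC
  haveI : C.FiniteIndex := Subgroup.finiteIndex_normalCore K
  set n := C.index with hn
  have hn0 : n ≠ 0 := Subgroup.FiniteIndex.index_ne_zero
  have hgnK : g ^ n ∈ K := K.normalCore_le (C.pow_index_mem g)
  set gK : ↥K := ⟨g ^ n, hgnK⟩ with hgK
  obtain ⟨L', hle', hL'fin, ρ₀, hρrange, hρid⟩ := hVRC gK
  set L := L'.map K.subtype with hL
  haveI hLfin : L.FiniteIndex := by
    constructor
    rw [hL, Subgroup.index_map_subtype]
    exact Nat.mul_ne_zero hL'fin.index_ne_zero hK.index_ne_zero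
  set e : ↥L' ≃* ↥L := Subgroup.equivMapOfInjective L' K.subtype K.subtype_injective with he
  set φ' : ↥L →* G := K.subtype.comp (ρ₀.comp e.symm.toMonoidHom) with hφ'
  -- coercion fact about e.symm
  have hesymm : ∀ y : ↥L, ((e.symm y : ↥K) : G) = (y : G) := by
    intro y
    have := Subgroup.coe_equivMapOfInjective_apply L' K.subtype K.subtype_injective (e.symm y)
    rw [show Subgroup.equivMapOfInjective L' K.subtype K.subtype_injective (e.symm y)
        = e (e.symm y) from rfl, MulEquiv.apply_symm_apply] at this
    exact this.symm
  have hφ'zpow : ∀ y : ↥L, φ' y ∈ Subgroup.zpowers g := by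
    intro y
    obtain ⟨k, hk⟩ := Subgroup.mem_zpowers_iff.mp (hρrange (e.symm y))
    rw [hφ']
    simp only [MonoidHom.comp_apply, MulEquiv.toMonoidHom_eq_coe, MonoidHom.coe_coe]
    rw [← hk]
    refine Subgroup.mem_zpowers_iff.mpr ⟨n * k, ?_⟩
    rw [Subgroup.coe_subtype]
    push_cast [hgK]
    rw [← zpow_natCast g n, ← zpow_mul]
  have hgnL : ∀ k : ℤ, (g ^ n) ^ k ∈ L := by
    intro k
    have h1 : gK ^ k ∈ L' := hle' (Subgroup.mem_zpowers_iff.mpr ⟨k, rfl⟩)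
    have := Subgroup.mem_map_of_mem K.subtype h1
    rwa [map_zpow, Subgroup.coe_subtype] at this
  have hφ'gn : ∀ (k : ℤ) (h : (g ^ n) ^ k ∈ L), φ' ⟨(g ^ n) ^ k, h⟩ = (g ^ n) ^ k := by
    intro k h
    set y : ↥L := ⟨(g ^ n) ^ k, h⟩ with hy
    have h1 : ((e.symm y : ↥K) : G) = (g ^ n) ^ k := hesymm y
    have h2 : (e.symm y : ↥K) = gK ^ k := by
      apply Subtype.ext
      rw [h1, hgK]
      norm_cast
    have h3 : gK ^ k ∈ L' := hle' (Subgroup.mem_zpowers_iff.mpr ⟨k, rfl⟩)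
    have h4 : e.symm y = ⟨gK ^ k, h3⟩ := Subtype.ext h2
    rw [hφ']
    simp only [MonoidHom.comp_apply, MulEquiv.toMonoidHom_eq_coe, MonoidHom.coe_coe]
    rw [h4]
    have h5 : ρ₀ ⟨gK ^ k, hle' (Subgroup.mem_zpowers_iff.mpr ⟨k, rfl⟩)⟩ = gK ^ k :=
      hρid (gK ^ k) (Subgroup.mem_zpowers_iff.mpr ⟨k, rfl⟩)
    rw [show (⟨gK ^ k, h3⟩ : ↥L') = ⟨gK ^ k, hle' (Subgroup.mem_zpowers_iff.mpr ⟨k, rfl⟩)⟩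
      from rfl, h5, Subgroup.coe_subtype, hgK]
    norm_cast
  -- discrete logarithm
  set lg : G → ℤ := fun x =>
    if h : x ∈ Subgroup.zpowers g then (Subgroup.mem_zpowers_iff.mp h).choose else 0 with hlg
  have hlg_spec : ∀ x (h : x ∈ Subgroup.zpowers g), g ^ lg x = x := by
    intro x h
    rw [hlg]
    simp only [dif_pos h]
    exact (Subgroup.mem_zpowers_iff.mp h).choose_spec
  have hlg_zpow : ∀ k : ℤ, lg (g ^ k) = k := by
    intro k
    apply hginj
    exact hlg_spec _ (Subgroup.mem_zpowers_iff.mpr ⟨k, rfl⟩)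
  have hlg_mul : ∀ x y, x ∈ Subgroup.zpowers g → y ∈ Subgroup.zpowers g →
      lg (x * y) = lg x + lg y := by
    intro x y hx hy
    apply hginj
    show g ^ lg (x * y) = g ^ (lg x + lg y)
    rw [hlg_spec _ (mul_mem hx hy), zpow_add, hlg_spec _ hx, hlg_spec _ hy]
  -- φf : the logarithm of the retraction
  set φf : G → ℤ := fun y => if h : y ∈ L then lg (φ' ⟨y, h⟩) else 0 with hφf
  have hφf_mul : ∀ y z, y ∈ L → z ∈ L → φf (y * z) = φf y + φf z := by
    intro y z hy hz
    rw [hφf]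
    simp only [dif_pos hy, dif_pos hz, dif_pos (mul_mem hy hz)]
    have : (⟨y * z, mul_mem hy hz⟩ : ↥L) = ⟨y, hy⟩ * ⟨z, hz⟩ := rfl
    rw [this, map_mul]
    exact hlg_mul _ _ (hφ'zpow _) (hφ'zpow _)
  have hφf_gn : ∀ k : ℤ, φf ((g ^ n) ^ k) = (n : ℤ) * k := by
    intro k
    rw [hφf]
    simp only [dif_pos (hgnL k)]
    rw [hφ'gn k (hgnL k), ← zpow_natCast g n, ← zpow_mul]
    exact hlg_zpow _
  have hφf_pow : ∀ (y : G) (hy : y ∈ L) (t : ℕ), φf (y ^ t) = (t : ℤ) * φf y := by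
    intro y hy t
    induction t with
    | zero =>
      simp only [pow_zero, Nat.cast_zero, zero_mul]
      have h1 : φf ((g ^ n) ^ (0 : ℤ)) = 0 := by rw [hφf_gn]; ring
      rwa [zpow_zero] at h1
    | succ t ih =>
      rw [pow_succ, hφf_mul _ _ (pow_mem hy t) hy, ih]
      push_cast
      ring
  have hφf_one : φf 1 = 0 := by
    have h1 : φf ((g ^ n) ^ (0 : ℤ)) = 0 := by rw [hφf_gn]; ring
    rwa [zpow_zero] at h1
  -- M : finite-index normal subgroup inside L
  set M := L.normalCore with hM
  haveI : M.FiniteIndex := Subgroup.finiteIndex_normalCore L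
  have hML : M ≤ L := Subgroup.normalCore_le L
  have hMnormal : M.Normal := Subgroup.normalCore_normal L
  have hconjM : ∀ (x : G), x ∈ M → ∀ c : G, c * x * c⁻¹ ∈ M := fun x hx c =>
    hMnormal.conj_mem x hx c
  have hconjM' : ∀ (x : G), x ∈ M → ∀ l : ℤ, g ^ (-l) * x * g ^ l ∈ M := by
    intro x hx l
    have := hconjM x hx (g ^ (-l))
    rwa [show (g ^ (-l))⁻¹ = g ^ l by rw [← zpow_neg, neg_neg]] at this
  have hφf_gj : ∀ j : ℤ, g ^ j ∈ L → φf (g ^ j) = j := by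
    intro j hj
    have h1 : φf ((g ^ j) ^ n) = (n : ℤ) * φf (g ^ j) := hφf_pow (g ^ j) hj n
    have h2 : ((g ^ j) ^ (n : ℕ) : G) = (g ^ n) ^ j := by
      rw [← zpow_natCast (g ^ j) n, ← zpow_mul, mul_comm, zpow_mul, zpow_natCast]
    rw [h2, hφf_gn] at h1
    have hn0' : (n : ℤ) ≠ 0 := Int.natCast_ne_zero.mpr hn0
    exact (mul_left_cancel₀ hn0' h1.symm)
  -- ψ : averaged homomorphism on M
  set ψ : G → ℤ := fun x => ∑ i ∈ Finset.range n, φf (g ^ (-(i : ℤ)) * x * g ^ (i : ℤ))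
    with hψ
  have hψ_mul : ∀ x y, x ∈ M → y ∈ M → ψ (x * y) = ψ x + ψ y := by
    intro x y hx hy
    rw [hψ, ← Finset.sum_add_distrib]
    apply Finset.sum_congr rfl
    intro i _
    have h1 : g ^ (-(i:ℤ)) * (x * y) * g ^ (i:ℤ)
        = (g ^ (-(i:ℤ)) * x * g ^ (i:ℤ)) * (g ^ (-(i:ℤ)) * y * g ^ (i:ℤ)) := by
      group
    rw [h1]
    exact hφf_mul _ _ (hML (hconjM' x hx i)) (hML (hconjM' y hy i))
  have hψ_one : ψ 1 = 0 := by
    rw [hψ]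
    apply Finset.sum_eq_zero
    intro i _
    rw [mul_one, ← zpow_add]
    simp [hφf_one]
  have hψ_gj : ∀ j : ℤ, g ^ j ∈ M → ψ (g ^ j) = (n : ℤ) * j := by
    intro j hj
    show ∑ i ∈ Finset.range n, φf (g ^ (-(i:ℤ)) * g ^ j * g ^ (i:ℤ)) = (n:ℤ) * j
    have h1 : ∀ i ∈ Finset.range n, φf (g ^ (-(i:ℤ)) * g ^ j * g ^ (i:ℤ)) = j := by
      intro i _
      rw [← zpow_add, ← zpow_add, show -(i:ℤ) + j + i = j by ring]
      exact hφf_gj j (hML hj)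
    rw [Finset.sum_congr rfl h1, Finset.sum_const, Finset.card_range, nsmul_eq_mul]
  -- conjugation invariance of ψ
  have hψ_conj1 : ∀ x, x ∈ M → ψ (g⁻¹ * x * g) = ψ x := by
    intro x hx
    set F : ℕ → ℤ := fun i => φf (g ^ (-(i : ℤ)) * x * g ^ (i : ℤ)) with hF
    have hterm : ∀ i : ℕ, φf (g ^ (-(i:ℤ)) * (g⁻¹ * x * g) * g ^ (i:ℤ)) = F (i + 1) := by
      intro i
      rw [hF]
      have : g ^ (-(i:ℤ)) * (g⁻¹ * x * g) * g ^ (i:ℤ)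
          = g ^ (-((i:ℤ) + 1)) * x * g ^ ((i:ℤ) + 1) := by
        rw [show -((i:ℤ)+1) = -(i:ℤ) + -1 by ring, zpow_add, zpow_add]
        group
      rw [this]
      push_cast
      ring_nf
    have h0 : ψ (g⁻¹ * x * g) = ∑ i ∈ Finset.range n, F (i + 1) := by
      show (∑ i ∈ Finset.range n, φf (g ^ (-(i:ℤ)) * (g⁻¹ * x * g) * g ^ (i:ℤ))) = _
      exact Finset.sum_congr rfl fun i _ => hterm i
    have hFn : F n = F 0 := by
      rw [hF]
      simp only [Nat.cast_zero, neg_zero, zpow_zero, one_mul, mul_one]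
      have hx' : x ∈ L := hML hx
      have hgn1 : (g ^ (-(n:ℤ))) ∈ L := by
        have := hgnL (-1)
        rwa [zpow_neg, zpow_one, ← zpow_natCast g n, ← zpow_neg] at this
      have hgn2 : (g ^ ((n:ℤ))) ∈ L := by
        have := hgnL 1
        rwa [zpow_one, ← zpow_natCast g n] at this
      rw [hφf_mul _ _ (mul_mem hgn1 hx') hgn2, hφf_mul _ _ hgn1 hx']
      have e1 : φf (g ^ (-(n:ℤ))) = -(n:ℤ) := hφf_gj _ hgn1
      have e2 : φf (g ^ ((n:ℤ))) = (n:ℤ) := hφf_gj _ hgn2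
      rw [e1, e2]
      ring
    have hsum : ∑ i ∈ Finset.range n, F (i + 1) = ∑ i ∈ Finset.range n, F i := by
      have h1 : ∑ i ∈ Finset.range (n + 1), F i
          = (∑ i ∈ Finset.range n, F (i + 1)) + F 0 := Finset.sum_range_succ' F n
      have h2 : ∑ i ∈ Finset.range (n + 1), F i
          = (∑ i ∈ Finset.range n, F i) + F n := Finset.sum_range_succ F n
      omega
    rw [h0, hsum]
  have hψ_conj1' : ∀ x, x ∈ M → ψ (g * x * g⁻¹) = ψ x := by
    intro x hx
    have h1 : g * x * g⁻¹ ∈ M := hconjM x hx g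
    have := hψ_conj1 _ h1
    rw [show g⁻¹ * (g * x * g⁻¹) * g = x by group] at this
    exact this.symm
  have hψ_conj : ∀ (l : ℤ) (x : G), x ∈ M → ψ (g ^ (-l) * x * g ^ l) = ψ x := by
    intro l
    induction l using Int.induction_on with
    | zero => intro x hx; simp
    | succ i ih =>
      intro x hx
      have hdec : g ^ (-((i:ℤ)+1)) * x * g ^ ((i:ℤ)+1)
          = g⁻¹ * (g ^ (-(i:ℤ)) * x * g ^ (i:ℤ)) * g := by
        rw [show -((i:ℤ)+1) = -(i:ℤ) + -1 by ring, zpow_add, zpow_add]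
        group
      rw [hdec, hψ_conj1 _ (hconjM' x hx i), ih x hx]
    | pred i ih =>
      intro x hx
      have hdec : g ^ (-(-(i:ℤ)-1)) * x * g ^ (-(i:ℤ)-1)
          = g * (g ^ (-(-(i:ℤ))) * x * g ^ (-(i:ℤ))) * g⁻¹ := by
        rw [show (-(i:ℤ)-1) = -(i:ℤ) + -1 by ring, show -(-(i:ℤ) + -1) = -(-(i:ℤ)) + 1 by ring,
          zpow_add, zpow_add]
        group
      rw [hdec, hψ_conj1' _ (hconjM' x hx (-(i:ℤ))), ih x hx]
  -- Q = <g> M as a subgroup via explicit decompositions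
  set Qc : Set G := {q | ∃ (k : ℤ) (x : G), x ∈ M ∧ q = g ^ k * x} with hQc
  have hQone : (1 : G) ∈ Qc := ⟨0, 1, one_mem M, by simp⟩
  have hQmul : ∀ {a b : G}, a ∈ Qc → b ∈ Qc → a * b ∈ Qc := by
    rintro a b ⟨k, x, hx, rfl⟩ ⟨l, y, hy, rfl⟩
    refine ⟨k + l, (g ^ (-l) * x * g ^ l) * y, mul_mem (hconjM' x hx l) hy, ?_⟩
    rw [zpow_add]
    group
  have hQinv : ∀ {a : G}, a ∈ Qc → a⁻¹ ∈ Qc := by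
    rintro a ⟨k, x, hx, rfl⟩
    refine ⟨-k, g ^ k * x⁻¹ * g ^ (-k), ?_, ?_⟩
    · have := hconjM' x⁻¹ (inv_mem hx) (-k)
      rwa [neg_neg] at this
    · group
  set Q : Subgroup G :=
    { carrier := Qc
      one_mem' := hQone
      mul_mem' := hQmul
      inv_mem' := hQinv } with hQ
  have hMQ : M ≤ Q := fun x hx => ⟨0, x, hx, by simp⟩
  have hQfin : Q.FiniteIndex := by
    constructor
    intro h0
    exact (inferInstance : M.FiniteIndex).index_ne_zero
      (Nat.eq_zero_of_zero_dvd (h0 ▸ Subgroup.index_dvd_of_le hMQ))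
  -- Φ : extension of ψ to Q
  set Φ : G → ℤ := fun q =>
    if h : ∃ (k : ℤ) (x : G), x ∈ M ∧ q = g ^ k * x then
      (n : ℤ) * h.choose + ψ h.choose_spec.choose
    else 0 with hΦ
  have hΦ_eq : ∀ (q : G) (k : ℤ) (x : G), x ∈ M → q = g ^ k * x →
      Φ q = (n : ℤ) * k + ψ x := by
    intro q k x hx hq
    have h : ∃ (k : ℤ) (x : G), x ∈ M ∧ q = g ^ k * x := ⟨k, x, hx, hq⟩
    rw [hΦ]
    simp only [dif_pos h]
    set k₀ := h.choose with hk₀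
    set x₀ := h.choose_spec.choose with hx₀
    obtain ⟨hx₀M, hq₀⟩ := h.choose_spec.choose_spec
    -- g ^ k * x = g ^ k₀ * x₀  (both equal q)
    have hj : g ^ (k₀ - k) * x₀ = x := by
      have h1 : g ^ k * x = g ^ k₀ * x₀ := by rw [← hq, ← hq₀]
      have h2 : x = g ^ (-k) * (g ^ k₀ * x₀) := by
        rw [← h1, ← mul_assoc, ← zpow_add]
        simp
      rw [h2, ← mul_assoc, ← zpow_add, show -k + k₀ = k₀ - k by ring]
    have hjM : g ^ (k₀ - k) ∈ M := by
      have : g ^ (k₀ - k) = x * x₀⁻¹ := by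
        rw [← hj]
        group
      rw [this]
      exact mul_mem hx (inv_mem hx₀M)
    have h3 : ψ x = (n : ℤ) * (k₀ - k) + ψ x₀ := by
      rw [← hj, hψ_mul _ _ hjM hx₀M, hψ_gj _ hjM]
    rw [h3]
    ring
  have hΦ_mul : ∀ q r : G, q ∈ Q → r ∈ Q → Φ (q * r) = Φ q + Φ r := by
    rintro q r ⟨k, x, hx, rfl⟩ ⟨l, y, hy, rfl⟩
    have hqr : (g ^ k * x) * (g ^ l * y) = g ^ (k + l) * ((g ^ (-l) * x * g ^ l) * y) := by
      rw [zpow_add]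
      group
    rw [hΦ_eq _ _ _ hx rfl, hΦ_eq _ _ _ hy rfl,
      hΦ_eq _ (k + l) _ (mul_mem (hconjM' x hx l) hy) hqr,
      hψ_mul _ _ (hconjM' x hx l) hy, hψ_conj l x hx]
    ring
  have hΦ_g : ∀ k : ℤ, Φ (g ^ k) = (n : ℤ) * k := by
    intro k
    rw [hΦ_eq (g ^ k) k 1 (one_mem M) (by simp), hψ_one]
    ring
  have hΦ_one : Φ 1 = 0 := by
    have := hΦ_g 0
    simpa using this
  have hΦ_inv : ∀ q : G, q ∈ Q → Φ q⁻¹ = -Φ q := by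
    intro q hq
    have h1 : Φ (q * q⁻¹) = Φ q + Φ q⁻¹ := hΦ_mul q q⁻¹ hq (hQinv hq)
    rw [mul_inv_cancel, hΦ_one] at h1
    omega
  -- the subgroup P of elements of Q with Φ divisible by n
  set Pc : Set G := {q | q ∈ Q ∧ (n : ℤ) ∣ Φ q} with hPc
  set P : Subgroup G :=
    { carrier := Pc
      one_mem' := ⟨hQone, by rw [hΦ_one]; exact dvd_zero _⟩
      mul_mem' := by
        rintro a b ⟨haQ, ha⟩ ⟨hbQ, hb⟩
        exact ⟨hQmul haQ hbQ, by rw [hΦ_mul a b haQ hbQ]; exact dvd_add ha hb⟩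
      inv_mem' := by
        rintro a ⟨haQ, ha⟩
        exact ⟨hQinv haQ, by rw [hΦ_inv a haQ]; exact dvd_neg.mpr ha⟩ } with hP
  have hgP : Subgroup.zpowers g ≤ P := by
    intro x hx
    obtain ⟨k, rfl⟩ := Subgroup.mem_zpowers_iff.mp hx
    exact ⟨⟨k, 1, one_mem M, by simp⟩, by rw [hΦ_g]; exact Dvd.intro k rfl⟩
  have hPQ : P ≤ Q := fun x hx => hx.1
  -- finite index of P
  haveI : NeZero n := ⟨hn0⟩
  set f : ↥Q →* Multiplicative (ZMod n) :=
    { toFun := fun q => Multiplicative.ofAdd ((Φ (q : G) : ZMod n))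
      map_one' := by
        simp only [OneMemClass.coe_one, hΦ_one, Int.cast_zero, ofAdd_zero]
      map_mul' := by
        intro a b
        have : Φ ((a : G) * b) = Φ a + Φ b := hΦ_mul _ _ a.2 b.2
        simp only [Subgroup.coe_mul, this, Int.cast_add, ofAdd_add] } with hf
  have hker : P.subgroupOf Q = f.ker := by
    ext q
    simp only [Subgroup.mem_subgroupOf, MonoidHom.mem_ker]
    constructor
    · rintro ⟨-, hdvd⟩
      show Multiplicative.ofAdd ((Φ (q : G) : ZMod n)) = 1
      rw [(ZMod.intCast_zmod_eq_zero_iff_dvd _ _).mpr (by exact_mod_cast hdvd)]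
      rfl
    · intro h
      refine ⟨q.2, ?_⟩
      have h1 : ((Φ (q : G) : ZMod n)) = 0 := by
        have := congrArg Multiplicative.toAdd h
        exact this
      exact_mod_cast (ZMod.intCast_zmod_eq_zero_iff_dvd _ _).mp h1
  have hPfin : P.FiniteIndex := by
    have hker_fin : (P.subgroupOf Q).FiniteIndex := by
      rw [hker]
      constructor
      rw [Subgroup.index_ker]
      haveI : Finite ↥f.range := Subtype.finite
      exact Nat.card_pos.ne'
    have hmapeq : (P.subgroupOf Q).map Q.subtype = P := by
      rw [Subgroup.subgroupOf_map_subtype, inf_eq_left.mpr hPQ]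
    constructor
    rw [← hmapeq, Subgroup.index_map_subtype]
    exact Nat.mul_ne_zero hker_fin.index_ne_zero hQfin.index_ne_zero
  -- the retraction
  have hn0' : (n : ℤ) ≠ 0 := Int.natCast_ne_zero.mpr hn0
  set ρ : ↥P →* G :=
    { toFun := fun q => g ^ (Φ (q : G) / (n : ℤ))
      map_one' := by
        simp only [OneMemClass.coe_one, hΦ_one]
        norm_num
      map_mul' := by
        rintro ⟨a, haQ, ka, hka⟩ ⟨b, hbQ, kb, hkb⟩
        show g ^ (Φ (a * b) / (n:ℤ)) = g ^ (Φ a / (n:ℤ)) * g ^ (Φ b / (n:ℤ))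
        rw [hΦ_mul a b haQ hbQ, hka, hkb, ← mul_add, Int.mul_ediv_cancel_left _ hn0',
          Int.mul_ediv_cancel_left _ hn0', Int.mul_ediv_cancel_left _ hn0', zpow_add] } with hρ
  refine ⟨P, hgP, hPfin, ρ, fun q => Subgroup.mem_zpowers_iff.mpr ⟨_, rfl⟩, ?_⟩
  intro h hh
  obtain ⟨k, rfl⟩ := Subgroup.mem_zpowers_iff.mp hh
  show g ^ (Φ (g ^ k) / (n:ℤ)) = g ^ k
  rw [hΦ_g, Int.mul_ediv_cancel_left _ hn0']

/-- Lemma 5.3(a): if a finite-index subgroup `K` of `G` has (VRC), then so does `G`. -/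
theorem VRC_of_finiteIndex_subgroup {G : Type*} [Group G] (K : Subgroup G)
    (hK : K.FiniteIndex) (hVRC : VRC ↥K) : VRC G := by
  intro g
  by_cases hfin : IsOfFinOrder g
  · classical
    have hSfin : (Subgroup.zpowers g : Set G).Finite := hfin.finite_zpowers
    haveI : Finite ↥(Subgroup.zpowers g) := hSfin.to_subtype
    set D : ↥(Subgroup.zpowers g) → Subgroup G := fun x =>
      if h : (x : G) = 1 then ⊤ else
        Classical.choose (exists_avoid K hK hVRC x h (hfin.of_mem_zpowers x.2)) with hD
    have hDfin : ∀ x, (D x).FiniteIndex := by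
      intro x
      simp only [hD]
      by_cases h : (x : G) = 1
      · rw [dif_pos h]; infer_instance
      · rw [dif_neg h]
        exact (Classical.choose_spec (exists_avoid K hK hVRC x h (hfin.of_mem_zpowers x.2))).1
    have hDavoid : ∀ x : ↥(Subgroup.zpowers g), (x : G) ≠ 1 → (x : G) ∉ D x := by
      intro x hx
      simp only [hD]
      rw [dif_neg hx]
      exact (Classical.choose_spec (exists_avoid K hK hVRC x hx (hfin.of_mem_zpowers x.2))).2
    haveI hIfin : (⨅ x, D x).FiniteIndex := Subgroup.finiteIndex_iInf hDfin
    set N := (⨅ x, D x).normalCore with hN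
    haveI : N.FiniteIndex := Subgroup.finiteIndex_normalCore _
    have htriv : ∀ x ∈ N, x ∈ Subgroup.zpowers g → x = 1 := by
      intro x hxN hxz
      by_contra hx1
      have h1 : x ∈ D ⟨x, hxz⟩ := by
        have := Subgroup.normalCore_le (⨅ x, D x) hxN
        exact (iInf_le D ⟨x, hxz⟩) this
      exact hDavoid ⟨x, hxz⟩ hx1 h1
    obtain ⟨P, hle, hPfin, ρ, h1, h2⟩ := vr_of_normal_avoid g N ‹N.FiniteIndex› htriv
    exact ⟨P, hle, hPfin, ρ, h1, h2⟩
  · exact vr_infinite_case K hK hVRC g hfin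
end

section
/- Let (X_i)_{i ∈ I} be a family of groups each of which has property (VRC). Then the restricted (finitary) direct product of the X_i — the subgroup of the direct product Π_{i ∈ I} X_i consisting of all elements whose set of non-identity coordinates is finite — has property (VRC). -/
/-- The restricted (finitary) direct product: the subgroup of `Π i, X i` consisting of all
elements with only finitely many non-identity coordinates. -/
def restrictedDirectProduct {I : Type*} (X : I → Type*) [∀ i, Group (X i)] :
    Subgroup (∀ i, X i) where
  carrier := {f | {i | f i ≠ 1}.Finite}
  one_mem' := by simp
  mul_mem' := by
    intro f g hf hg
    apply (hf.union hg).subset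
    intro i hi
    simp only [Set.mem_setOf_eq, Set.mem_union] at *
    by_contra hc
    push_neg at hc
    exact hi (by rw [Pi.mul_apply, hc.1, hc.2, one_mul])
  inv_mem' := by
    intro f hf
    simpa using hf

open Subgroup in
/-- Lemma 5.3(b): the restricted direct product of a family of groups with (VRC)
has (VRC). -/
theorem VRC_restrictedDirectProduct {I : Type*} (X : I → Type*) [∀ i, Group (X i)]
    (h : ∀ i, VRC (X i)) : VRC ↥(restrictedDirectProduct X) := by
  intro g
  classical
  have πsurj : ∀ i, Function.Surjective
      ((Pi.evalMonoidHom X i).comp (restrictedDirectProduct X).subtype) := by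
    intro i x
    refine ⟨⟨Pi.mulSingle i x, ?_⟩, ?_⟩
    · apply Set.Finite.subset (Set.finite_singleton i)
      intro j hj
      simp only [Set.mem_setOf_eq, Set.mem_singleton_iff] at *
      by_contra hji
      exact hj (Pi.mulSingle_eq_of_ne hji x)
    · simp [Pi.evalMonoidHom]
  by_cases hinf : ∃ i0, ¬ IsOfFinOrder ((g : ∀ i, X i) i0)
  · obtain ⟨i0, hi0⟩ := hinf
    obtain ⟨K0, hle, hfin, ρ0, hmem, hid⟩ := h i0 ((g : ∀ i, X i) i0)
    set a := ((g : ∀ i, X i) i0) with ha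
    have hainj : Function.Injective fun n : ℤ => a ^ n :=
      injective_zpow_iff_not_isOfFinOrder.2 hi0
    set π := (Pi.evalMonoidHom X i0).comp (restrictedDirectProduct X).subtype with hπ
    have hgK : g ∈ K0.comap π := by
      simp only [mem_comap]
      exact hle (mem_zpowers a)
    have hleK : zpowers g ≤ K0.comap π := zpowers_le.2 hgK
    have hval : ∀ k : ↥(K0.comap π), ρ0 ⟨π k.1, k.2⟩ ∈ zpowers a := fun k => hmem _
    have hex : ∀ k : ↥(K0.comap π), ∃ n : ℤ, a ^ n = ρ0 ⟨π k.1, k.2⟩ :=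
      fun k => mem_zpowers_iff.mp (hval k)
    choose e he using hex
    refine ⟨K0.comap π, hleK, ?_, MonoidHom.mk' (fun k => g ^ (e k)) ?_, ?_, ?_⟩
    · exact ⟨by rw [K0.index_comap_of_surjective (πsurj i0)]; exact hfin.index_ne_zero⟩
    · intro x y
      have hxy : e (x * y) = e x + e y := by
        apply hainj
        show a ^ e (x * y) = a ^ (e x + e y)
        rw [he, zpow_add, he, he, ← map_mul]
        congr 1
      simp [hxy, zpow_add]
    · intro k
      exact zpow_mem (mem_zpowers g) _
    · intro x hx
      obtain ⟨m, hm⟩ := mem_zpowers_iff.mp hx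
      subst hm
      have hem : e ⟨g ^ m, hleK hx⟩ = m := by
        apply hainj
        show a ^ e ⟨g ^ m, hleK hx⟩ = a ^ m
        rw [he]
        have h2 : (⟨π ((⟨g ^ m, hleK hx⟩ : ↥(K0.comap π)) : ↥(restrictedDirectProduct X)),
            (⟨g ^ m, hleK hx⟩ : ↥(K0.comap π)).2⟩ : ↥K0)
            = (⟨a, hle (mem_zpowers a)⟩ : ↥K0) ^ m := by
          apply Subtype.ext
          rw [SubgroupClass.coe_zpow]
          show π (g ^ m) = a ^ m
          rw [map_zpow]
          rfl
        rw [h2, map_zpow, hid a (mem_zpowers a)]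
      simp [hem]
  · push_neg at hinf
    choose K hle hfin ρ hmem hid using fun i => h i ((g : ∀ i, X i) i)
    have hSfin : {i | (g : ∀ i, X i) i ≠ 1}.Finite := g.2
    haveI : Finite ↥{i | (g : ∀ i, X i) i ≠ 1} := hSfin
    set π : ∀ i, ↥(restrictedDirectProduct X) →* X i := fun i =>
      (Pi.evalMonoidHom X i).comp (restrictedDirectProduct X).subtype with hπ
    set K0 : Subgroup ↥(restrictedDirectProduct X) :=
      ⨅ j : ↥{i | (g : ∀ i, X i) i ≠ 1}, (K j.1).comap (π j.1) with hK0
    have hK0fin : K0.FiniteIndex := finiteIndex_iInf fun j =>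
      ⟨by rw [(K j.1).index_comap_of_surjective (πsurj j.1)]; exact (hfin j.1).index_ne_zero⟩
    have hK0mem : ∀ f : ↥(restrictedDirectProduct X), f ∈ K0 ↔
        ∀ i, (g : ∀ i, X i) i ≠ 1 → (f : ∀ i, X i) i ∈ K i := by
      intro f
      rw [hK0]
      simp only [Subgroup.mem_iInf, Subtype.forall, mem_comap]
      rfl
    have hgK0 : g ∈ K0 := (hK0mem g).2 fun i _ => hle i (mem_zpowers _)
    -- the retraction of `K0` onto the product of the cyclic subgroups
    have hFfin : ∀ k : ↥K0, {i | (if hgi : (g : ∀ i, X i) i = 1 then 1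
        else ρ i ⟨(k.1 : ∀ i, X i) i, (hK0mem k.1).1 k.2 i hgi⟩) ≠ 1}.Finite := by
      intro k
      apply hSfin.subset
      intro i hi
      simp only [Set.mem_setOf_eq] at hi ⊢
      intro hgi
      exact hi (by rw [dif_pos hgi])
    set F : ↥K0 → ↥(restrictedDirectProduct X) := fun k => ⟨fun i => if hgi : (g : ∀ i, X i) i = 1 then 1
        else ρ i ⟨(k.1 : ∀ i, X i) i, (hK0mem k.1).1 k.2 i hgi⟩, hFfin k⟩ with hF
    have hFmul : ∀ x y : ↥K0, F (x * y) = F x * F y := by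
      intro x y
      apply Subtype.ext
      funext i
      show _ = (F x).1 i * (F y).1 i
      simp only [hF]
      by_cases hgi : (g : ∀ i, X i) i = 1
      · rw [dif_pos hgi, dif_pos hgi, dif_pos hgi, one_mul]
      · rw [dif_neg hgi, dif_neg hgi, dif_neg hgi, ← map_mul]
        congr 1
    set ψ : ↥K0 →* ↥(restrictedDirectProduct X) := MonoidHom.mk' F hFmul with hψ
    have hψg : ∀ (pf : g ∈ K0), ψ ⟨g, pf⟩ = g := by
      intro pf
      apply Subtype.ext
      funext i
      show (F ⟨g, pf⟩).1 i = _
      simp only [hF]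
      by_cases hgi : (g : ∀ i, X i) i = 1
      · rw [dif_pos hgi, hgi]
      · rw [dif_neg hgi]
        exact hid i ((g : ∀ i, X i) i) (mem_zpowers _)
    have hψzp : ∀ (k : ↥K0) (i : I), ((ψ k : ↥(restrictedDirectProduct X)) : ∀ i, X i) i ∈ zpowers ((g : ∀ i, X i) i) := by
      intro k i
      show (if hgi : (g : ∀ i, X i) i = 1 then 1
        else ρ i ⟨(k.1 : ∀ i, X i) i, (hK0mem k.1).1 k.2 i hgi⟩) ∈ _
      by_cases hgi : (g : ∀ i, X i) i = 1
      · rw [dif_pos hgi]; exact one_mem _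
      · rw [dif_neg hgi]; exact hmem i _
    -- the range of ψ is finite
    haveI hrfin : Finite ↥ψ.range := by
      have hT : (Set.range (fun k : ↥K0 => ψ k)).Finite := by
        rw [← Set.finite_coe_iff]
        haveI : ∀ j : ↥{i | (g : ∀ i, X i) i ≠ 1},
            Finite ↥(zpowers ((g : ∀ i, X i) j.1)) := by
          intro j
          exact Set.finite_coe_iff.2 ((hinf j.1).finite_zpowers)
        apply Finite.of_injective (fun f : ↥(Set.range (fun k : ↥K0 => ψ k)) =>
          fun j : ↥{i | (g : ∀ i, X i) i ≠ 1} =>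
            (⟨((f.1 : ↥(restrictedDirectProduct X)) : ∀ i, X i) j.1, by
              obtain ⟨k, hk⟩ := f.2
              rw [← hk]
              exact hψzp k j.1⟩ : ↥(zpowers ((g : ∀ i, X i) j.1))))
        intro f f' hff
        apply Subtype.ext
        apply Subtype.ext
        funext i
        by_cases hgi : (g : ∀ i, X i) i = 1
        · obtain ⟨k, hk⟩ := f.2
          obtain ⟨k', hk'⟩ := f'.2
          have e1 : ((f.1 : ↥(restrictedDirectProduct X)) : ∀ i, X i) i = 1 := by
            rw [← hk]; show (F k).1 i = 1; simp only [hF]; rw [dif_pos hgi]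
          have e2 : ((f'.1 : ↥(restrictedDirectProduct X)) : ∀ i, X i) i = 1 := by
            rw [← hk']; show (F k').1 i = 1; simp only [hF]; rw [dif_pos hgi]
          rw [e1, e2]
        · exact congrArg Subtype.val (congrFun hff ⟨i, hgi⟩)
      exact Set.Finite.to_subtype (hT.subset (by
        rintro x ⟨k, rfl⟩
        exact ⟨k, rfl⟩))
    -- the final subgroup
    set Kfi : Subgroup ↥(restrictedDirectProduct X) := (comap ψ (zpowers g)).map K0.subtype with hKfi
    have hKfile : Kfi ≤ K0 := map_subtype_le _
    have hgKfi : g ∈ Kfi := by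
      rw [hKfi]
      exact mem_map.2 ⟨⟨g, hgK0⟩, mem_comap.2 (by rw [hψg hgK0]; exact mem_zpowers g), rfl⟩
    have hzle : zpowers g ≤ Kfi := zpowers_le.2 hgKfi
    refine ⟨Kfi, hzle, ?_, ψ.comp (Subgroup.inclusion hKfile), ?_, ?_⟩
    · constructor
      rw [← relIndex_mul_index hKfile]
      apply mul_ne_zero
      · rw [relIndex, hKfi, subgroupOf, comap_map_eq_self_of_injective K0.subtype_injective]
        rw [index_comap]
        exact Subgroup.index_ne_zero_of_finite
      · exact hK0fin.index_ne_zero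
    · intro k
      obtain ⟨x, hx, hxval⟩ := k.2
      have hxk : Subgroup.inclusion hKfile k = x := Subtype.ext hxval.symm
      rw [MonoidHom.comp_apply, hxk]
      exact mem_comap.1 (SetLike.mem_coe.1 hx)
    · intro x hx
      obtain ⟨m, hm⟩ := mem_zpowers_iff.mp hx
      subst hm
      have key : Subgroup.inclusion hKfile ⟨g ^ m, hzle hx⟩ = (⟨g, hgK0⟩ : ↥K0) ^ m :=
        Subtype.ext (by rw [SubgroupClass.coe_zpow]; rfl)
      rw [MonoidHom.comp_apply, key, map_zpow, hψg hgK0]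
end

section
/- Let X be a finitely generated virtually abelian group and let Y be a group with property (LR). Then the direct product X × Y has property (LR). -/
open scoped Classical

/-- In a finite free `ℤ`-module, every submodule admits a "scaled projection":
an endomorphism with image inside `N` which acts as multiplication by `d > 0` on `N`. -/
theorem exists_scaled_retraction (V : Type*) [AddCommGroup V]
    [Module.Finite ℤ V] [NoZeroSMulDivisors ℤ V] (N : Submodule ℤ V) :
    ∃ d : ℤ, 0 < d ∧ ∃ α : V →ₗ[ℤ] V, (∀ x, α x ∈ N) ∧ ∀ x ∈ N, α x = d • x := by
  have : Module.Free ℤ V := Module.free_of_finite_type_torsion_free'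
  let b := Module.Free.chooseBasis ℤ V
  obtain ⟨n, ⟨bM, bN, f, a, hsnf⟩⟩ := N.smithNormalForm b
  have ha : ∀ i, a i ≠ 0 := by
    intro i hai
    have h1 : (bN i : V) = 0 := by rw [hsnf i, hai, zero_smul]
    exact bN.ne_zero i (Subtype.ext h1)
  set d0 : ℤ := ∏ i, a i with hd0
  have hd0ne : d0 ≠ 0 := Finset.prod_ne_zero_iff.mpr fun i _ => ha i
  set g : Module.Free.ChooseBasisIndex ℤ V → V :=
    fun j => if (∃ i, f i = j) then d0 • bM j else 0 with hg
  have hgf : ∀ i, g (f i) = (∏ k ∈ Finset.univ.erase i, a k) • (bN i : V) := by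
    intro i
    have h2 : g (f i) = d0 • bM (f i) := if_pos ⟨i, rfl⟩
    rw [h2, hsnf i, smul_smul, hd0,
      ← Finset.mul_prod_erase Finset.univ a (Finset.mem_univ i), mul_comm]
  have hgN : ∀ j, g j ∈ N := by
    intro j
    by_cases h : ∃ i, f i = j
    · obtain ⟨i, rfl⟩ := h
      rw [hgf i]
      exact N.smul_mem _ (bN i).2
    · rw [hg]; simp only [if_neg h]; exact N.zero_mem
  set α0 : V →ₗ[ℤ] V := bM.constr ℤ g with hα0
  have hα0N : ∀ x, α0 x ∈ N := by
    intro x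
    rw [hα0, Module.Basis.constr_apply_fintype]
    exact N.sum_mem fun j _ => N.smul_mem _ (hgN j)
  have hα0d : ∀ x ∈ N, α0 x = d0 • x := by
    have hext : ∀ i : Fin n, α0 ((bN i : V)) = d0 • (bN i : V) := by
      intro i
      rw [hsnf i, map_smul, hα0, Module.Basis.constr_basis]
      show a i • g (f i) = d0 • a i • bM (f i)
      rw [hgf i, hsnf i, smul_smul, smul_smul, smul_smul]
      congr 1
      rw [hd0, ← Finset.mul_prod_erase Finset.univ a (Finset.mem_univ i)]
    intro x hx
    have hrep := Module.Basis.sum_repr bN ⟨x, hx⟩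
    have : x = ∑ i, (bN.repr ⟨x, hx⟩ i) • (bN i : V) := by
      have := congrArg (Submodule.subtype N) hrep
      simp only [map_sum, map_smul] at this
      exact this.symm
    rw [this, map_sum, Finset.smul_sum]
    refine Finset.sum_congr rfl fun i _ => ?_
    rw [map_smul, hext i, smul_smul, smul_smul, mul_comm]
  refine ⟨d0 ^ 2, ?_, α0.comp α0, fun x => hα0N _, ?_⟩
  · have h1 : (0:ℤ) ≤ d0 ^ 2 := sq_nonneg d0
    have h2 : d0 ^ 2 ≠ 0 := pow_ne_zero _ hd0ne
    omega
  · intro x hx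
    have h1 : α0 x = d0 • x := hα0d x hx
    have h2 : α0 (α0 x) = d0 • α0 x := hα0d _ (hα0N x)
    rw [LinearMap.comp_apply, h2, h1, smul_smul, sq]

/-- Scaled retraction onto a subgroup of a finitely generated torsion-free abelian group. -/
theorem exists_pow_retraction {W : Type*} [CommGroup W] (hfg : Group.FG W)
    (htf : ∀ w : W, ∀ n : ℕ, 0 < n → w ^ n = 1 → w = 1) (A : Subgroup W) :
    ∃ d : ℕ, 0 < d ∧ ∃ α : W →* W, (∀ w, α w ∈ A) ∧ ∀ a ∈ A, α a = a ^ d := by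
  haveI := hfg
  haveI : AddGroup.FG (Additive W) :=
    AddGroup.fg_iff_addMonoid_fg.mpr (Monoid.fg_iff_add_fg.mp (Group.fg_iff_monoid_fg.mp hfg))
  haveI : Module.Finite ℤ (Additive W) := Module.Finite.iff_addGroup_fg.mpr ‹_›
  haveI : NoZeroSMulDivisors ℤ (Additive W) := by
    constructor
    intro c x h
    by_cases hc : c = 0
    · exact Or.inl hc
    · refine Or.inr ?_
      have hx : Additive.toMul x ^ c = 1 := by
        have := congrArg Additive.toMul h
        rwa [toMul_zsmul] at this
      have hx' : Additive.toMul x ^ c.natAbs = 1 := by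
        rcases Int.natAbs_eq c with h1 | h1
        · rw [← zpow_natCast, ← h1, hx]
        · rw [← zpow_natCast, ← neg_neg (c.natAbs : ℤ), ← h1, zpow_neg, hx, inv_one]
      have := htf (Additive.toMul x) c.natAbs (Int.natAbs_pos.mpr hc) hx'
      exact this
  obtain ⟨d, hd, αl, hmem, hid⟩ := exists_scaled_retraction (Additive W)
    (AddSubgroup.toIntSubmodule (Subgroup.toAddSubgroup A))
  refine ⟨d.toNat, by omega, MonoidHom.mk' (fun w => Additive.toMul (αl (Additive.ofMul w)))
    (fun a b => by
      have := αl.map_add (Additive.ofMul a) (Additive.ofMul b)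
      exact congrArg Additive.toMul this), ?_, ?_⟩
  · intro w
    exact hmem (Additive.ofMul w)
  · intro a ha
    have h1 : αl (Additive.ofMul a) = d • Additive.ofMul a := hid _ ha
    have h2 := congrArg Additive.toMul h1
    rw [toMul_zsmul] at h2
    show Additive.toMul (αl (Additive.ofMul a)) = a ^ d.toNat
    rw [h2, ← zpow_natCast, Int.toNat_of_nonneg (le_of_lt hd)]
    simp

/-- A finitely generated abelian group of finite exponent is finite. -/
theorem finite_of_fg_exp {W : Type*} [CommGroup W] (hfg : Group.FG W) (e : ℕ)
    (he : 0 < e) (h : ∀ w : W, w ^ e = 1) : Finite W := by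
  haveI := hfg
  exact CommGroup.finite_of_fg_torsion _ fun w => isOfFinOrder_iff_pow_eq_one.mpr ⟨e, he, h w⟩

/-- The subgroup of `e`-th powers of a finitely generated abelian group has finite index. -/
theorem finiteIndex_pow_range {W : Type*} [CommGroup W] (hfg : Group.FG W) (e : ℕ)
    (he : 0 < e) : ((powMonoidHom e : W →* W).range).FiniteIndex := by
  set R := (powMonoidHom e : W →* W).range
  haveI : Group.FG (W ⧸ R) := Group.fg_of_surjective (QuotientGroup.mk'_surjective R)
  have hexp : ∀ q : W ⧸ R, q ^ e = 1 := by
    intro q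
    induction q using QuotientGroup.induction_on with
    | H w =>
      rw [← QuotientGroup.mk_pow]
      exact (QuotientGroup.eq_one_iff _).mpr ⟨w, rfl⟩
  haveI : Finite (W ⧸ R) := finite_of_fg_exp ‹_› e he hexp
  exact Subgroup.finiteIndex_of_finite_quotient

/-- The image of a finitely generated subgroup is finitely generated. -/
theorem Subgroup.FG.map' {G G' : Type*} [Group G] [Group G'] {H : Subgroup G} (h : H.FG)
    (f : G →* G') : (H.map f).FG := by
  haveI : Group.FG ↥H := (Group.fg_iff_subgroup_fg H).mpr h
  haveI : Group.FG ↥(f.comp H.subtype).range :=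
    Group.fg_of_surjective (MonoidHom.rangeRestrict_surjective (f.comp H.subtype))
  have he : (f.comp H.subtype).range = H.map f := by
    rw [MonoidHom.range_comp, Subgroup.range_subtype]
  rw [← he]
  exact (Group.fg_iff_subgroup_fg _).mp ‹_›

set_option maxHeartbeats 1000000 in
/-- From a f.g. virtually abelian group, extract a normal, f.g., torsion-free abelian
subgroup of finite index. -/
theorem exists_nice_abelian (X : Type*) [Group X] (hfg : Group.FG X)
    (B₀ : Subgroup X) (fi₀ : B₀.FiniteIndex) (comm₀ : ∀ a b : ↥B₀, a * b = b * a) :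
    ∃ B : Subgroup X, B.Normal ∧ B.FiniteIndex ∧ (∀ a b : ↥B, a * b = b * a) ∧ B.FG ∧
      (∀ x ∈ B, ∀ n : ℕ, 0 < n → x ^ n = 1 → x = 1) := by
  haveI := hfg
  haveI := fi₀
  set C := B₀.normalCore with hC
  haveI : C.Normal := B₀.normalCore_normal
  haveI : C.FiniteIndex := B₀.finiteIndex_normalCore
  have hCB₀ : C ≤ B₀ := B₀.normalCore_le
  have commC : ∀ a b : ↥C, a * b = b * a := by
    intro a b
    apply Subtype.ext
    have h1 := comm₀ ⟨a, hCB₀ a.2⟩ ⟨b, hCB₀ b.2⟩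
    have h2 := congrArg Subtype.val h1
    simpa using h2
  letI : CommGroup ↥C := { (inferInstance : Group ↥C) with mul_comm := commC }
  haveI hCfg : Group.FG ↥C := C.fg_of_index_ne_zero
  set T := CommGroup.torsion ↥C with hT
  haveI : AddGroup.FG (Additive ↥C) :=
    AddGroup.fg_iff_addMonoid_fg.mpr (Monoid.fg_iff_add_fg.mp (Group.fg_iff_monoid_fg.mp hCfg))
  haveI : Module.Finite ℤ (Additive ↥C) := Module.Finite.iff_addGroup_fg.mpr ‹_›
  haveI : IsNoetherian ℤ (Additive ↥C) := isNoetherian_of_isNoetherianRing_of_finite ℤ _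
  have hTfg : Group.FG ↥T := by
    have h1 : (AddSubgroup.toIntSubmodule (Subgroup.toAddSubgroup T)).FG :=
      IsNoetherian.noetherian _
    rw [Submodule.fg_iff_addSubgroup_fg, AddSubgroup.toIntSubmodule_toAddSubgroup] at h1
    exact (Group.fg_iff_subgroup_fg T).mpr ((Subgroup.fg_iff_add_fg T).mpr h1)
  haveI : Finite ↥T := by
    refine CommGroup.finite_of_fg_torsion _ ?_
    intro t
    obtain ⟨n, hn, h⟩ := isOfFinOrder_iff_pow_eq_one.mp t.2
    refine isOfFinOrder_iff_pow_eq_one.mpr ⟨n, hn, ?_⟩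
    apply Subtype.ext
    rw [SubgroupClass.coe_pow]
    simpa using h
  set e := Nat.card ↥T with he'
  have he : 0 < e := Nat.card_pos
  set R := ((powMonoidHom e : ↥C →* ↥C).range) with hR
  set B := R.map C.subtype with hB
  have hBC : B ≤ C := Subgroup.map_subtype_le R
  -- membership characterization
  have hmemB : ∀ x : X, x ∈ B ↔ ∃ c ∈ C, c ^ e = x := by
    intro x
    constructor
    · rintro ⟨v, ⟨u, hu⟩, hvx⟩
      refine ⟨(u : X), u.2, ?_⟩
      rw [← hu] at hvx
      rw [← hvx]
      exact (SubgroupClass.coe_pow _ _).symm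
    · rintro ⟨c, hc, rfl⟩
      refine ⟨(⟨c, hc⟩ : ↥C) ^ e, ⟨⟨c, hc⟩, rfl⟩, ?_⟩
      exact SubgroupClass.coe_pow _ _
  have hBnormal : B.Normal := by
    constructor
    intro x hx g
    rw [hmemB] at hx ⊢
    obtain ⟨c, hc, rfl⟩ := hx
    refine ⟨g * c * g⁻¹, Subgroup.Normal.conj_mem ‹C.Normal› _ hc g, ?_⟩
    rw [conj_pow]
  have hBcomm : ∀ a b : ↥B, a * b = b * a := by
    intro a b
    apply Subtype.ext
    have h1 := commC ⟨a, hBC a.2⟩ ⟨b, hBC b.2⟩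
    have h2 := congrArg Subtype.val h1
    simpa using h2
  have hBfg : B.FG := by
    haveI : Group.FG ↥R :=
      Group.fg_of_surjective (f := (powMonoidHom e : ↥C →* ↥C).rangeRestrict)
        (MonoidHom.rangeRestrict_surjective _)
    exact Subgroup.FG.map' ((Group.fg_iff_subgroup_fg R).mp ‹_›) C.subtype
  have hBtf : ∀ x ∈ B, ∀ n : ℕ, 0 < n → x ^ n = 1 → x = 1 := by
    intro x hx n hn hxn
    rw [hmemB] at hx
    obtain ⟨c, hc, rfl⟩ := hx
    have h1 : ((⟨c, hc⟩ : ↥C) ^ (e * n)) = 1 := by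
      apply Subtype.ext
      rw [SubgroupClass.coe_pow]
      simpa [pow_mul] using hxn
    have hufin : IsOfFinOrder (⟨c, hc⟩ : ↥C) :=
      isOfFinOrder_iff_pow_eq_one.mpr ⟨e * n, by positivity, h1⟩
    have huT : (⟨c, hc⟩ : ↥C) ∈ T := hufin
    have hue : (⟨⟨c, hc⟩, huT⟩ : ↥T) ^ e = 1 := by rw [he']; exact pow_card_eq_one'
    have hue' : (⟨c, hc⟩ : ↥C) ^ e = 1 := by
      have h2 := congrArg Subtype.val hue
      rw [SubgroupClass.coe_pow] at h2
      simpa using h2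
    have h3 := congrArg Subtype.val hue'
    rw [SubgroupClass.coe_pow] at h3
    simpa using h3
  have hBfi : B.FiniteIndex := by
    have h1 : B.relIndex C ≠ 0 := by
      have h2 : B.subgroupOf C = R := Subgroup.comap_map_eq_self_of_injective C.subtype_injective R
      have h3 := finiteIndex_pow_range hCfg e he
      rw [Subgroup.relIndex, h2]
      exact h3.index_ne_zero
    have h2 := Subgroup.relIndex_mul_index hBC
    exact ⟨by rw [← h2]; exact mul_ne_zero h1 ‹C.FiniteIndex›.index_ne_zero⟩
  exact ⟨B, hBnormal, hBfi, hBcomm, hBfg, hBtf⟩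

set_option maxHeartbeats 1000000 in
/-- Key lemma: inside a group with a normal f.g. torsion-free abelian finite-index subgroup `B`,
any subgroup `N` normalized by `P` (with `N ≤ P`) admits a `P`-invariant "complement" `M`. -/
theorem exists_invariant_complement {X : Type*} [Group X] (B : Subgroup X) (hBn : B.Normal)
    (hBfi : B.FiniteIndex) (hBcomm : ∀ a b : ↥B, a * b = b * a) (hBfg : B.FG)
    (hBtf : ∀ x ∈ B, ∀ n : ℕ, 0 < n → x ^ n = 1 → x = 1)
    (P N : Subgroup X) (hNP : N ≤ P) (hPN : ∀ x ∈ P, ∀ n ∈ N, x * n * x⁻¹ ∈ N) :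
    ∃ (M : Subgroup X) (e : ℕ), 0 < e ∧ M ≤ B ∧
      (∀ x ∈ P, ∀ m ∈ M, x * m * x⁻¹ ∈ M) ∧ N ⊓ M = ⊥ ∧ ∀ b ∈ B, b ^ e ∈ N ⊔ M := by
  haveI := hBn
  haveI := hBfi
  letI : CommGroup ↥B := { (inferInstance : Group ↥B) with mul_comm := hBcomm }
  have hBfg' : Group.FG ↥B := (Group.fg_iff_subgroup_fg B).mpr hBfg
  have htf' : ∀ w : ↥B, ∀ n : ℕ, 0 < n → w ^ n = 1 → w = 1 := by
    intro w n hn h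
    apply Subtype.ext
    refine hBtf ↑w w.2 n hn ?_
    rw [← SubgroupClass.coe_pow, h]
    rfl
  set A := N.subgroupOf B with hA
  obtain ⟨d, hd, α, hαmem, hαid⟩ := exists_pow_retraction hBfg' htf' A
  -- conjugation homomorphisms
  have conj_mem : ∀ (x : X) (b : ↥B), x * (b : X) * x⁻¹ ∈ B := fun x b => hBn.conj_mem _ b.2 x
  set conjB : X → (↥B →* ↥B) := fun x =>
    { toFun := fun b => ⟨x * (b : X) * x⁻¹, conj_mem x b⟩
      map_one' := by ext; simp
      map_mul' := by intro a b; ext; push_cast; group } with hconjB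
  have hconj_apply : ∀ (x : X) (v : ↥B), ((conjB x v : ↥B) : X) = x * v * x⁻¹ := fun _ _ => rfl
  have hconj_mul : ∀ (x y : X) (v : ↥B), conjB (x * y) v = conjB x (conjB y v) := by
    intro x y v
    apply Subtype.ext
    rw [hconj_apply, hconj_apply, hconj_apply]
    group
  have hconj_inv : ∀ (x : X) (v : ↥B), conjB x (conjB x⁻¹ v) = v := by
    intro x v
    apply Subtype.ext
    rw [hconj_apply, hconj_apply]
    group
  have hconj_id : ∀ (b : X) (hb : b ∈ B) (v : ↥B), conjB b v = v := by
    intro b hb v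
    apply Subtype.ext
    rw [hconj_apply]
    have h1 := hBcomm ⟨b, hb⟩ v
    have h2 := congrArg Subtype.val h1
    have h3 : b * (v : X) = (v : X) * b := h2
    rw [h3, mul_assoc, mul_inv_cancel, mul_one]
  -- the averaged endomorphism
  set term : X → (↥B →* ↥B) := fun x => (conjB x).comp (α.comp (conjB x⁻¹)) with hterm
  have hterm_apply : ∀ (x : X) (v : ↥B), term x v = conjB x (α (conjB x⁻¹ v)) := fun _ _ => rfl
  have hterm_coset : ∀ x y : X, x⁻¹ * y ∈ B → term x = term y := by
    intro x y hxy
    refine MonoidHom.ext fun v => ?_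
    have h1 : conjB y⁻¹ v = conjB x⁻¹ v := by
      have he : y⁻¹ = (x⁻¹ * y)⁻¹ * x⁻¹ := by group
      rw [show conjB y⁻¹ v = conjB ((x⁻¹ * y)⁻¹ * x⁻¹) v from by rw [← he]]
      rw [hconj_mul, hconj_id _ (inv_mem hxy)]
    have h2 : ∀ w, conjB y w = conjB x w := by
      intro w
      have he : y = x * (x⁻¹ * y) := by group
      rw [show conjB y w = conjB (x * (x⁻¹ * y)) w from by rw [← he]]
      rw [hconj_mul, hconj_id _ hxy]
    rw [hterm_apply, hterm_apply, h1, h2]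
  set tbar : X ⧸ B → (↥B →* ↥B) :=
    Quotient.lift term (fun a b h => hterm_coset a b (QuotientGroup.leftRel_apply.mp h))
    with htbardef
  have htbar : ∀ x : X, tbar (QuotientGroup.mk x) = term x := fun _ => rfl
  haveI : Finite (X ⧸ B) := inferInstance
  set Pbar := P.map (QuotientGroup.mk' B) with hPbar
  letI : Fintype ↥Pbar := Fintype.ofFinite _
  set σ : ↥B →* ↥B := ∏ q : ↥Pbar, tbar ↑q with hσ
  set k := Fintype.card ↥Pbar with hk'
  have hk : 0 < k := Fintype.card_pos
  have hσapp : ∀ v : ↥B, σ v = ∏ q : ↥Pbar, tbar ↑q v := by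
    intro v
    rw [hσ, MonoidHom.finset_prod_apply]
  -- terms preserve A
  have hconjA : ∀ x ∈ P, ∀ a : ↥B, a ∈ A → conjB x a ∈ A := by
    intro x hx a ha
    rw [hA, Subgroup.mem_subgroupOf] at ha ⊢
    rw [hconj_apply]
    exact hPN x hx _ ha
  have htermA : ∀ x ∈ P, ∀ v : ↥B, term x v ∈ A := by
    intro x hx v
    rw [hterm_apply]
    exact hconjA x hx _ (hαmem _)
  have htermid : ∀ x ∈ P, ∀ a : ↥B, a ∈ A → term x a = a ^ d := by
    intro x hx a ha
    rw [hterm_apply, hαid _ (hconjA x⁻¹ (inv_mem hx) a ha), map_pow, hconj_inv]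
  have hσA : ∀ v : ↥B, σ v ∈ A := by
    intro v
    rw [hσapp]
    refine Subgroup.prod_mem A fun q _ => ?_
    obtain ⟨x, hx, hmk⟩ := q.2
    rw [← hmk]
    exact htermA x hx v
  have hσid : ∀ a : ↥B, a ∈ A → σ a = a ^ (d * k) := by
    intro a ha
    rw [hσapp]
    have h1 : ∀ q : ↥Pbar, tbar ↑q a = a ^ d := by
      intro q
      obtain ⟨x, hx, hmk⟩ := q.2
      rw [← hmk]
      exact htermid x hx a ha
    rw [Finset.prod_congr rfl fun q _ => h1 q, Finset.prod_const, Finset.card_univ, ← pow_mul,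
      mul_comm d k, hk', mul_comm k d]
  have hσconj : ∀ x ∈ P, ∀ v : ↥B, σ (conjB x v) = conjB x (σ v) := by
    intro x hx v
    have hclaim : ∀ (q : X ⧸ B) (w : ↥B),
        conjB x (tbar q w) = tbar (QuotientGroup.mk x * q) (conjB x w) := by
      intro q w
      induction q using Quotient.ind with
      | _ y =>
        have h1 : (QuotientGroup.mk x * (Quotient.mk _ y : X ⧸ B)) = QuotientGroup.mk (x * y) :=
          rfl
        rw [h1]
        show conjB x (term y w) = term (x * y) (conjB x w)
        rw [hterm_apply, hterm_apply]
        have h2 : conjB (x * y)⁻¹ (conjB x w) = conjB y⁻¹ w := by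
          have h3 : (x * y)⁻¹ = y⁻¹ * x⁻¹ := by group
          rw [h3, hconj_mul]
          congr 1
          have h4 := hconj_inv x⁻¹ w  -- conjB x⁻¹ (conjB x⁻¹⁻¹ w) = w
          rw [inv_inv] at h4
          have : conjB x⁻¹ (conjB x w) = w := by
            have h5 : x⁻¹ * x = 1 := by group
            rw [← hconj_mul, h5, hconj_id 1 (one_mem B)]
          rw [this]
        rw [h2, hconj_mul]
    set g : ↥Pbar := ⟨QuotientGroup.mk x, ⟨x, hx, rfl⟩⟩ with hg
    calc σ (conjB x v) = ∏ q : ↥Pbar, tbar ↑q (conjB x v) := hσapp _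
      _ = ∏ q : ↥Pbar, tbar ↑(g * q) (conjB x v) := by
          refine (Fintype.prod_equiv (Equiv.mulLeft g) _ _ fun q => rfl).symm
      _ = ∏ q : ↥Pbar, conjB x (tbar ↑q v) := by
          refine Finset.prod_congr rfl fun q _ => ?_
          have hq : ((g * q : ↥Pbar) : X ⧸ B) = QuotientGroup.mk x * (q : X ⧸ B) := by
            have h5 : ((g * q : ↥Pbar) : X ⧸ B) = (g : X ⧸ B) * (q : X ⧸ B) := rfl
            rw [h5, hg]
          rw [hq, ← hclaim]
      _ = conjB x (∏ q : ↥Pbar, tbar ↑q v) := (map_prod (conjB x) _ _).symm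
      _ = conjB x (σ v) := by rw [← hσapp]
  -- the complement
  set M := σ.ker.map B.subtype with hM
  have hMB : M ≤ B := Subgroup.map_subtype_le _
  refine ⟨M, d * k, by positivity, hMB, ?_, ?_, ?_⟩
  · intro x hx m hm
    obtain ⟨v, hv, rfl⟩ := hm
    refine ⟨conjB x v, ?_, rfl⟩
    simp only [SetLike.mem_coe, MonoidHom.mem_ker] at hv ⊢
    rw [hσconj x hx, hv, map_one]
  · rw [eq_bot_iff]
    intro g hg
    obtain ⟨hgN, hgM⟩ := Subgroup.mem_inf.mp hg
    obtain ⟨v, hv, rfl⟩ := hgM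
    simp only [SetLike.mem_coe, MonoidHom.mem_ker] at hv
    have hvA : v ∈ A := by rw [hA, Subgroup.mem_subgroupOf]; exact hgN
    have h1 : v ^ (d * k) = 1 := by rw [← hσid v hvA, hv]
    have h2 : v = 1 := htf' v (d * k) (by positivity) h1
    rw [Subgroup.mem_bot, h2, map_one]
  · intro b hb
    set v : ↥B := ⟨b, hb⟩ with hv
    set w : ↥B := v ^ (d * k) * (σ v)⁻¹ with hw
    have hσw : σ w = 1 := by
      rw [hw, map_mul, map_inv, map_pow, hσid (σ v) (hσA v), ← map_pow, mul_inv_cancel]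
    have hwM : (w : X) ∈ M := ⟨w, MonoidHom.mem_ker.mpr hσw, rfl⟩
    have hσvN : ((σ v : ↥B) : X) ∈ N := by
      have := hσA v
      rwa [hA, Subgroup.mem_subgroupOf] at this
    have hbeq : b ^ (d * k) = (w : X) * ((σ v : ↥B) : X) := by
      have h1 : w * σ v = v ^ (d * k) := by rw [hw, inv_mul_cancel_right]
      have h2 := congrArg Subtype.val h1
      have h3 : ((v ^ (d * k) : ↥B) : X) = b ^ (d * k) := by rw [SubgroupClass.coe_pow]
      rw [← h3, ← h2]
      rfl
    rw [hbeq]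
    exact Subgroup.mul_mem _ (Subgroup.mem_sup_right hwM) (Subgroup.mem_sup_left hσvN)

/-- If `M'` is a subgroup normalized by `H` with trivial intersection, then `H ⊔ M'`
retracts onto `H`. -/
theorem retraction_of_complement {G : Type*} [Group G] (H M' : Subgroup G)
    (hnorm : ∀ h ∈ H, ∀ m ∈ M', h * m * h⁻¹ ∈ M') (hdisj : H ⊓ M' = ⊥) :
    ∃ ρ : ↥(H ⊔ M') →* G, (∀ k, ρ k ∈ H) ∧
      ∀ (h : G) (hh : h ∈ H) (hk : h ∈ H ⊔ M'), ρ ⟨h, hk⟩ = h := by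
  set K := H ⊔ M' with hK
  have hHK : H ≤ K := le_sup_left
  have hMK : M' ≤ K := le_sup_right
  have hKnorm : K ≤ Subgroup.normalizer (M' : Set G) := by
    refine sup_le ?_ M'.le_normalizer
    intro h hh
    rw [Subgroup.mem_normalizer_iff]
    intro n
    constructor
    · intro hn; exact hnorm h hh n hn
    · intro hn
      have h1 := hnorm h⁻¹ (inv_mem hh) _ hn
      have h2 : h⁻¹ * (h * n * h⁻¹) * h⁻¹⁻¹ = n := by group
      rwa [h2] at h1
  have hdecomp : ∀ k ∈ K, ∃ h ∈ H, ∃ m ∈ M', k = h * m := by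
    set S : Subgroup G :=
      { carrier := {g | ∃ h ∈ H, ∃ m ∈ M', g = h * m}
        one_mem' := ⟨1, one_mem _, 1, one_mem _, (one_mul 1).symm⟩
        mul_mem' := by
          rintro a b ⟨h, hh, m, hm, rfl⟩ ⟨h', hh', m', hm', rfl⟩
          exact ⟨h * h', mul_mem hh hh', (h'⁻¹ * m * h'⁻¹⁻¹) * m',
            mul_mem (hnorm h'⁻¹ (inv_mem hh') m hm) hm', by group⟩
        inv_mem' := by
          rintro a ⟨h, hh, m, hm, rfl⟩
          exact ⟨h⁻¹, inv_mem hh, h * m⁻¹ * h⁻¹, hnorm h hh _ (inv_mem hm), by group⟩ } with hS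
    intro k hk
    have h1 : K ≤ S := by
      refine sup_le ?_ ?_
      · intro h hh; exact ⟨h, hh, 1, one_mem _, (mul_one h).symm⟩
      · intro m hm; exact ⟨1, one_mem _, m, hm, (one_mul m).symm⟩
    exact h1 hk
  set M'' := M'.subgroupOf K with hM''
  haveI : M''.Normal := by
    constructor
    intro n hn g
    rw [Subgroup.mem_subgroupOf] at hn ⊢
    have h1 := (Subgroup.mem_normalizer_iff.mp (hKnorm g.2) ↑n).mp hn
    exact h1
  set φ : ↥H →* ↥K ⧸ M'' := (QuotientGroup.mk' M'').comp (Subgroup.inclusion hHK) with hφ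
  have hinj : Function.Injective φ := by
    rw [injective_iff_map_eq_one]
    intro h h1
    have h2 : Subgroup.inclusion hHK h ∈ M'' := (QuotientGroup.eq_one_iff _).mp h1
    rw [Subgroup.mem_subgroupOf] at h2
    have h3 : (h : G) ∈ H ⊓ M' := ⟨h.2, h2⟩
    rw [hdisj, Subgroup.mem_bot] at h3
    exact Subtype.ext h3
  have hsurj : Function.Surjective φ := by
    intro qk
    induction qk using QuotientGroup.induction_on with
    | H k =>
      obtain ⟨h, hh, m, hm, hk⟩ := hdecomp ↑k k.2
      refine ⟨⟨h, hh⟩, ?_⟩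
      show QuotientGroup.mk (Subgroup.inclusion hHK ⟨h, hh⟩) = QuotientGroup.mk k
      rw [QuotientGroup.eq]
      rw [Subgroup.mem_subgroupOf]
      have h1 : (((Subgroup.inclusion hHK ⟨h, hh⟩)⁻¹ * k : ↥K) : G) = h⁻¹ * ↑k := rfl
      rw [h1, hk]
      have h2 : h⁻¹ * (h * m) = m := by group
      rw [h2]
      exact hm
  set ψ := MulEquiv.ofBijective φ ⟨hinj, hsurj⟩ with hψ
  set ρ : ↥K →* G := H.subtype.comp (ψ.symm.toMonoidHom.comp (QuotientGroup.mk' M'')) with hρ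
  refine ⟨ρ, ?_, ?_⟩
  · intro k
    exact (ψ.symm ((QuotientGroup.mk' M'') k)).2
  · intro h hh hk
    have h1 : φ ⟨h, hh⟩ = (QuotientGroup.mk' M'') ⟨h, hk⟩ := rfl
    have h2 : ψ ⟨h, hh⟩ = (QuotientGroup.mk' M'') ⟨h, hk⟩ := h1
    have h3 : ψ.symm ((QuotientGroup.mk' M'') ⟨h, hk⟩) = ⟨h, hh⟩ := by
      rw [← h2, MulEquiv.symm_apply_apply]
    show H.subtype (ψ.symm ((QuotientGroup.mk' M'') ⟨h, hk⟩)) = h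
    rw [h3]
    rfl
/-- Property (LR): every finitely generated subgroup is a virtual retract. -/
def LR (G : Type*) [Group G] : Prop :=
  ∀ H : Subgroup G, H.FG → IsVirtualRetract H

set_option maxHeartbeats 2000000 in
/-- Proposition 5.8: the direct product of a finitely generated virtually abelian group with
a group satisfying (LR) satisfies (LR). -/
theorem LR_prod_of_fg_virtuallyAbelian {X Y : Type*} [Group X] [Group Y]
    (hXfg : Group.FG X) (hXva : VirtuallyAbelian X) (hY : LR Y) : LR (X × Y) := by
  intro H hH
  classical
  obtain ⟨B₀, fi₀, comm₀⟩ := hXva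
  obtain ⟨B, hBn, hBfi, hBcomm, hBfg, hBtf⟩ := exists_nice_abelian X hXfg B₀ fi₀ comm₀
  -- the image of `H` in `Y` and the retraction provided by (LR)
  set Q := H.map (MonoidHom.snd X Y) with hQdef
  obtain ⟨KY, hQKY, hKYfi, ρY, hρYmem, hρYid⟩ := hY Q (hH.map' (MonoidHom.snd X Y))
  set P := H.map (MonoidHom.fst X Y) with hPdef
  set N := H.comap (MonoidHom.inl X Y) with hNdef
  have hNmem : ∀ x : X, x ∈ N ↔ ((x, 1) : X × Y) ∈ H := fun x => Iff.rfl
  have hNP : N ≤ P := fun n hn => ⟨(n, 1), hn, rfl⟩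
  have hPN : ∀ x ∈ P, ∀ n ∈ N, x * n * x⁻¹ ∈ N := by
    rintro x ⟨⟨a, b⟩, hab, rfl⟩ n hn
    rw [hNmem] at hn ⊢
    have h1 : ((a, b) : X × Y) * (n, 1) * ((a, b) : X × Y)⁻¹ ∈ H :=
      mul_mem (mul_mem hab hn) (inv_mem hab)
    have h2 : ((a, b) : X × Y) * (n, 1) * ((a, b) : X × Y)⁻¹ = (a * n * a⁻¹, 1) := by
      ext
      · rfl
      · show b * 1 * b⁻¹ = 1
        group
    rwa [h2] at h1
  obtain ⟨M, e, he, hMB, hMP, hNM, hBe⟩ :=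
    exists_invariant_complement B hBn hBfi hBcomm hBfg hBtf P N hNP hPN
  set M₁ := M.map (MonoidHom.inl X Y) with hM₁def
  have hM₁mem : ∀ g : X × Y, g ∈ M₁ ↔ g.1 ∈ M ∧ g.2 = 1 := by
    intro g
    constructor
    · rintro ⟨m, hm, rfl⟩; exact ⟨hm, rfl⟩
    · rintro ⟨hm, h2⟩
      exact ⟨g.1, hm, by rw [show (MonoidHom.inl X Y) g.1 = (g.1, 1) from rfl, ← h2]⟩
  set K := H ⊔ M₁ with hKdef
  have hnorm : ∀ h ∈ H, ∀ m ∈ M₁, h * m * h⁻¹ ∈ M₁ := by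
    intro h hh m hm
    rw [hM₁mem] at hm ⊢
    obtain ⟨hm1, hm2⟩ := hm
    constructor
    · have hP1 : h.1 ∈ P := ⟨h, hh, rfl⟩
      exact hMP h.1 hP1 m.1 hm1
    · show h.2 * m.2 * h.2⁻¹ = 1
      rw [hm2]
      group
  have hdisj : H ⊓ M₁ = ⊥ := by
    rw [eq_bot_iff]
    intro g hg
    obtain ⟨hgH, hgM⟩ := Subgroup.mem_inf.mp hg
    rw [hM₁mem] at hgM
    have h1 : (g.1, (1 : Y)) = g := Prod.ext rfl hgM.2.symm
    have h2 : g.1 ∈ N := by rw [hNmem, h1]; exact hgH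
    have h3 : g.1 ∈ N ⊓ M := ⟨h2, hgM.1⟩
    rw [hNM, Subgroup.mem_bot] at h3
    rw [Subgroup.mem_bot]
    rw [← h1, h3]
    rfl
  obtain ⟨ρ, hρmem, hρid⟩ := retraction_of_complement H M₁ hnorm hdisj
  -- the subgroup `X × KY` and the induced endomorphism
  set L := (⊤ : Subgroup X).prod KY with hLdef
  have hLmem : ∀ g : X × Y, g ∈ L ↔ g.2 ∈ KY := by
    intro g
    rw [hLdef, Subgroup.mem_prod]
    simp
  set toKY : ↥L →* ↥KY :=
    { toFun := fun l => ⟨(l : X × Y).2, ((hLmem l).mp l.2 : _)⟩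
      map_one' := rfl
      map_mul' := fun _ _ => rfl } with htoKY
  set ξ : ↥L →* X × Y :=
    ((MonoidHom.fst X Y).comp L.subtype).prod (ρY.comp toKY) with hξdef
  have hξapp : ∀ l : ↥L, ξ l = ((l : X × Y).1, ρY (toKY l)) := fun _ => rfl
  set KG := (K.comap ξ).map L.subtype with hKGdef
  have hKGL : KG ≤ L := Subgroup.map_subtype_le _
  have hKGmem : ∀ g : X × Y, g ∈ KG ↔ ∃ hg : g ∈ L, ξ ⟨g, hg⟩ ∈ K := by
    intro g
    constructor
    · rintro ⟨l, hl, rfl⟩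
      exact ⟨l.2, hl⟩
    · rintro ⟨hg, hK⟩
      exact ⟨⟨g, hg⟩, hK, rfl⟩
  have hQle : ∀ h : X × Y, h ∈ H → h.2 ∈ Q := fun h hh => ⟨h, hh, rfl⟩
  -- `H ≤ KG`
  have hHKG : H ≤ KG := by
    intro h hh
    rw [hKGmem]
    refine ⟨(hLmem h).mpr (hQKY (hQle h hh)), ?_⟩
    have hξh : ξ ⟨h, (hLmem h).mpr (hQKY (hQle h hh))⟩ = h := by
      rw [hξapp]
      have h2 : ρY (toKY ⟨h, (hLmem h).mpr (hQKY (hQle h hh))⟩) = h.2 :=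
        hρYid h.2 (hQle h hh)
      rw [h2]
    rw [hξh]
    exact Subgroup.mem_sup_left hh
  -- `M₁ ≤ KG`
  have hM₁KG : M₁ ≤ K := le_sup_right
  have hM₁KG' : M₁ ≤ KG := by
    intro m hm
    rw [hKGmem]
    have hm2 : m.2 = 1 := ((hM₁mem m).mp hm).2
    have hmL : m ∈ L := (hLmem m).mpr (by rw [hm2]; exact one_mem KY)
    refine ⟨hmL, ?_⟩
    have hξm : ξ ⟨m, hmL⟩ = m := by
      rw [hξapp]
      have h1 : toKY ⟨m, hmL⟩ = 1 := by
        apply Subtype.ext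
        exact hm2
      rw [h1, map_one]
      exact Prod.ext rfl hm2.symm
    rw [hξm]
    exact hM₁KG hm
  -- the kernel part
  set RY := (ρY.ker.map KY.subtype).map (MonoidHom.inr X Y) with hRYdef
  have hRYKG : RY ≤ KG := by
    rintro g ⟨y, ⟨u, hu, rfl⟩, rfl⟩
    rw [hKGmem]
    have hgL : (MonoidHom.inr X Y) (KY.subtype u) ∈ L := (hLmem _).mpr u.2
    refine ⟨hgL, ?_⟩
    have hξg : ξ ⟨(MonoidHom.inr X Y) (KY.subtype u), hgL⟩ = 1 := by
      rw [hξapp]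
      have h1 : toKY ⟨(MonoidHom.inr X Y) (KY.subtype u), hgL⟩ = u := by
        apply Subtype.ext
        rfl
      rw [h1, hu]
      rfl
    rw [hξg]
    exact one_mem K
  -- finite index of `N ⊔ M` in `X`
  letI : CommGroup ↥B := { (inferInstance : Group ↥B) with mul_comm := hBcomm }
  have hBfg' : Group.FG ↥B := (Group.fg_iff_subgroup_fg B).mpr hBfg
  set NM := N ⊔ M with hNMdef
  set Be := ((powMonoidHom e : ↥B →* ↥B).range).map B.subtype with hBedef
  have hBeNM : Be ≤ NM := by
    rintro g ⟨v, ⟨u, rfl⟩, rfl⟩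
    have h1 : B.subtype ((powMonoidHom e) u) = (u : X) ^ e := SubgroupClass.coe_pow _ _
    rw [h1]
    exact hBe ↑u u.2
  have hBefi : Be.FiniteIndex := by
    have h1 : Be.relIndex B ≠ 0 := by
      have h2 : Be.subgroupOf B = (powMonoidHom e : ↥B →* ↥B).range :=
        Subgroup.comap_map_eq_self_of_injective B.subtype_injective _
      have h3 := finiteIndex_pow_range hBfg' e he
      rw [Subgroup.relIndex, h2]
      exact h3.index_ne_zero
    have h2 := Subgroup.relIndex_mul_index (Subgroup.map_subtype_le _ : Be ≤ B)
    exact ⟨by rw [← h2]; exact mul_ne_zero h1 hBfi.index_ne_zero⟩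
  haveI hNMfi : NM.FiniteIndex := by
    haveI := hBefi
    exact Subgroup.finiteIndex_of_le hBeNM
  -- `J` has finite index, hence so does `KG`
  set J := K ⊔ RY with hJdef
  have hJKG : J ≤ KG := sup_le (sup_le hHKG hM₁KG') hRYKG
  haveI : Finite (X ⧸ NM) := NM.finite_quotient_of_finiteIndex
  haveI : Finite (Y ⧸ KY) := by
    haveI := hKYfi
    exact KY.finite_quotient_of_finiteIndex
  have hsurj : Function.Surjective
      (fun c : (X ⧸ NM) × (Y ⧸ KY) =>
        (QuotientGroup.mk (c.1.out, c.2.out) : (X × Y) ⧸ J)) := by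
    intro gbar
    obtain ⟨g, rfl⟩ := QuotientGroup.mk_surjective gbar
    set c2 : Y ⧸ KY := QuotientGroup.mk g.2 with hc2
    set t := c2.out with ht
    have htk : t⁻¹ * g.2 ∈ KY := by
      refine QuotientGroup.eq.mp ?_
      exact Quotient.out_eq' c2
    set k0 := t⁻¹ * g.2 with hk0
    set q0 := ρY ⟨k0, htk⟩ with hq0
    have hq0Q : q0 ∈ Q := hρYmem _
    obtain ⟨hq, hhq, hq2⟩ := hq0Q
    set a := hq.1 with ha
    have hqeq : hq = (a, q0) := Prod.ext rfl hq2
    set c1 : X ⧸ NM := QuotientGroup.mk (g.1 * a⁻¹) with hc1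
    set s := c1.out with hs
    have hsw : s⁻¹ * (g.1 * a⁻¹) ∈ NM := by
      refine QuotientGroup.eq.mp ?_
      exact Quotient.out_eq' c1
    set w := s⁻¹ * (g.1 * a⁻¹) with hw
    refine ⟨(c1, c2), ?_⟩
    show QuotientGroup.mk (c1.out, c2.out) = QuotientGroup.mk g
    refine QuotientGroup.eq.mpr ?_
    have hdecomp : ((c1.out, c2.out) : X × Y)⁻¹ * g
        = ((w, 1) * hq) * ((1 : X), q0⁻¹ * k0) := by
      rw [hqeq]
      show ((s, t) : X × Y)⁻¹ * g = ((w, 1) * (a, q0)) * ((1 : X), q0⁻¹ * k0)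
      ext
      · show s⁻¹ * g.1 = (w * a) * 1
        rw [hw]
        group
      · show t⁻¹ * g.2 = (1 * q0) * (q0⁻¹ * k0)
        rw [hk0]
        group
    rw [hdecomp]
    have hwK : ((w, (1 : Y)) : X × Y) ∈ K := by
      have h1 : (N ⊔ M).map (MonoidHom.inl X Y) ≤ K := by
        rw [Subgroup.map_sup]
        refine sup_le ?_ le_sup_right
        refine le_trans ?_ (le_sup_left : H ≤ K)
        rw [hNdef]
        exact Subgroup.map_comap_le _ _
      exact h1 (Subgroup.mem_map_of_mem _ hsw)
    have hqK : hq ∈ K := Subgroup.mem_sup_left hhq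
    have hkerK : (((1 : X), q0⁻¹ * k0) : X × Y) ∈ RY := by
      set u : ↥KY := (⟨q0, hQKY (hρYmem _)⟩ : ↥KY)⁻¹ * ⟨k0, htk⟩ with hu
      have huker : u ∈ ρY.ker := by
        rw [MonoidHom.mem_ker, hu, map_mul, map_inv]
        have h1 : ρY (⟨q0, hQKY (hρYmem _)⟩ : ↥KY) = q0 := hρYid q0 (hρYmem _)
        rw [h1, ← hq0]
        group
      refine ⟨KY.subtype u, ⟨u, huker, rfl⟩, ?_⟩
      rfl
    refine Subgroup.mul_mem _ (Subgroup.mul_mem _ ?_ ?_) ?_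
    · exact Subgroup.mem_sup_left hwK
    · exact Subgroup.mem_sup_left hqK
    · exact Subgroup.mem_sup_right hkerK
  haveI : Finite ((X × Y) ⧸ J) := Finite.of_surjective _ hsurj
  haveI hJfi : J.FiniteIndex := Subgroup.finiteIndex_of_finite_quotient
  haveI hKGfi : KG.FiniteIndex := Subgroup.finiteIndex_of_le hJKG
  -- the retraction of `KG` onto `H`
  set ι : ↥KG →* ↥L := Subgroup.inclusion hKGL with hι
  have hξι : ∀ gk : ↥KG, ξ (ι gk) ∈ K := by
    intro gk
    obtain ⟨hg, hK⟩ := (hKGmem ↑gk).mp gk.2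
    have h1 : ι gk = ⟨↑gk, hg⟩ := Subtype.ext rfl
    rw [h1]
    exact hK
  set ρG : ↥KG →* X × Y := ρ.comp (MonoidHom.codRestrict (ξ.comp ι) K hξι) with hρG
  refine ⟨KG, hHKG, hKGfi, ρG, ?_, ?_⟩
  · intro k
    exact hρmem _
  · intro h hh
    have hhL : h ∈ L := (hLmem h).mpr (hQKY (hQle h hh))
    have hξh : ξ (ι ⟨h, hHKG hh⟩) = h := by
      have h1 : ι ⟨h, hHKG hh⟩ = ⟨h, hhL⟩ := Subtype.ext rfl
      rw [h1, hξapp]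
      have h2 : ρY (toKY ⟨h, hhL⟩) = h.2 := hρYid h.2 (hQle h hh)
      rw [h2]
    have h3 : (MonoidHom.codRestrict (ξ.comp ι) K hξι) ⟨h, hHKG hh⟩
        = (⟨h, Subgroup.mem_sup_left hh⟩ : ↥K) := by
      apply Subtype.ext
      show ξ (ι ⟨h, hHKG hh⟩) = h
      exact hξh
    show ρ ((MonoidHom.codRestrict (ξ.comp ι) K hξι) ⟨h, hHKG hh⟩) = h
    rw [h3]
    exact hρid h hh _
end
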